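/- arXiv:2307.12958 — 4 statements merged into one kernel-verified Lean document; each statement's English description precedes it below -/
import Mathlib

section
/- Let X be an infinite-dimensional real normed space and let K ⊆ X be a nonempty closed convex set that is (r_n)-flat for a decreasing null sequence (r_n)_{n≥1} of positive reals. For ε > 0 set n(ε) = min{n ∈ ℕ : r_n ≤ ε}. Then there exists a retraction R : X → K such that (a) ‖R x − x‖ ≤ 9·dist(x, K) for all x ∈ X, and (b) for every t > 0 and all x, y ∈ X with ‖x − y‖ ≤ t one has ‖R x − R y‖ ≤ 1520·20^{n(t/20)}·t. -/
open Metric Set Filter Topology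

set_option linter.unusedVariables false
set_option linter.unusedSectionVars false
set_option maxHeartbeats 1000000

noncomputable section AuxRetract

variable {X : Type*} [NormedAddCommGroup X] [NormedSpace ℝ X]

def clamp01 (u : ℝ) : ℝ := min 1 (max 0 u)

lemma clamp01_nonneg (u : ℝ) : 0 ≤ clamp01 u := le_min zero_le_one (le_max_left _ _)

lemma clamp01_le_one (u : ℝ) : clamp01 u ≤ 1 := min_le_left _ _

lemma clamp01_of_one_le {u : ℝ} (h : 1 ≤ u) : clamp01 u = 1 := by
  have : max 0 u = u := max_eq_right (le_trans zero_le_one h)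
  rw [clamp01, this, min_eq_left h]

lemma clamp01_of_nonpos {u : ℝ} (h : u ≤ 0) : clamp01 u = 0 := by
  rw [clamp01, max_eq_left h, min_eq_right zero_le_one]

lemma clamp01_of_mem {u : ℝ} (h0 : 0 ≤ u) (h1 : u ≤ 1) : clamp01 u = u := by
  rw [clamp01, max_eq_right h0, min_eq_right h1]

lemma clamp01_mono : Monotone clamp01 := fun a b hab =>
  min_le_min le_rfl (max_le_max le_rfl hab)

lemma clamp01_lip (u v : ℝ) : |clamp01 u - clamp01 v| ≤ |u - v| := by
  have h1 : |max 0 u - max 0 v| ≤ |u - v| := by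
    simpa [max_comm] using abs_max_sub_max_le_abs u v 0
  have h2 := abs_min_sub_min_le_max 1 (max 0 u) 1 (max 0 v)
  refine h2.trans ?_
  simpa using h1

/-- the bump function at net point `p`, scale `σ`. -/
def bump (σ : ℝ) (p x : X) : ℝ := clamp01 (8 - 2 * dist x p / σ)

lemma bump_nonneg (σ : ℝ) (p x : X) : 0 ≤ bump σ p x := clamp01_nonneg _

lemma bump_le_one (σ : ℝ) (p x : X) : bump σ p x ≤ 1 := clamp01_le_one _

lemma bump_eq_one {σ : ℝ} (hσ : 0 < σ) {p x : X} (h : dist x p ≤ 7/2 * σ) :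
    bump σ p x = 1 := by
  apply clamp01_of_one_le
  have h2 : 2 * dist x p / σ ≤ 7 := by rw [div_le_iff₀ hσ]; nlinarith
  linarith

lemma bump_ne_zero {σ : ℝ} (hσ : 0 < σ) {p x : X} (h : bump σ p x ≠ 0) :
    dist x p < 4 * σ := by
  by_contra hc
  push_neg at hc
  apply h
  apply clamp01_of_nonpos
  rw [sub_nonpos, le_div_iff₀ hσ]
  nlinarith

lemma bump_lip {σ : ℝ} (hσ : 0 < σ) (p x y : X) :
    |bump σ p x - bump σ p y| ≤ 2 / σ * dist x y := by
  refine (clamp01_lip _ _).trans ?_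
  have h : |dist y p - dist x p| ≤ dist x y := by
    rw [← dist_comm y x]; exact abs_dist_sub_le y x p
  have he : 8 - 2 * dist x p / σ - (8 - 2 * dist y p / σ)
      = 2 / σ * (dist y p - dist x p) := by field_simp; ring
  rw [he, abs_mul, abs_of_nonneg (by positivity : (0:ℝ) ≤ 2/σ)]
  exact mul_le_mul_of_nonneg_left h (by positivity)

def Wsum (σ : ℝ) (P : Finset X) (x : X) : ℝ := ∑ p ∈ P, bump σ p x

lemma Wsum_nonneg (σ : ℝ) (P : Finset X) (x : X) : 0 ≤ Wsum σ P x :=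
  Finset.sum_nonneg fun p _ => bump_nonneg σ p x

def Vmap (k₀ : X) (σ : ℝ) (P : Finset X) (x : X) : X :=
  if 1 ≤ Wsum σ P x then ∑ p ∈ P, (bump σ p x / Wsum σ P x) • p else k₀

lemma Wsum_weights_sum {σ : ℝ} {P : Finset X} {x : X} (h : 1 ≤ Wsum σ P x) :
    ∑ p ∈ P, bump σ p x / Wsum σ P x = 1 := by
  rw [← Finset.sum_div, ← Wsum]
  exact div_self (by linarith)

lemma Vmap_mem {K : Set X} (hK : Convex ℝ K) {k₀ : X} (hk₀ : k₀ ∈ K)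
    {σ : ℝ} {P : Finset X} (hP : ∀ p ∈ P, p ∈ K) (x : X) :
    Vmap k₀ σ P x ∈ K := by
  rw [Vmap]
  split_ifs with h
  · exact hK.sum_mem (fun p _ => div_nonneg (bump_nonneg _ _ _) (by linarith [Wsum_nonneg σ P x]))
      (Wsum_weights_sum h) hP
  · exact hk₀

lemma Vmap_dist {σ : ℝ} (hσ : 0 < σ) (k₀ : X) {P : Finset X} {x : X}
    (h : 1 ≤ Wsum σ P x) : ‖Vmap k₀ σ P x - x‖ ≤ 4 * σ := by
  have hW : (0:ℝ) < Wsum σ P x := by linarith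
  have hs := Wsum_weights_sum (σ := σ) (P := P) (x := x) h
  have hx : Vmap k₀ σ P x - x = ∑ p ∈ P, (bump σ p x / Wsum σ P x) • (p - x) := by
    rw [Vmap, if_pos h]
    simp [smul_sub, Finset.sum_sub_distrib, ← Finset.sum_smul, hs]
  rw [hx]
  refine (norm_sum_le _ _).trans ?_
  have hb : ∀ p ∈ P, ‖(bump σ p x / Wsum σ P x) • (p - x)‖
      ≤ (bump σ p x / Wsum σ P x) * (4 * σ) := by
    intro p hp
    rw [norm_smul, Real.norm_eq_abs,
      abs_of_nonneg (div_nonneg (bump_nonneg _ _ _) hW.le)]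
    by_cases hz : bump σ p x = 0
    · simp [hz]
    · have hd : dist x p < 4 * σ := bump_ne_zero hσ hz
      have hn : ‖p - x‖ ≤ 4 * σ := by
        rw [← dist_eq_norm, dist_comm]; linarith
      exact mul_le_mul_of_nonneg_left hn (div_nonneg (bump_nonneg _ _ _) hW.le)
  refine (Finset.sum_le_sum hb).trans ?_
  rw [← Finset.sum_mul, hs, one_mul]


/-! ### tent functions -/

def tent (σ s : ℝ) : ℝ := clamp01 (2 - s / σ) - clamp01 (2 - 2 * s / σ)

lemma tent_nonneg {σ s : ℝ} (hσ : 0 < σ) (hs : 0 ≤ s) : 0 ≤ tent σ s := by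
  rw [tent, sub_nonneg]
  apply clamp01_mono
  have h : s / σ ≤ 2 * s / σ := by gcongr; linarith
  linarith

lemma tent_le_one {σ s : ℝ} : tent σ s ≤ 1 := by
  have := clamp01_nonneg (2 - 2 * s / σ)
  have := clamp01_le_one (2 - s / σ)
  rw [tent]; linarith

/-- tent vanishes for `s ≤ σ/2` -/
lemma tent_zero_left {σ s : ℝ} (hσ : 0 < σ) (hs : s ≤ σ / 2) : tent σ s = 0 := by
  have h1 : (1:ℝ) ≤ 2 - s / σ := by
    rw [le_sub_iff_add_le]
    have : s / σ ≤ 1/2 := by rw [div_le_div_iff₀ hσ (by norm_num)]; linarith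
    linarith
  have h2 : (1:ℝ) ≤ 2 - 2 * s / σ := by
    rw [le_sub_iff_add_le]
    have : 2 * s / σ ≤ 1 := by rw [div_le_iff₀ hσ]; linarith
    linarith
  rw [tent, clamp01_of_one_le h1, clamp01_of_one_le h2, sub_self]

/-- tent vanishes for `2σ ≤ s` -/
lemma tent_zero_right {σ s : ℝ} (hσ : 0 < σ) (hs : 2 * σ ≤ s) : tent σ s = 0 := by
  have h1 : 2 - s / σ ≤ 0 := by
    rw [sub_nonpos, le_div_iff₀ hσ]; linarith
  have h2 : 2 - 2 * s / σ ≤ 0 := by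
    rw [sub_nonpos, le_div_iff₀ hσ]; linarith
  rw [tent, clamp01_of_nonpos h1, clamp01_of_nonpos h2, sub_self]

/-- partition of unity property on `[σ, 2σ)` -/
lemma tent_sum {σ s : ℝ} (hσ : 0 < σ) (h1 : σ ≤ s) (h2 : s < 2 * σ) :
    tent σ s + tent (2 * σ) s = 1 := by
  have hσs : s / σ < 2 := by rw [div_lt_iff₀ hσ]; linarith
  have hσs1 : 1 ≤ s / σ := by rw [le_div_iff₀ hσ]; linarith
  have e1 : tent σ s = 2 - s / σ := by
    rw [tent, clamp01_of_mem (by linarith) (by linarith), clamp01_of_nonpos ?_, sub_zero]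
    have : 2 ≤ 2 * s / σ := by rw [le_div_iff₀ hσ]; linarith
    linarith
  have e2 : tent (2 * σ) s = s / σ - 1 := by
    have h2σ : (0:ℝ) < 2 * σ := by linarith
    have ea : 2 - 2 * s / (2 * σ) = 2 - s / σ := by
      field_simp
    have eb : (1:ℝ) ≤ 2 - s / (2 * σ) := by
      have : s / (2 * σ) ≤ 1 := by rw [div_le_one h2σ]; linarith
      linarith
    rw [tent, ea, clamp01_of_one_le eb, clamp01_of_mem (by linarith) (by linarith)]
    ring
  rw [e1, e2]; ring

lemma tent_lip {σ : ℝ} (hσ : 0 < σ) (s s' : ℝ) :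
    |tent σ s - tent σ s'| ≤ 3 / σ * |s - s'| := by
  have h1 := clamp01_lip (2 - s / σ) (2 - s' / σ)
  have h2 := clamp01_lip (2 - 2 * s / σ) (2 - 2 * s' / σ)
  have e1 : 2 - s / σ - (2 - s' / σ) = (s' - s) / σ := by field_simp; ring
  have e2 : 2 - 2 * s / σ - (2 - 2 * s' / σ) = 2 * (s' - s) / σ := by field_simp; ring
  rw [e1] at h1; rw [e2] at h2
  have a1 : |(s' - s) / σ| = |s - s'| / σ := by
    rw [abs_div, abs_of_pos hσ, abs_sub_comm]
  have a2 : |2 * (s' - s) / σ| = 2 * |s - s'| / σ := by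
    rw [abs_div, abs_of_pos hσ, abs_mul, abs_sub_comm]
    norm_num
  rw [a1] at h1; rw [a2] at h2
  have := abs_sub (tent σ s) (tent σ s')
  calc |tent σ s - tent σ s'|
      = |(clamp01 (2 - s/σ) - clamp01 (2 - s'/σ)) - (clamp01 (2 - 2*s/σ) - clamp01 (2 - 2*s'/σ))| := by
        rw [tent, tent]; ring_nf
    _ ≤ |clamp01 (2 - s/σ) - clamp01 (2 - s'/σ)| + |clamp01 (2 - 2*s/σ) - clamp01 (2 - 2*s'/σ)| :=
        abs_sub _ _
    _ ≤ |s - s'| / σ + 2 * |s - s'| / σ := add_le_add h1 h2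
    _ = 3 / σ * |s - s'| := by ring


/-! ### nets -/

lemma exists_net {C : Set X} (hC : IsCompact C) {σ : ℝ} (hσ : 0 < σ) :
    ∃ P : Finset X, ↑P ⊆ C ∧ (∀ z ∈ C, ∃ p ∈ P, dist z p ≤ σ) ∧
      (∀ p ∈ P, ∀ q ∈ P, p ≠ q → σ ≤ dist p q) := by
  obtain ⟨t, htf, hcov⟩ := (Metric.totallyBounded_iff).mp hC.totallyBounded (σ/2) (by positivity)
  classical
  set T : Finset X := htf.toFinset with hT
  -- the assignment of a covering center
  let g : X → X := fun p => if h : ∃ y ∈ t, p ∈ ball y (σ/2) then h.choose else p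
  have hg : ∀ p ∈ C, g p ∈ T ∧ dist p (g p) < σ/2 := by
    intro p hp
    have hex : ∃ y ∈ t, p ∈ ball y (σ/2) := by
      have := hcov hp
      simpa using this
    refine ⟨?_, ?_⟩
    · simp only [g, dif_pos hex]
      exact htf.mem_toFinset.mpr hex.choose_spec.1
    · simp only [g, dif_pos hex]
      have := hex.choose_spec.2
      simpa [dist_comm] using this
  have hbound : ∀ F : Finset X, ↑F ⊆ C →
      (∀ p ∈ F, ∀ q ∈ F, p ≠ q → σ ≤ dist p q) → F.card ≤ T.card := by
    intro F hFC hFsep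
    apply Finset.card_le_card_of_injOn g
    · intro p hp; exact (hg p (hFC hp)).1
    · intro p hp q hq hpq
      by_contra hne
      have h1 := (hg p (hFC hp)).2
      have h2 := (hg q (hFC hq)).2
      have := hFsep p hp q hq hne
      have : dist p q < σ := by
        have ht := dist_triangle p (g p) q
        have he : dist (g p) q = dist q (g q) := by rw [hpq, dist_comm]
        rw [he] at ht
        linarith
      linarith [hFsep p hp q hq hne]
  set A : Set ℕ := {n | ∃ F : Finset X, ↑F ⊆ C ∧
    (∀ p ∈ F, ∀ q ∈ F, p ≠ q → σ ≤ dist p q) ∧ F.card = n} with hA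
  have hA0 : 0 ∈ A := ⟨∅, by simp⟩
  have hAbdd : BddAbove A := by
    refine ⟨T.card, ?_⟩
    rintro n ⟨F, hF1, hF2, rfl⟩
    exact hbound F hF1 hF2
  obtain ⟨F, hFC, hFsep, hFcard⟩ := Nat.sSup_mem ⟨0, hA0⟩ hAbdd
  refine ⟨F, hFC, ?_, hFsep⟩
  intro z hz
  by_contra hcon
  push_neg at hcon
  have hzF : z ∉ F := by
    intro hzF
    have := hcon z hzF
    rw [dist_self] at this
    linarith
  have hF' : (sSup A) + 1 ∈ A := by
    refine ⟨insert z F, ?_, ?_, ?_⟩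
    · intro w hw
      rcases Finset.mem_insert.mp (by exact_mod_cast hw) with rfl | hw'
      · exact hz
      · exact hFC hw'
    · intro p hp q hq hpq
      rcases Finset.mem_insert.mp hp with rfl | hp' <;>
        rcases Finset.mem_insert.mp hq with rfl | hq'
      · exact absurd rfl hpq
      · exact le_of_lt (hcon q hq')
      · rw [dist_comm]; exact le_of_lt (hcon p hp')
      · exact hFsep p hp' q hq' hpq
    · rw [Finset.card_insert_of_notMem hzF, hFcard]
  have := le_csSup hAbdd hF'
  omega

/-! ### packing bound -/

lemma packing_card {E : Submodule ℝ X} [FiniteDimensional ℝ E]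
    (hpos : 0 < Module.finrank ℝ E)
    {σ : ℝ} (hσ : 0 < σ) (F : Finset X) (hFE : ∀ p ∈ F, p ∈ E)
    (hsep : ∀ p ∈ F, ∀ q ∈ F, p ≠ q → σ ≤ dist p q)
    (hdiam : ∀ p ∈ F, ∀ q ∈ F, dist p q ≤ 8.2 * σ) :
    (F.card : ℝ) ≤ 18 ^ (Module.finrank ℝ E) := by
  classical
  rcases F.eq_empty_or_nonempty with rfl | ⟨p₀, hp₀⟩
  · simp only [Finset.card_empty, Nat.cast_zero]
    positivity
  set m := Module.finrank ℝ E with hm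
  haveI : Nontrivial E := Module.nontrivial_of_finrank_pos hpos
  letI : MeasurableSpace E := borel E
  haveI : BorelSpace E := ⟨rfl⟩
  set b := Module.finBasis ℝ E with hb
  set μ : MeasureTheory.Measure E := b.addHaar with hμ
  set F' : Finset E := F.attach.image (fun p => (⟨p.1, hFE p.1 p.2⟩ : E)) with hF'
  have hcard : F'.card = F.card := by
    rw [hF', Finset.card_image_of_injOn, Finset.card_attach]
    intro a _ c _ hac
    exact Subtype.ext (by simpa using congrArg Subtype.val hac)
  have hmemF' : ∀ q : E, q ∈ F' → (q : X) ∈ F := by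
    intro q hq
    rw [hF'] at hq
    obtain ⟨p, _, rfl⟩ := Finset.mem_image.mp hq
    exact p.2
  have hdisj : (↑F' : Set E).PairwiseDisjoint (fun q : E => ball q (σ/2)) := by
    intro q1 hq1 q2 hq2 hne
    apply ball_disjoint_ball
    have hv : (q1 : X) ≠ (q2 : X) := fun h => hne (Subtype.ext h)
    have := hsep q1 (hmemF' q1 hq1) q2 (hmemF' q2 hq2) hv
    have hde : dist q1 q2 = dist (q1 : X) (q2 : X) := rfl
    rw [hde]
    linarith
  set q₀ : E := ⟨p₀, hFE p₀ hp₀⟩ with hq₀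
  have hsub : (⋃ q ∈ F', ball q (σ/2)) ⊆ ball q₀ (8.8 * σ) := by
    intro z hz
    simp only [Set.mem_iUnion] at hz
    obtain ⟨q, hq, hzq⟩ := hz
    rw [mem_ball] at hzq ⊢
    have hqq : dist (q : X) (p₀ : X) ≤ 8.2 * σ := hdiam q (hmemF' q hq) p₀ hp₀
    have hde : dist q q₀ = dist (q : X) (p₀ : X) := rfl
    have ht := dist_triangle z q q₀
    rw [hde] at ht
    linarith
  have hμsum : ∑ q ∈ F', μ (ball q (σ/2)) = μ (⋃ q ∈ F', ball q (σ/2)) :=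
    (MeasureTheory.measure_biUnion_finset hdisj (fun q _ => measurableSet_ball)).symm
  have hball : ∀ q : E, μ (ball q (σ/2)) =
      ENNReal.ofReal ((σ/2) ^ m) * μ (ball 0 1) := by
    intro q
    rw [MeasureTheory.Measure.addHaar_ball μ q (by positivity : (0:ℝ) ≤ σ/2)]
  have hbig : μ (ball q₀ (8.8 * σ)) = ENNReal.ofReal ((8.8*σ) ^ m) * μ (ball 0 1) := by
    rw [MeasureTheory.Measure.addHaar_ball μ q₀ (by positivity : (0:ℝ) ≤ 8.8*σ)]
  have hchain : (F.card : ENNReal) * (ENNReal.ofReal ((σ/2) ^ m) * μ (ball 0 1))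
      ≤ ENNReal.ofReal ((8.8*σ) ^ m) * μ (ball 0 1) := by
    calc (F.card : ENNReal) * (ENNReal.ofReal ((σ/2) ^ m) * μ (ball 0 1))
        = ∑ q ∈ F', μ (ball q (σ/2)) := by
          rw [Finset.sum_congr rfl (fun q _ => hball q), Finset.sum_const, hcard]
          simp [nsmul_eq_mul]
      _ = μ (⋃ q ∈ F', ball q (σ/2)) := hμsum
      _ ≤ μ (ball q₀ (8.8 * σ)) := MeasureTheory.measure_mono hsub
      _ = _ := hbig
  have hv0 : μ (ball (0:E) 1) ≠ 0 := (Metric.measure_ball_pos μ 0 one_pos).ne'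
  have hvt : μ (ball (0:E) 1) ≠ ⊤ := (MeasureTheory.measure_ball_lt_top).ne
  rw [← mul_assoc] at hchain
  have hchain2 := (ENNReal.mul_le_mul_iff_left hv0 hvt).mp hchain
  have hchain3 : (F.card : ℝ) * ((σ/2) ^ m) ≤ (8.8*σ) ^ m := by
    rw [← ENNReal.ofReal_natCast F.card, ← ENNReal.ofReal_mul (by positivity)] at hchain2
    exact (ENNReal.ofReal_le_ofReal_iff (by positivity)).mp hchain2
  have hfin : (F.card : ℝ) ≤ 17.6 ^ m := by
    have hpow : (8.8*σ) ^ m = 17.6 ^ m * (σ/2) ^ m := by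
      rw [← mul_pow]; ring_nf
    have h2 : (0:ℝ) < (σ/2) ^ m := by positivity
    refine le_of_mul_le_mul_right ?_ h2
    rw [← hpow]; exact hchain3
  refine hfin.trans ?_
  exact pow_le_pow_left₀ (by norm_num) (by norm_num) m


/-! ### pair estimate for Vmap -/

lemma Vmap_pair {E : Submodule ℝ X} [FiniteDimensional ℝ E]
    (hpos : 0 < Module.finrank ℝ E)
    {σ : ℝ} (hσ : 0 < σ) (k₀ : X) {P : Finset X}
    (hPE : ∀ p ∈ P, p ∈ E)
    (hsep : ∀ p ∈ P, ∀ q ∈ P, p ≠ q → σ ≤ dist p q)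
    {x y : X} (hWx : 1 ≤ Wsum σ P x) (hWy : 1 ≤ Wsum σ P y)
    (hxy : dist x y ≤ σ / 10) :
    ‖Vmap k₀ σ P x - Vmap k₀ σ P y‖ ≤ 36 * 18 ^ (Module.finrank ℝ E) * dist x y := by
  classical
  set m := Module.finrank ℝ E with hm
  have hWx0 : (0:ℝ) < Wsum σ P x := by linarith
  have hWy0 : (0:ℝ) < Wsum σ P y := by linarith
  set A : Finset X := P.filter (fun p => dist x p < 4 * σ + σ/10) with hA
  have hAsub : A ⊆ P := Finset.filter_subset _ _
  have hmemA : ∀ p ∈ P, (bump σ p x ≠ 0 ∨ bump σ p y ≠ 0) → p ∈ A := by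
    intro p hp hb
    rw [hA, Finset.mem_filter]
    refine ⟨hp, ?_⟩
    rcases hb with hb | hb
    · have := bump_ne_zero hσ hb
      linarith
    · have h1 := bump_ne_zero hσ hb
      have h2 := dist_triangle x y p
      linarith
  have hnotA : ∀ p ∈ P, p ∉ A → bump σ p x = 0 ∧ bump σ p y = 0 := by
    intro p hp hpA
    constructor <;> by_contra hb
    · exact hpA (hmemA p hp (Or.inl hb))
    · exact hpA (hmemA p hp (Or.inr hb))
  have hcardA : (A.card : ℝ) ≤ 18 ^ m := by
    apply packing_card hpos hσ A (fun p hp => hPE p (hAsub hp))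
      (fun p hp q hq => hsep p (hAsub hp) q (hAsub hq))
    intro p hp q hq
    have h1 : dist x p < 4 * σ + σ/10 := (Finset.mem_filter.mp hp).2
    have h2 : dist x q < 4 * σ + σ/10 := (Finset.mem_filter.mp hq).2
    have h3 := dist_triangle p x q
    rw [dist_comm p x] at h3
    linarith
  set D : ℝ := ∑ p ∈ P, |bump σ p x - bump σ p y| with hD
  have hDbound : D ≤ 18 ^ m * (2 / σ) * dist x y := by
    have hsum : D = ∑ p ∈ A, |bump σ p x - bump σ p y| := by
      rw [hD]
      refine (Finset.sum_subset hAsub ?_).symm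
      intro p hp hpA
      obtain ⟨e1, e2⟩ := hnotA p hp hpA
      rw [e1, e2, sub_self, abs_zero]
    rw [hsum]
    calc ∑ p ∈ A, |bump σ p x - bump σ p y| ≤ ∑ p ∈ A, (2 / σ * dist x y) :=
          Finset.sum_le_sum fun p _ => bump_lip hσ p x y
      _ = (A.card : ℝ) * (2 / σ * dist x y) := by rw [Finset.sum_const, nsmul_eq_mul]
      _ ≤ 18 ^ m * (2 / σ * dist x y) := by
          apply mul_le_mul_of_nonneg_right hcardA (by positivity)
      _ = 18 ^ m * (2 / σ) * dist x y := by ring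
  have hWdiff : |Wsum σ P x - Wsum σ P y| ≤ D := by
    rw [Wsum, Wsum, ← Finset.sum_sub_distrib]
    exact Finset.abs_sum_le_sum_abs _ _
  set Vx := Vmap k₀ σ P x with hVx
  set Vy := Vmap k₀ σ P y with hVy
  have hVyd : ‖Vy - y‖ ≤ 4 * σ := Vmap_dist hσ k₀ hWy
  have e1 : ∑ p ∈ P, (bump σ p x / Wsum σ P x) • (p - Vy) = Vx - Vy := by
    rw [hVx, Vmap, if_pos hWx]
    simp [smul_sub, Finset.sum_sub_distrib, ← Finset.sum_smul, Wsum_weights_sum hWx]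
  have e2 : ∑ p ∈ P, (bump σ p y / Wsum σ P y) • (p - Vy) = 0 := by
    have : ∑ p ∈ P, (bump σ p y / Wsum σ P y) • p = Vy := by
      rw [hVy, Vmap, if_pos hWy]
    simp [smul_sub, Finset.sum_sub_distrib, ← Finset.sum_smul, Wsum_weights_sum hWy, this]
  have key : Vx - Vy = ∑ p ∈ P,
      (bump σ p x / Wsum σ P x - bump σ p y / Wsum σ P y) • (p - Vy) := by
    rw [← sub_zero (Vx - Vy), ← e2, ← e1, ← Finset.sum_sub_distrib]
    congr 1
    funext p
    rw [sub_smul]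
  have hterm : ∀ p ∈ P,
      ‖(bump σ p x / Wsum σ P x - bump σ p y / Wsum σ P y) • (p - Vy)‖
        ≤ |bump σ p x / Wsum σ P x - bump σ p y / Wsum σ P y| * (9 * σ) := by
    intro p hp
    rw [norm_smul, Real.norm_eq_abs]
    by_cases hpA : p ∈ A
    · apply mul_le_mul_of_nonneg_left ?_ (abs_nonneg _)
      have h1 : dist x p < 4 * σ + σ/10 := (Finset.mem_filter.mp hpA).2
      have h2 : dist p y ≤ dist p x + dist x y := dist_triangle p x y
      rw [dist_comm p x] at h2
      have h3 : ‖p - Vy‖ ≤ dist p y + ‖y - Vy‖ := by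
        have hsplit : p - Vy = (p - y) + (y - Vy) := by abel
        rw [hsplit]
        refine (norm_add_le _ _).trans ?_
        rw [dist_eq_norm]
      have h4 : ‖y - Vy‖ = ‖Vy - y‖ := norm_sub_rev y Vy
      rw [h4] at h3
      linarith
    · obtain ⟨z1, z2⟩ := hnotA p hp hpA
      rw [z1, z2, zero_div, zero_div, sub_self, abs_zero, zero_mul, zero_mul]
  have habs : ∑ p ∈ P, |bump σ p x / Wsum σ P x - bump σ p y / Wsum σ P y| ≤ 2 * D := by
    have hper : ∀ p ∈ P, |bump σ p x / Wsum σ P x - bump σ p y / Wsum σ P y|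
        ≤ |bump σ p x - bump σ p y| + (bump σ p y / Wsum σ P y) * |Wsum σ P x - Wsum σ P y| := by
      intro p hp
      have hWxne : Wsum σ P x ≠ 0 := ne_of_gt hWx0
      have hWyne : Wsum σ P y ≠ 0 := ne_of_gt hWy0
      have e : bump σ p x / Wsum σ P x - bump σ p y / Wsum σ P y
          = (bump σ p x - bump σ p y) / Wsum σ P x
            + (bump σ p y / Wsum σ P y) * ((Wsum σ P y - Wsum σ P x) / Wsum σ P x) := by
        field_simp
        ring
      rw [e]
      refine (abs_add_le _ _).trans ?_
      have t1 : |(bump σ p x - bump σ p y) / Wsum σ P x| ≤ |bump σ p x - bump σ p y| := by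
        rw [abs_div, abs_of_pos hWx0]
        exact div_le_self (abs_nonneg _) hWx
      have t2 : |(bump σ p y / Wsum σ P y) * ((Wsum σ P y - Wsum σ P x) / Wsum σ P x)|
          ≤ (bump σ p y / Wsum σ P y) * |Wsum σ P x - Wsum σ P y| := by
        rw [abs_mul, abs_div, abs_div, abs_of_pos hWx0, abs_of_pos hWy0,
          abs_of_nonneg (bump_nonneg σ p y), abs_sub_comm]
        apply mul_le_mul_of_nonneg_left ?_ (div_nonneg (bump_nonneg _ _ _) hWy0.le)
        exact div_le_self (abs_nonneg _) hWx
      exact add_le_add t1 t2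
    calc ∑ p ∈ P, |bump σ p x / Wsum σ P x - bump σ p y / Wsum σ P y|
        ≤ ∑ p ∈ P, (|bump σ p x - bump σ p y|
            + (bump σ p y / Wsum σ P y) * |Wsum σ P x - Wsum σ P y|) :=
          Finset.sum_le_sum hper
      _ = D + (∑ p ∈ P, bump σ p y / Wsum σ P y) * |Wsum σ P x - Wsum σ P y| := by
          rw [Finset.sum_add_distrib, ← Finset.sum_mul]
      _ = D + |Wsum σ P x - Wsum σ P y| := by rw [Wsum_weights_sum hWy, one_mul]
      _ ≤ 2 * D := by linarith
  calc ‖Vx - Vy‖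
      = ‖∑ p ∈ P, (bump σ p x / Wsum σ P x - bump σ p y / Wsum σ P y) • (p - Vy)‖ := by
        rw [key]
    _ ≤ ∑ p ∈ P, ‖(bump σ p x / Wsum σ P x - bump σ p y / Wsum σ P y) • (p - Vy)‖ :=
        norm_sum_le _ _
    _ ≤ ∑ p ∈ P, |bump σ p x / Wsum σ P x - bump σ p y / Wsum σ P y| * (9 * σ) :=
        Finset.sum_le_sum hterm
    _ = (∑ p ∈ P, |bump σ p x / Wsum σ P x - bump σ p y / Wsum σ P y|) * (9 * σ) := by
        rw [← Finset.sum_mul]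
    _ ≤ (2 * D) * (9 * σ) := by
        apply mul_le_mul_of_nonneg_right habs (by positivity)
    _ ≤ (2 * (18 ^ m * (2 / σ) * dist x y)) * (9 * σ) := by
        have hDnn : 0 ≤ D := Finset.sum_nonneg fun p _ => abs_nonneg _
        apply mul_le_mul_of_nonneg_right ?_ (by positivity)
        linarith
    _ = 36 * 18 ^ m * dist x y := by field_simp; ring

end AuxRetract


/-- Let `X` be an infinite-dimensional real normed space and `K ⊆ X`
a nonempty closed convex set that is `(rₙ)`-flat for a decreasing null sequence `(rₙ)` of
positive reals.  With `n(ε) = min {n : rₙ ≤ ε}`, there exists a retraction `R : X → K` with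
`‖R x − x‖ ≤ 9 · dist(x, K)` for all `x`, and `‖R x − R y‖ ≤ 1520 · 20^(n(t/20)) · t`
whenever `t > 0` and `‖x − y‖ ≤ t`. -/
theorem statement1 {X : Type*} [NormedAddCommGroup X] [NormedSpace ℝ X]
    (hinf : ¬ FiniteDimensional ℝ X)
    (r : ℕ → ℝ) (hrpos : ∀ n : ℕ, 1 ≤ n → 0 < r n)
    (hrdec : ∀ m n : ℕ, 1 ≤ m → m ≤ n → r n ≤ r m)
    (hrnull : Filter.Tendsto r Filter.atTop (nhds 0))
    (K : Set X) (hKne : K.Nonempty) (hKcl : IsClosed K) (hKcv : Convex ℝ K)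
    (hflat : ∃ E : ℕ → Submodule ℝ X, ∀ n : ℕ, 1 ≤ n →
      Module.finrank ℝ (E n) = n ∧
      (K ∩ (E n : Set X)).Nonempty ∧ IsCompact (K ∩ (E n : Set X)) ∧
      ∀ x ∈ K, Metric.infDist x (K ∩ (E n : Set X)) ≤ r n) :
    ∃ R : X → X, (∀ x : X, R x ∈ K) ∧ (∀ x ∈ K, R x = x) ∧
      (∀ x : X, ‖R x - x‖ ≤ 9 * Metric.infDist x K) ∧
      ∀ t : ℝ, 0 < t → ∀ x y : X, ‖x - y‖ ≤ t →
        ‖R x - R y‖ ≤ 1520 * (20 : ℝ) ^ (sInf {n : ℕ | 1 ≤ n ∧ r n ≤ t / 20}) * t := by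
  classical
  obtain ⟨E, hE⟩ := hflat
  obtain ⟨k₀, hk₀⟩ := id hKne
  set d : X → ℝ := fun x => Metric.infDist x K with hd
  have hd_nonneg : ∀ x : X, 0 ≤ d x := fun x => Metric.infDist_nonneg
  have hd_lip : ∀ x y : X, d y ≤ d x + ‖x - y‖ := by
    intro x y
    have h := Metric.infDist_le_infDist_add_dist (x := y) (y := x) (s := K)
    rw [dist_comm, dist_eq_norm] at h
    exact h
  have hd_zero : ∀ x ∈ K, d x = 0 := fun x hx => Metric.infDist_zero_of_mem hx
  have hd_pos : ∀ x : X, x ∉ K → 0 < d x := by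
    intro x hx
    exact (hKcl.notMem_iff_infDist_pos hKne).mp hx
  -- scales
  set σ : ℤ → ℝ := fun j => (2:ℝ) ^ (-j) with hσdef
  have hσpos : ∀ j : ℤ, 0 < σ j := fun j => zpow_pos (by norm_num) _
  have hσprev : ∀ j : ℤ, σ (j - 1) = 2 * σ j := by
    intro j
    show (2:ℝ) ^ (-(j-1)) = 2 * (2:ℝ) ^ (-j)
    have he : -(j - 1) = (-j) + 1 := by ring
    rw [he, zpow_add₀ (by norm_num : (2:ℝ) ≠ 0), zpow_one]
    ring
  -- the index function
  have hexists : ∀ ε : ℝ, 0 < ε → ∃ n : ℕ, n ∈ {n : ℕ | 1 ≤ n ∧ r n ≤ ε} := by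
    intro ε hε
    obtain ⟨N, hN⟩ := (Metric.tendsto_atTop.mp hrnull) ε hε
    refine ⟨max N 1, le_max_right _ _, ?_⟩
    have h := hN (max N 1) (le_max_left _ _)
    rw [Real.dist_eq, sub_zero] at h
    exact ((le_abs_self _).trans_lt h).le
  set mI : ℤ → ℕ := fun j => sInf {n : ℕ | 1 ≤ n ∧ r n ≤ σ j / 5} with hmIdef
  have hmImem : ∀ j : ℤ, 1 ≤ mI j ∧ r (mI j) ≤ σ j / 5 := by
    intro j
    exact Nat.sInf_mem (hexists (σ j / 5) (by have := hσpos j; linarith))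
  have hEj : ∀ j : ℤ, Module.finrank ℝ (E (mI j)) = mI j ∧
      (K ∩ (E (mI j) : Set X)).Nonempty ∧ IsCompact (K ∩ (E (mI j) : Set X)) ∧
      ∀ x ∈ K, Metric.infDist x (K ∩ (E (mI j) : Set X)) ≤ r (mI j) :=
    fun j => hE (mI j) (hmImem j).1
  -- nets
  have hnets : ∀ j : ℤ, ∃ P : Finset X, ↑P ⊆ K ∩ (E (mI j) : Set X) ∧
      (∀ z ∈ K ∩ (E (mI j) : Set X), ∃ p ∈ P, dist z p ≤ σ j) ∧
      (∀ p ∈ P, ∀ q ∈ P, p ≠ q → σ j ≤ dist p q) :=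
    fun j => exists_net (hEj j).2.2.1 (hσpos j)
  choose P hPsub hPden hPsep using hnets
  -- the V maps
  set V : ℤ → X → X := fun j x => Vmap k₀ (σ j) (P j) x with hVdef
  have hVmem : ∀ j x, V j x ∈ K := by
    intro j x
    exact Vmap_mem hKcv hk₀ (fun p hp => ((hPsub j) hp).1) x
  -- coverage
  have hcov : ∀ j : ℤ, ∀ z : X, d z ≤ 2.1 * σ j → 1 ≤ Wsum (σ j) (P j) z := by
    intro j z hz
    have hσj := hσpos j
    have h1 : Metric.infDist z K < 2.2 * σ j := by
      rw [← hd] at *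
      calc d z ≤ 2.1 * σ j := hz
        _ < 2.2 * σ j := by linarith
    obtain ⟨w, hwK, hw⟩ := (Metric.infDist_lt_iff hKne).mp h1
    have h2 : Metric.infDist w (K ∩ (E (mI j) : Set X)) < σ j / 4 := by
      have := (hEj j).2.2.2 w hwK
      have h5 := (hmImem j).2
      linarith
    obtain ⟨c, hcC, hc⟩ := (Metric.infDist_lt_iff (hEj j).2.1).mp h2
    obtain ⟨p, hpP, hp⟩ := hPden j c hcC
    have hdzp : dist z p ≤ 7/2 * σ j := by
      calc dist z p ≤ dist z w + dist w c + dist c p := dist_triangle4 z w c p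
        _ ≤ 2.2 * σ j + σ j / 4 + σ j := by linarith
        _ ≤ 7/2 * σ j := by linarith
    have h1b : bump (σ j) p z = 1 := bump_eq_one hσj hdzp
    have h6 : bump (σ j) p z ≤ Wsum (σ j) (P j) z :=
      Finset.single_le_sum (fun q _ => bump_nonneg (σ j) q z) hpP
    linarith
  have hVdist : ∀ j : ℤ, ∀ z : X, d z ≤ 2.1 * σ j → ‖V j z - z‖ ≤ 4 * σ j :=
    fun j z hz => Vmap_dist (hσpos j) k₀ (hcov j z hz)
  -- pair estimate
  have hVpair : ∀ j : ℤ, ∀ x y : X, 1 ≤ Wsum (σ j) (P j) x → 1 ≤ Wsum (σ j) (P j) y →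
      dist x y ≤ σ j / 10 → ‖V j x - V j y‖ ≤ 36 * 18 ^ (mI j) * dist x y := by
    intro j x y h1 h2 h3
    have hfr : 0 < Module.finrank ℝ (E (mI j)) := by
      rw [(hEj j).1]; exact (hmImem j).1
    haveI : FiniteDimensional ℝ (E (mI j)) := Module.finite_of_finrank_pos hfr
    have h := Vmap_pair (E := E (mI j)) hfr (hσpos j) k₀
      (fun p hp => ((hPsub j) hp).2) (hPsep j) h1 h2 h3
    rwa [(hEj j).1] at h
  -- scale selection
  set J : ℝ → ℤ := fun s => -(Int.log 2 s) with hJdef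
  have hJ1 : ∀ s : ℝ, 0 < s → σ (J s) ≤ s := by
    intro s hs
    show (2:ℝ) ^ (-(-(Int.log 2 s))) ≤ s
    rw [neg_neg]
    exact_mod_cast Int.zpow_log_le_self (by norm_num) hs
  have hJ2 : ∀ s : ℝ, 0 < s → s < 2 * σ (J s) := by
    intro s hs
    have h := Int.lt_zpow_succ_log_self (b := 2) (by norm_num) s
    have e : (2:ℝ) * σ (J s) = ((2:ℕ) : ℝ) ^ (Int.log 2 s + 1) := by
      show (2:ℝ) * (2:ℝ) ^ (-(-(Int.log 2 s))) = ((2:ℕ):ℝ) ^ (Int.log 2 s + 1)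
      rw [neg_neg, zpow_add₀ (by norm_num : ((2:ℕ):ℝ) ≠ 0), zpow_one]
      push_cast
      ring
    rw [e]
    exact h
  have hJuniq : ∀ s : ℝ, 0 < s → ∀ j : ℤ, σ j ≤ s → s < 2 * σ j → J s = j := by
    intro s hs j h1 h2
    have a1 := hJ1 s hs
    have a2 := hJ2 s hs
    have k1 : σ (J s) < 2 * σ j := by linarith
    have k2 : σ j < 2 * σ (J s) := by linarith
    rw [← hσprev] at k1 k2
    have l1 : (2:ℝ) ^ (-(J s)) < (2:ℝ) ^ (-(j - 1)) := k1
    have l2 : (2:ℝ) ^ (-j) < (2:ℝ) ^ (-(J s - 1)) := k2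
    have m1 : -(J s) < -(j - 1) := by
      exact_mod_cast (zpow_lt_zpow_iff_right₀ (by norm_num : (1:ℝ) < 2)).mp l1
    have m2 : -j < -(J s - 1) := by
      exact_mod_cast (zpow_lt_zpow_iff_right₀ (by norm_num : (1:ℝ) < 2)).mp l2
    omega
  -- the retraction
  set R : X → X := fun x => if x ∈ K then x else
    tent (σ (J (d x))) (d x) • V (J (d x)) x
      + tent (σ (J (d x) - 1)) (d x) • V (J (d x) - 1) x with hRdef
  have hRK : ∀ x ∈ K, R x = x := by
    intro x hx
    rw [hRdef]
    simp only [if_pos hx]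
  have hRout : ∀ x, x ∉ K → R x =
      tent (σ (J (d x))) (d x) • V (J (d x)) x
        + tent (σ (J (d x) - 1)) (d x) • V (J (d x) - 1) x := by
    intro x hx
    rw [hRdef]
    simp only [if_neg hx]
  have hRmem : ∀ x : X, R x ∈ K := by
    intro x
    by_cases hx : x ∈ K
    · rw [hRK x hx]; exact hx
    · rw [hRout x hx]
      have hs := hd_pos x hx
      have h1 := hJ1 (d x) hs
      have h2 := hJ2 (d x) hs
      have hsum : tent (σ (J (d x))) (d x) + tent (σ (J (d x) - 1)) (d x) = 1 := by
        rw [hσprev (J (d x))]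
        exact tent_sum (hσpos _) h1 h2
      exact hKcv (hVmem _ x) (hVmem _ x)
        (tent_nonneg (hσpos _) (hd_nonneg x)) (tent_nonneg (hσpos _) (hd_nonneg x)) hsum
  have hRdisp : ∀ x : X, ‖R x - x‖ ≤ 8 * d x := by
    intro x
    by_cases hx : x ∈ K
    · rw [hRK x hx]
      simp only [sub_self, norm_zero]
      have := hd_nonneg x
      linarith
    · rw [hRout x hx]
      have hs := hd_pos x hx
      set J₀ := J (d x) with hJ₀
      have h1 := hJ1 (d x) hs
      have h2 := hJ2 (d x) hs
      have hσ0 := hσpos J₀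
      have hσ1 := hσpos (J₀ - 1)
      set a₀ := tent (σ J₀) (d x) with ha₀
      set a₁ := tent (σ (J₀ - 1)) (d x) with ha₁
      have ha₀n : 0 ≤ a₀ := tent_nonneg hσ0 (hd_nonneg x)
      have ha₁n : 0 ≤ a₁ := tent_nonneg hσ1 (hd_nonneg x)
      have hsum : a₀ + a₁ = 1 := by
        rw [ha₀, ha₁, hσprev J₀]
        exact tent_sum hσ0 h1 h2
      have hcov0 : d x ≤ 2.1 * σ J₀ := by linarith
      have hcov1 : d x ≤ 2.1 * σ (J₀ - 1) := by
        rw [hσprev J₀]; linarith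
      have hv0 := hVdist J₀ x hcov0
      have hv1 := hVdist (J₀ - 1) x hcov1
      have hidd : a₀ • V J₀ x + a₁ • V (J₀ - 1) x - x
          = a₀ • (V J₀ x - x) + a₁ • (V (J₀ - 1) x - x) + ((a₀ + a₁) - 1) • x := by
        module
      rw [hsum, sub_self, zero_smul, add_zero] at hidd
      rw [hidd]
      have hn1 : ‖a₀ • (V J₀ x - x)‖ = a₀ * ‖V J₀ x - x‖ := by
        rw [norm_smul, Real.norm_eq_abs, abs_of_nonneg ha₀n]
      have hn2 : ‖a₁ • (V (J₀ - 1) x - x)‖ = a₁ * ‖V (J₀ - 1) x - x‖ := by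
        rw [norm_smul, Real.norm_eq_abs, abs_of_nonneg ha₁n]
      have hpr := hσprev J₀
      calc ‖a₀ • (V J₀ x - x) + a₁ • (V (J₀ - 1) x - x)‖
          ≤ ‖a₀ • (V J₀ x - x)‖ + ‖a₁ • (V (J₀ - 1) x - x)‖ := norm_add_le _ _
        _ = a₀ * ‖V J₀ x - x‖ + a₁ * ‖V (J₀ - 1) x - x‖ := by rw [hn1, hn2]
        _ ≤ a₀ * (4 * σ J₀) + a₁ * (4 * σ (J₀ - 1)) := by
            refine add_le_add ?_ ?_
            · exact mul_le_mul_of_nonneg_left hv0 ha₀n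
            · exact mul_le_mul_of_nonneg_left hv1 ha₁n
        _ ≤ 8 * d x := by
            rw [hpr]
            nlinarith [hσ0, h1, ha₀n, ha₁n, hsum]
  refine ⟨R, hRmem, hRK, ?_, ?_⟩
  · intro x
    have h1 := hRdisp x
    have h2 := hd_nonneg x
    linarith
  · intro t ht x y hxy
    set M := sInf {n : ℕ | 1 ≤ n ∧ r n ≤ t / 20} with hMdef
    have hMmem : 1 ≤ M ∧ r M ≤ t / 20 := Nat.sInf_mem (hexists (t/20) (by linarith))
    have h20 : (1:ℝ) ≤ 20 ^ M := one_le_pow₀ (by norm_num)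
    have h18 : (18:ℝ) ^ M ≤ 20 ^ M := pow_le_pow_left₀ (by norm_num) (by norm_num) M
    have key : ∀ u v : X, d u ≤ d v → ‖u - v‖ ≤ t → ‖R u - R v‖ ≤ 1520 * 20 ^ M * t := by
      intro u v huv hℓt
      have hℓ0 : (0:ℝ) ≤ ‖u - v‖ := norm_nonneg _
      have hdvu : d v ≤ d u + ‖u - v‖ := hd_lip u v
      have htri : ‖R u - R v‖ ≤ 8 * d u + ‖u - v‖ + 8 * d v := by
        have e : R u - R v = (R u - u) + (u - v) + (v - R v) := by abel
        rw [e]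
        have n1 := hRdisp u
        have n2 : ‖v - R v‖ ≤ 8 * d v := by rw [norm_sub_rev]; exact hRdisp v
        have n3 := norm_add_le ((R u - u) + (u - v)) (v - R v)
        have n4 := norm_add_le (R u - u) (u - v)
        linarith
      have hbig : ∀ c : ℝ, 0 ≤ c → c ≤ 1520 → ‖R u - R v‖ ≤ c * t → ‖R u - R v‖ ≤ 1520 * 20 ^ M * t := by
        intro c hc0 hc1 hc2
        refine hc2.trans ?_
        nlinarith [mul_nonneg (sub_nonneg.mpr h20) ht.le]
      by_cases hc1 : d u ≤ t
      · refine hbig 25 (by norm_num) (by norm_num) ?_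
        have hd2 : d v ≤ 2 * t := by linarith
        linarith
      · push_neg at hc1
        by_cases hc2 : d u ≤ 20 * ‖u - v‖
        · refine hbig 329 (by norm_num) (by norm_num) ?_
          have : ‖R u - R v‖ ≤ 16 * d u + 9 * ‖u - v‖ := by linarith
          have h16 : 16 * d u ≤ 320 * ‖u - v‖ := by linarith
          have h9 : (9:ℝ) * ‖u - v‖ ≤ 9 * t := by linarith
          linarith
        · push_neg at hc2
          -- main case : t < d u ≤ d v,  ‖u - v‖ < d u / 20
          have hdu0 : 0 < d u := lt_trans ht hc1
          have hdv0 : 0 < d v := lt_of_lt_of_le hdu0 huv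
          have hu : u ∉ K := by
            intro h
            rw [hd_zero u h] at hdu0
            exact lt_irrefl _ hdu0
          have hv : v ∉ K := by
            intro h
            rw [hd_zero v h] at hdv0
            exact lt_irrefl _ hdv0
          set J₀ := J (d u) with hJ₀
          have h1 : σ J₀ ≤ d u := hJ1 (d u) hdu0
          have h2 : d u < 2 * σ J₀ := hJ2 (d u) hdu0
          have hσ0 := hσpos J₀
          have hp1 : σ (J₀ - 1) = 2 * σ J₀ := hσprev J₀
          have hp2 : σ (J₀ - 2) = 4 * σ J₀ := by
            have e : J₀ - 2 = (J₀ - 1) - 1 := by ring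
            rw [e, hσprev, hp1]
            ring
          have hℓdu : ‖u - v‖ < d u / 20 := by linarith
          have hdv2 : d v ≤ 2.1 * σ J₀ := by nlinarith
          -- general estimate at a scale comparable to σ J₀
          have hgen : ∀ j : ℤ, σ J₀ ≤ σ j → σ j ≤ 4 * σ J₀ →
              ‖V j u - V j v‖ ≤ 36 * 18 ^ M * ‖u - v‖ ∧
              |tent (σ j) (d u) - tent (σ j) (d v)| * ‖V j v - v‖ ≤ 12 * ‖u - v‖ := by
            intro j hjl hjr
            have hσj := hσpos j
            have hcu : d u ≤ 2.1 * σ j := by linarith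
            have hcv : d v ≤ 2.1 * σ j := by linarith
            have hWu := hcov j u hcu
            have hWv := hcov j v hcv
            have hduv : dist u v ≤ σ j / 10 := by
              rw [dist_eq_norm]
              linarith
            have hmM : mI j ≤ M := by
              apply Nat.sInf_le
              refine ⟨hMmem.1, ?_⟩
              have ht2 : t < 2 * σ j := by linarith
              have := hMmem.2
              linarith
            have h18j : (18:ℝ) ^ (mI j) ≤ 18 ^ M := pow_le_pow_right₀ (by norm_num) hmM
            constructor
            · have hp := hVpair j u v hWu hWv hduv
              rw [dist_eq_norm] at hp
              refine hp.trans ?_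
              have : 36 * (18:ℝ) ^ (mI j) ≤ 36 * 18 ^ M := by linarith
              exact mul_le_mul_of_nonneg_right this hℓ0
            · have hlip := tent_lip hσj (d u) (d v)
              have habs : |d u - d v| ≤ ‖u - v‖ := by
                rw [abs_of_nonpos (by linarith), neg_sub]
                linarith
              have hvd := hVdist j v hcv
              have hstep1 : |tent (σ j) (d u) - tent (σ j) (d v)| ≤ 3 / σ j * ‖u - v‖ :=
                hlip.trans (mul_le_mul_of_nonneg_left habs (by positivity))
              calc |tent (σ j) (d u) - tent (σ j) (d v)| * ‖V j v - v‖
                  ≤ (3 / σ j * ‖u - v‖) * (4 * σ j) :=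
                    mul_le_mul hstep1 hvd (norm_nonneg _) (by positivity)
                _ = 12 * ‖u - v‖ := by field_simp; ring
          obtain ⟨c0a, c0b⟩ := hgen J₀ le_rfl (by linarith)
          obtain ⟨c1a, c1b⟩ := hgen (J₀ - 1) (by rw [hp1]; linarith) (by rw [hp1]; linarith)
          obtain ⟨c2a, c2b⟩ := hgen (J₀ - 2) (by rw [hp2]; linarith) hp2.le
          -- tent coefficients at u
          have ha2 : tent (σ (J₀ - 2)) (d u) = 0 := by
            apply tent_zero_left (hσpos _)
            rw [hp2]
            linarith
          have hsuma : tent (σ J₀) (d u) + tent (σ (J₀ - 1)) (d u) + tent (σ (J₀ - 2)) (d u) = 1 := by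
            rw [ha2, add_zero, hp1]
            exact tent_sum hσ0 h1 h2
          have hrepu : R u = tent (σ J₀) (d u) • V J₀ u + tent (σ (J₀ - 1)) (d u) • V (J₀ - 1) u
              + tent (σ (J₀ - 2)) (d u) • V (J₀ - 2) u := by
            rw [hRout u hu, ← hJ₀, ha2, zero_smul, add_zero]
          -- tent coefficients at v
          have hrepvsum : (R v = tent (σ J₀) (d v) • V J₀ v + tent (σ (J₀ - 1)) (d v) • V (J₀ - 1) v
              + tent (σ (J₀ - 2)) (d v) • V (J₀ - 2) v) ∧
              tent (σ J₀) (d v) + tent (σ (J₀ - 1)) (d v) + tent (σ (J₀ - 2)) (d v) = 1 := by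
            rcases lt_or_ge (d v) (2 * σ J₀) with hv2 | hv2
            · have hJv : J (d v) = J₀ := hJuniq (d v) hdv0 J₀ (le_trans h1 huv) hv2
              have hb2 : tent (σ (J₀ - 2)) (d v) = 0 := by
                apply tent_zero_left (hσpos _)
                rw [hp2]
                linarith
              constructor
              · rw [hRout v hv, hJv, hb2, zero_smul, add_zero]
              · rw [hb2, add_zero, hp1]
                exact tent_sum hσ0 (le_trans h1 huv) hv2
            · have hJv : J (d v) = J₀ - 1 := by
                apply hJuniq (d v) hdv0
                · rw [hp1]; exact hv2
                · rw [hp1]; linarith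
              have hb0 : tent (σ J₀) (d v) = 0 := tent_zero_right hσ0 hv2
              have he : J₀ - 1 - 1 = J₀ - 2 := by ring
              constructor
              · rw [hRout v hv, hJv, he, hb0, zero_smul, zero_add]
              · rw [hb0, zero_add]
                have e2 : σ (J₀ - 2) = 2 * σ (J₀ - 1) := by rw [hp2, hp1]; ring
                rw [e2]
                apply tent_sum (hσpos _)
                · rw [hp1]; exact hv2
                · rw [hp1]; linarith
          obtain ⟨hrepv, hsumb⟩ := hrepvsum
          -- decomposition identity
          have hid : R u - R v =
              (tent (σ J₀) (d u) • (V J₀ u - V J₀ v)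
                + tent (σ (J₀ - 1)) (d u) • (V (J₀ - 1) u - V (J₀ - 1) v)
                + tent (σ (J₀ - 2)) (d u) • (V (J₀ - 2) u - V (J₀ - 2) v))
              + ((tent (σ J₀) (d u) - tent (σ J₀) (d v)) • (V J₀ v - v)
                + (tent (σ (J₀ - 1)) (d u) - tent (σ (J₀ - 1)) (d v)) • (V (J₀ - 1) v - v)
                + (tent (σ (J₀ - 2)) (d u) - tent (σ (J₀ - 2)) (d v)) • (V (J₀ - 2) v - v))
              + ((tent (σ J₀) (d u) + tent (σ (J₀ - 1)) (d u) + tent (σ (J₀ - 2)) (d u))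
                - (tent (σ J₀) (d v) + tent (σ (J₀ - 1)) (d v) + tent (σ (J₀ - 2)) (d v))) • v := by
            rw [hrepu, hrepv]
            module
          rw [hsuma, hsumb, sub_self, zero_smul, add_zero] at hid
          -- bound the pieces
          have hn : ∀ (c : ℝ) (w : X) (B : ℝ), 0 ≤ c → ‖w‖ ≤ B → ‖c • w‖ ≤ c * B := by
            intro c w B hc hw
            rw [norm_smul, Real.norm_eq_abs, abs_of_nonneg hc]
            exact mul_le_mul_of_nonneg_left hw hc
          have ha0n : 0 ≤ tent (σ J₀) (d u) := tent_nonneg hσ0 (hd_nonneg u)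
          have ha1n : 0 ≤ tent (σ (J₀ - 1)) (d u) := tent_nonneg (hσpos _) (hd_nonneg u)
          have ha2n : 0 ≤ tent (σ (J₀ - 2)) (d u) := tent_nonneg (hσpos _) (hd_nonneg u)
          have t0 := hn _ _ _ ha0n c0a
          have t1 := hn _ _ _ ha1n c1a
          have t2 := hn _ _ _ ha2n c2a
          have s0 : ‖(tent (σ J₀) (d u) - tent (σ J₀) (d v)) • (V J₀ v - v)‖ ≤ 12 * ‖u - v‖ := by
            rw [norm_smul, Real.norm_eq_abs]
            exact c0b
          have s1 : ‖(tent (σ (J₀ - 1)) (d u) - tent (σ (J₀ - 1)) (d v)) • (V (J₀ - 1) v - v)‖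
              ≤ 12 * ‖u - v‖ := by
            rw [norm_smul, Real.norm_eq_abs]
            exact c1b
          have s2 : ‖(tent (σ (J₀ - 2)) (d u) - tent (σ (J₀ - 2)) (d v)) • (V (J₀ - 2) v - v)‖
              ≤ 12 * ‖u - v‖ := by
            rw [norm_smul, Real.norm_eq_abs]
            exact c2b
          have hT : ‖R u - R v‖ ≤
              (tent (σ J₀) (d u) + tent (σ (J₀ - 1)) (d u) + tent (σ (J₀ - 2)) (d u))
                * (36 * 18 ^ M * ‖u - v‖) + 36 * ‖u - v‖ := by
            rw [hid]
            have n1 := norm_add_le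
              (tent (σ J₀) (d u) • (V J₀ u - V J₀ v)
                + tent (σ (J₀ - 1)) (d u) • (V (J₀ - 1) u - V (J₀ - 1) v)
                + tent (σ (J₀ - 2)) (d u) • (V (J₀ - 2) u - V (J₀ - 2) v))
              ((tent (σ J₀) (d u) - tent (σ J₀) (d v)) • (V J₀ v - v)
                + (tent (σ (J₀ - 1)) (d u) - tent (σ (J₀ - 1)) (d v)) • (V (J₀ - 1) v - v)
                + (tent (σ (J₀ - 2)) (d u) - tent (σ (J₀ - 2)) (d v)) • (V (J₀ - 2) v - v))
            have n2 := norm_add₃_le (a := tent (σ J₀) (d u) • (V J₀ u - V J₀ v))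
              (b := tent (σ (J₀ - 1)) (d u) • (V (J₀ - 1) u - V (J₀ - 1) v))
              (c := tent (σ (J₀ - 2)) (d u) • (V (J₀ - 2) u - V (J₀ - 2) v))
            have n3 := norm_add₃_le (a := (tent (σ J₀) (d u) - tent (σ J₀) (d v)) • (V J₀ v - v))
              (b := (tent (σ (J₀ - 1)) (d u) - tent (σ (J₀ - 1)) (d v)) • (V (J₀ - 1) v - v))
              (c := (tent (σ (J₀ - 2)) (d u) - tent (σ (J₀ - 2)) (d v)) • (V (J₀ - 2) v - v))
            linarith [t0, t1, t2, s0, s1, s2]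
          rw [hsuma, one_mul] at hT
          -- final numeric comparison
          have hstep : 36 * (18:ℝ) ^ M * ‖u - v‖ + 36 * ‖u - v‖ ≤ 1520 * 20 ^ M * t := by
            have hA : (18:ℝ) ^ M * ‖u - v‖ ≤ 20 ^ M * t :=
              mul_le_mul h18 hℓt hℓ0 (by positivity)
            have hB : ‖u - v‖ ≤ 20 ^ M * t := hℓt.trans (le_mul_of_one_le_left ht.le h20)
            have hC : (0:ℝ) ≤ 20 ^ M * t := by positivity
            linarith [hA, hB, hC]
          linarith
    rcases le_total (d x) (d y) with h | h
    · exact key x y h hxy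
    · have h2 : ‖y - x‖ ≤ t := by rw [norm_sub_rev]; exact hxy
      have h3 := key y x h h2
      rwa [norm_sub_rev] at h3
end

section
/- Let X be a real Banach space with a semi-normalized subsymmetric Schauder basis, and assume X contains no subspace isomorphic to c₀. Then there exists a fixed-point-free map T : B_X → B_X that is Lipschitz and asymptotically regular. -/
open Metric Set Filter Topology
open scoped ZeroAtInfty

section Aux
variable {X : Type*} [NormedAddCommGroup X] [NormedSpace ℝ X]

private lemma conv_step (w v : X) (c b : ℝ) (h : |c| ≤ |b|) :
    ‖w + c • v‖ ≤ ‖w + b • v‖ ∨ ‖w + c • v‖ ≤ ‖w - b • v‖ := by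
  rcases eq_or_ne b 0 with hb | hb
  · have hc : c = 0 := by
      have : |c| ≤ 0 := by simpa [hb] using h
      simpa using this
    left; simp [hb, hc]
  · set t : ℝ := (1 + c / b) / 2 with ht
    have hcb : |c / b| ≤ 1 := by
      rw [abs_div, div_le_one (abs_pos.mpr hb)]; exact h
    have hcb' : -1 ≤ c / b ∧ c / b ≤ 1 := abs_le.mp hcb
    have ht0 : 0 ≤ t := by rw [ht]; linarith [hcb'.1]
    have ht1 : t ≤ 1 := by rw [ht]; linarith [hcb'.2]
    have key : w + c • v = t • (w + b • v) + (1 - t) • (w - b • v) := by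
      have hc : c = (2 * t - 1) * b := by
        rw [ht]; field_simp; ring
      rw [hc]; module
    have hnorm : ‖w + c • v‖ ≤ t * ‖w + b • v‖ + (1 - t) * ‖w - b • v‖ := by
      rw [key]
      refine (norm_add_le _ _).trans ?_
      rw [norm_smul, norm_smul, Real.norm_eq_abs, Real.norm_eq_abs,
        abs_of_nonneg ht0, abs_of_nonneg (by linarith : (0:ℝ) ≤ 1 - t)]
    rcases le_total ‖w + b • v‖ ‖w - b • v‖ with hle | hle
    · right
      refine hnorm.trans ?_
      nlinarith [norm_nonneg (w - b • v)]
    · left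
      refine hnorm.trans ?_
      nlinarith [norm_nonneg (w + b • v)]

private lemma sign_dom (x : ℕ → X) (s : Finset ℕ) :
    ∀ (w : X) (c b : ℕ → ℝ), (∀ n ∈ s, |c n| ≤ |b n|) →
    ∃ ε : ℕ → ℝ, (∀ n, ε n = 1 ∨ ε n = -1) ∧
      ‖w + ∑ n ∈ s, c n • x n‖ ≤ ‖w + ∑ n ∈ s, (ε n * b n) • x n‖ := by
  classical
  induction s using Finset.induction_on with
  | empty =>
    intro w c b _
    exact ⟨fun _ => 1, fun _ => Or.inl rfl, by simp⟩
  | insert a s ha ih =>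
    intro w c b hcb
    obtain ⟨ε, hε, hle⟩ := ih (w + c a • x a) c b
      (fun n hn => hcb n (Finset.mem_insert_of_mem hn))
    have hca : |c a| ≤ |b a| := hcb a (Finset.mem_insert_self a s)
    have key : ‖(w + ∑ n ∈ s, (ε n * b n) • x n) + c a • x a‖ ≤
        ‖(w + ∑ n ∈ s, (ε n * b n) • x n) + b a • x a‖ ∨
        ‖(w + ∑ n ∈ s, (ε n * b n) • x n) + c a • x a‖ ≤
        ‖(w + ∑ n ∈ s, (ε n * b n) • x n) - b a • x a‖ :=
      conv_step _ (x a) (c a) (b a) hca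
    have e1 : w + ∑ n ∈ insert a s, c n • x n = (w + c a • x a) + ∑ n ∈ s, c n • x n := by
      rw [Finset.sum_insert ha]; abel
    have e2 : (w + c a • x a) + ∑ n ∈ s, (ε n * b n) • x n
        = (w + ∑ n ∈ s, (ε n * b n) • x n) + c a • x a := by abel
    have hstart : ‖w + ∑ n ∈ insert a s, c n • x n‖ ≤
        ‖(w + ∑ n ∈ s, (ε n * b n) • x n) + c a • x a‖ := by
      rw [e1, ← e2]; exact hle
    rcases key with hk | hk
    · refine ⟨Function.update ε a 1, ?_, ?_⟩
      · intro n
        rcases eq_or_ne n a with rfl | hn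
        · simp
        · simpa [Function.update_of_ne hn] using hε n
      · have hsum : ∑ n ∈ insert a s, (Function.update ε a 1 n * b n) • x n
            = (w + ∑ n ∈ s, (ε n * b n) • x n) + b a • x a - w := by
          rw [Finset.sum_insert ha]
          have h1 : ∑ n ∈ s, (Function.update ε a 1 n * b n) • x n
              = ∑ n ∈ s, (ε n * b n) • x n := by
            refine Finset.sum_congr rfl fun n hn => ?_
            rw [Function.update_of_ne (by rintro rfl; exact ha hn)]
          rw [h1]; simp; abel
        have : w + ∑ n ∈ insert a s, (Function.update ε a 1 n * b n) • x n
            = (w + ∑ n ∈ s, (ε n * b n) • x n) + b a • x a := by rw [hsum]; abel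
        rw [this]
        exact hstart.trans hk
    · refine ⟨Function.update ε a (-1), ?_, ?_⟩
      · intro n
        rcases eq_or_ne n a with rfl | hn
        · simp
        · simpa [Function.update_of_ne hn] using hε n
      · have hsum : ∑ n ∈ insert a s, (Function.update ε a (-1) n * b n) • x n
            = (w + ∑ n ∈ s, (ε n * b n) • x n) - b a • x a - w := by
          rw [Finset.sum_insert ha]
          have h1 : ∑ n ∈ s, (Function.update ε a (-1) n * b n) • x n
              = ∑ n ∈ s, (ε n * b n) • x n := by
            refine Finset.sum_congr rfl fun n hn => ?_
            rw [Function.update_of_ne (by rintro rfl; exact ha hn)]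
          rw [h1]; simp [neg_smul]; abel
        have : w + ∑ n ∈ insert a s, (Function.update ε a (-1) n * b n) • x n
            = (w + ∑ n ∈ s, (ε n * b n) • x n) - b a • x a := by rw [hsum]; abel
        rw [this]
        exact hstart.trans hk

private lemma dom_le (x : ℕ → X) {C : ℝ}
    (hu : ∀ (s : Finset ℕ) (a ε : ℕ → ℝ), (∀ n, ε n = 1 ∨ ε n = -1) →
      ‖∑ n ∈ s, (ε n * a n) • x n‖ ≤ C * ‖∑ n ∈ s, a n • x n‖)
    (s : Finset ℕ) (c b : ℕ → ℝ) (h : ∀ n ∈ s, |c n| ≤ |b n|) :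
    ‖∑ n ∈ s, c n • x n‖ ≤ C * ‖∑ n ∈ s, b n • x n‖ := by
  obtain ⟨ε, hε, hle⟩ := sign_dom x s 0 c b h
  simp only [zero_add] at hle
  exact hle.trans (hu s b ε hε)

private lemma subset_le (x : ℕ → X) {C : ℝ} (hC : 0 ≤ C)
    (hu : ∀ (s : Finset ℕ) (a ε : ℕ → ℝ), (∀ n, ε n = 1 ∨ ε n = -1) →
      ‖∑ n ∈ s, (ε n * a n) • x n‖ ≤ C * ‖∑ n ∈ s, a n • x n‖)
    {s t : Finset ℕ} (hst : s ⊆ t) (a : ℕ → ℝ) :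
    ‖∑ n ∈ s, a n • x n‖ ≤ C * ‖∑ n ∈ t, a n • x n‖ := by
  classical
  have e : ∑ n ∈ s, a n • x n = ∑ n ∈ t, (if n ∈ s then a n else 0) • x n := by
    rw [← Finset.sum_subset hst (fun n _ hn => by simp [hn])]
    exact Finset.sum_congr rfl fun n hn => by simp [hn]
  rw [e]
  exact dom_le x hu t _ a (fun n _ => by
    by_cases h : n ∈ s
    · simp [h]
    · simp [h, abs_nonneg])

end Aux
structure Setup (X : Type*) [NormedAddCommGroup X] [NormedSpace ℝ X] where
  x : ℕ → X
  coeff : X → ℕ → ℝ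
  C : ℝ
  A : ℝ
  B : ℝ
  hC : 1 ≤ C
  hA : 0 < A
  hB : 0 < B
  hxA : ∀ n, A ≤ ‖x n‖
  hxB : ∀ n, ‖x n‖ ≤ B
  expand : ∀ y, Filter.Tendsto (fun N : ℕ => ∑ n ∈ Finset.range N, coeff y n • x n)
    Filter.atTop (nhds y)
  unique : ∀ (y : X) (a : ℕ → ℝ),
    Filter.Tendsto (fun N : ℕ => ∑ n ∈ Finset.range N, a n • x n) Filter.atTop (nhds y) →
    a = coeff y
  uncond : ∀ (s : Finset ℕ) (a ε : ℕ → ℝ), (∀ n, ε n = 1 ∨ ε n = -1) →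
      ‖∑ n ∈ s, (ε n * a n) • x n‖ ≤ C * ‖∑ n ∈ s, a n • x n‖
  subsym : ∀ (j : ℕ) (s : Finset ℕ) (a : ℕ → ℝ),
      C⁻¹ * ‖∑ n ∈ s, a n • x n‖ ≤ ‖∑ n ∈ s, a n • x (n + j)‖ ∧
      ‖∑ n ∈ s, a n • x (n + j)‖ ≤ C * ‖∑ n ∈ s, a n • x n‖
  sbig : ∀ R : ℝ, ∃ N : ℕ, R ≤ ‖∑ n ∈ Finset.range N, x n‖

namespace Setup

variable {X : Type*} [NormedAddCommGroup X] [NormedSpace ℝ X] [CompleteSpace X] (S : Setup X)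

noncomputable def ps (y : X) (N : ℕ) : X := ∑ n ∈ Finset.range N, S.coeff y n • S.x n

lemma hC0 : (0:ℝ) < S.C := lt_of_lt_of_le one_pos S.hC

lemma dom (s : Finset ℕ) (c b : ℕ → ℝ) (h : ∀ n ∈ s, |c n| ≤ |b n|) :
    ‖∑ n ∈ s, c n • S.x n‖ ≤ S.C * ‖∑ n ∈ s, b n • S.x n‖ :=
  dom_le S.x S.uncond s c b h

lemma subset {s t : Finset ℕ} (hst : s ⊆ t) (a : ℕ → ℝ) :
    ‖∑ n ∈ s, a n • S.x n‖ ≤ S.C * ‖∑ n ∈ t, a n • S.x n‖ :=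
  subset_le S.x S.hC0.le S.uncond hst a

lemma ps_tendsto (y : X) : Filter.Tendsto (S.ps y) Filter.atTop (nhds y) := S.expand y

lemma ps_norm_le (y : X) (N : ℕ) : ‖S.ps y N‖ ≤ S.C * ‖y‖ := by
  have h1 : Filter.Tendsto (fun M => S.C * ‖S.ps y M‖) Filter.atTop (nhds (S.C * ‖y‖)) :=
    ((S.ps_tendsto y).norm.const_mul S.C)
  refine ge_of_tendsto h1 ?_
  filter_upwards [Filter.eventually_ge_atTop N] with M hM
  exact S.subset (Finset.range_subset_range.mpr hM) _

lemma coeff_abs_le (y : X) (n : ℕ) : |S.coeff y n| ≤ (2 * S.C / S.A) * ‖y‖ := by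
  have h1 : S.coeff y n • S.x n = S.ps y (n+1) - S.ps y n := by
    simp [ps, Finset.sum_range_succ]
  have h2 : ‖S.coeff y n • S.x n‖ ≤ 2 * S.C * ‖y‖ := by
    rw [h1]
    calc ‖S.ps y (n+1) - S.ps y n‖ ≤ ‖S.ps y (n+1)‖ + ‖S.ps y n‖ := norm_sub_le _ _
      _ ≤ S.C * ‖y‖ + S.C * ‖y‖ := add_le_add (S.ps_norm_le y _) (S.ps_norm_le y _)
      _ = 2 * S.C * ‖y‖ := by ring
  have h3 : |S.coeff y n| * S.A ≤ |S.coeff y n| * ‖S.x n‖ :=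
    mul_le_mul_of_nonneg_left (S.hxA n) (abs_nonneg _)
  rw [norm_smul, Real.norm_eq_abs] at h2
  rw [div_mul_eq_mul_div, le_div_iff₀ S.hA]
  exact h3.trans h2

lemma coeff_add (y z : X) : S.coeff (y + z) = fun n => S.coeff y n + S.coeff z n := by
  symm
  apply S.unique
  have : (fun N => ∑ n ∈ Finset.range N, (S.coeff y n + S.coeff z n) • S.x n)
      = fun N => S.ps y N + S.ps z N := by
    funext N
    simp [ps, add_smul, Finset.sum_add_distrib]
  rw [this]
  exact (S.ps_tendsto y).add (S.ps_tendsto z)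

lemma coeff_smul (c : ℝ) (y : X) : S.coeff (c • y) = fun n => c * S.coeff y n := by
  symm
  apply S.unique
  have : (fun N => ∑ n ∈ Finset.range N, (c * S.coeff y n) • S.x n)
      = fun N => c • S.ps y N := by
    funext N
    simp [ps, Finset.smul_sum, smul_smul]
  rw [this]
  exact (S.ps_tendsto y).const_smul c

lemma coeff_sub (y z : X) : S.coeff (y - z) = fun n => S.coeff y n - S.coeff z n := by
  have h0 : y - z = y + (-1 : ℝ) • z := by module
  rw [h0, S.coeff_add, S.coeff_smul]
  funext n
  ring

lemma coeff_basis (m : ℕ) : S.coeff (S.x m) = fun n => if n = m then 1 else 0 := by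
  symm
  apply S.unique
  have hev : ∀ N, m + 1 ≤ N →
      ∑ n ∈ Finset.range N, (if n = m then (1:ℝ) else 0) • S.x n = S.x m := by
    intro N hN
    have : ∀ n ∈ Finset.range N, (if n = m then (1:ℝ) else 0) • S.x n
        = if n = m then S.x n else 0 := by
      intro n _
      by_cases h : n = m <;> simp [h]
    rw [Finset.sum_congr rfl this, Finset.sum_ite_eq' (Finset.range N) m]
    simp [Finset.mem_range, Nat.lt_of_succ_le hN]
  refine Filter.Tendsto.congr' ?_ tendsto_const_nhds
  filter_upwards [Filter.eventually_ge_atTop (m+1)] with N hN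
  exact (hev N hN).symm

lemma coeff_inj {y z : X} (h : S.coeff y = S.coeff z) : y = z := by
  have h1 := S.ps_tendsto y
  have h2 := S.ps_tendsto z
  have : S.ps y = S.ps z := by
    funext N; simp only [ps, h]
  rw [this] at h1
  exact tendsto_nhds_unique h1 h2

lemma coeff_zero : S.coeff 0 = fun _ => 0 := by
  symm
  apply S.unique
  simpa using (tendsto_const_nhds : Filter.Tendsto (fun _ : ℕ => (0:X)) _ _)

end Setup
namespace Setup

variable {X : Type*} [NormedAddCommGroup X] [NormedSpace ℝ X] [CompleteSpace X] (S : Setup X)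

private lemma cauchy_dom {f g : ℕ → X} {c : ℝ} (hc : 0 ≤ c)
    (h : ∀ n m : ℕ, n ≤ m → ‖f m - f n‖ ≤ c * ‖g m - g n‖) (hg : CauchySeq g) :
    CauchySeq f := by
  rw [Metric.cauchySeq_iff] at hg ⊢
  intro ε hε
  obtain ⟨N, hN⟩ := hg (ε / (c + 1)) (by positivity)
  refine ⟨N, fun m hm n hn => ?_⟩
  have key : ∀ p q : ℕ, p ≤ q → q ≥ N → p ≥ N → dist (f q) (f p) < ε := by
    intro p q hpq hq hp
    rw [dist_eq_norm]
    calc ‖f q - f p‖ ≤ c * ‖g q - g p‖ := h p q hpq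
      _ ≤ c * dist (g q) (g p) := by rw [dist_eq_norm]
      _ < ε := by
          have := hN q hq p hp
          have hd : (0:ℝ) ≤ dist (g q) (g p) := dist_nonneg
          calc c * dist (g q) (g p) ≤ (c+1) * dist (g q) (g p) := by nlinarith
            _ < (c+1) * (ε / (c+1)) := by
                have : (0:ℝ) < c + 1 := by linarith
                exact (mul_lt_mul_iff_right₀ this).mpr (hN q hq p hp)
            _ = ε := by field_simp
  rcases le_total n m with hnm | hmn
  · exact key n m hnm hm hn
  · rw [dist_comm]; exact key m n hmn hn hm

lemma shift_cauchy (y : X) :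
    CauchySeq (fun N => ∑ n ∈ Finset.range N, S.coeff y n • S.x (n + 1)) := by
  refine cauchy_dom S.hC0.le (fun n m hnm => ?_) (S.ps_tendsto y).cauchySeq
  have h1 : (∑ k ∈ Finset.range m, S.coeff y k • S.x (k+1))
      - ∑ k ∈ Finset.range n, S.coeff y k • S.x (k+1)
      = ∑ k ∈ Finset.Ico n m, S.coeff y k • S.x (k+1) := by
    rw [Finset.sum_Ico_eq_sub _ hnm]
  have h2 : S.ps y m - S.ps y n = ∑ k ∈ Finset.Ico n m, S.coeff y k • S.x k := by
    simp only [ps]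
    rw [Finset.sum_Ico_eq_sub _ hnm]
  rw [h1, h2]
  exact (S.subsym 1 (Finset.Ico n m) (S.coeff y)).2

noncomputable def sh (y : X) : X :=
  (cauchySeq_tendsto_of_complete (S.shift_cauchy y)).choose

lemma sh_tendsto (y : X) :
    Filter.Tendsto (fun N => ∑ n ∈ Finset.range N, S.coeff y n • S.x (n + 1))
      Filter.atTop (nhds (S.sh y)) :=
  (cauchySeq_tendsto_of_complete (S.shift_cauchy y)).choose_spec

lemma sh_coeff (y : X) :
    S.coeff (S.sh y) = fun m => if m = 0 then 0 else S.coeff y (m - 1) := by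
  symm
  apply S.unique
  have key : ∀ N : ℕ, ∑ n ∈ Finset.range (N + 1),
      (if n = 0 then (0:ℝ) else S.coeff y (n-1)) • S.x n
      = ∑ n ∈ Finset.range N, S.coeff y n • S.x (n + 1) := by
    intro N
    rw [Finset.sum_range_succ']
    simp
  rw [← tendsto_add_atTop_iff_nat 1]
  have : (fun N => ∑ n ∈ Finset.range (N + 1),
      (if n = 0 then (0:ℝ) else S.coeff y (n-1)) • S.x n)
      = fun N => ∑ n ∈ Finset.range N, S.coeff y n • S.x (n + 1) := funext key
  rw [this]
  exact S.sh_tendsto y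

lemma sh_add (y z : X) : S.sh (y + z) = S.sh y + S.sh z := by
  refine tendsto_nhds_unique (S.sh_tendsto (y+z))
    (Filter.Tendsto.congr (fun N => ?_) ((S.sh_tendsto y).add (S.sh_tendsto z)))
  rw [coeff_add]
  simp [add_smul, Finset.sum_add_distrib]

lemma sh_smul (c : ℝ) (y : X) : S.sh (c • y) = c • S.sh y := by
  refine tendsto_nhds_unique (S.sh_tendsto (c • y))
    (Filter.Tendsto.congr (fun N => ?_) ((S.sh_tendsto y).const_smul c))
  rw [coeff_smul]
  simp [Finset.smul_sum, smul_smul]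

lemma sh_sub (y z : X) : S.sh (y - z) = S.sh y - S.sh z := by
  have h0 : y - z = y + (-1 : ℝ) • z := by module
  rw [h0, sh_add, sh_smul]
  module

lemma sh_iter_coeff (j : ℕ) (y : X) :
    S.coeff (S.sh^[j] y) = fun m => if m < j then 0 else S.coeff y (m - j) := by
  induction j with
  | zero => simp
  | succ j ih =>
    rw [Function.iterate_succ_apply', sh_coeff, ih]
    funext m
    rcases Nat.eq_zero_or_pos m with rfl | hm
    · simp
    · obtain ⟨m', rfl⟩ := Nat.exists_eq_succ_of_ne_zero hm.ne'
      simp only [Nat.succ_ne_zero, if_false, Nat.succ_sub_one]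
      by_cases h : m' < j
      · simp [h, Nat.succ_lt_succ h]
      · have h2 : ¬ (m' + 1 < j + 1) := by omega
        simp [h, h2, Nat.succ_sub_succ]

lemma psj (j : ℕ) (y : X) (N : ℕ) :
    S.ps (S.sh^[j] y) (N + j) = ∑ n ∈ Finset.range N, S.coeff y n • S.x (n + j) := by
  induction N with
  | zero =>
    simp only [Nat.zero_add, Finset.range_zero, Finset.sum_empty]
    apply Finset.sum_eq_zero
    intro m hm
    rw [sh_iter_coeff]
    simp [Finset.mem_range.mp hm]
  | succ N ih =>
    have : N + 1 + j = (N + j) + 1 := by omega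
    rw [this]
    simp only [ps] at ih ⊢
    rw [Finset.sum_range_succ, Finset.sum_range_succ, ih, sh_iter_coeff]
    have h1 : ¬ (N + j < j) := by omega
    simp only [h1, if_false]
    have h2 : N + j - j = N := by omega
    rw [h2]

lemma sh_iter_norm_le (j : ℕ) (y : X) : ‖S.sh^[j] y‖ ≤ S.C * ‖y‖ := by
  have h1 : Filter.Tendsto (fun N => S.ps (S.sh^[j] y) (N + j)) Filter.atTop
      (nhds (S.sh^[j] y)) :=
    (S.ps_tendsto (S.sh^[j] y)).comp (Filter.tendsto_add_atTop_nat j)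
  have h2 : Filter.Tendsto (fun N => ‖S.ps (S.sh^[j] y) (N + j)‖) Filter.atTop
      (nhds ‖S.sh^[j] y‖) := h1.norm
  have h3 : Filter.Tendsto (fun N => S.C * ‖S.ps y N‖) Filter.atTop (nhds (S.C * ‖y‖)) :=
    (S.ps_tendsto y).norm.const_mul S.C
  refine le_of_tendsto_of_tendsto' h2 h3 (fun N => ?_)
  rw [psj]
  exact (S.subsym j (Finset.range N) (S.coeff y)).2

lemma norm_le_sh_iter (j : ℕ) (y : X) : ‖y‖ ≤ S.C * ‖S.sh^[j] y‖ := by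
  have h1 : Filter.Tendsto (fun N => S.C⁻¹ * ‖S.ps y N‖) Filter.atTop
      (nhds (S.C⁻¹ * ‖y‖)) := (S.ps_tendsto y).norm.const_mul _
  have h2 : Filter.Tendsto (fun N => ‖S.ps (S.sh^[j] y) (N + j)‖) Filter.atTop
      (nhds ‖S.sh^[j] y‖) :=
    ((S.ps_tendsto (S.sh^[j] y)).comp (Filter.tendsto_add_atTop_nat j)).norm
  have key : S.C⁻¹ * ‖y‖ ≤ ‖S.sh^[j] y‖ := by
    refine le_of_tendsto_of_tendsto' h1 h2 (fun N => ?_)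
    rw [psj]
    exact (S.subsym j (Finset.range N) (S.coeff y)).1
  have h3 := mul_le_mul_of_nonneg_left key S.hC0.le
  rwa [← mul_assoc, mul_inv_cancel₀ S.hC0.ne', one_mul] at h3

lemma sh_norm_le (y : X) : ‖S.sh y‖ ≤ S.C * ‖y‖ := by
  have := S.sh_iter_norm_le 1 y
  simpa using this

end Setup
namespace Setup

variable {X : Type*} [NormedAddCommGroup X] [NormedSpace ℝ X] [CompleteSpace X] (S : Setup X)

noncomputable def K : ℝ := 2 * S.C / S.A

lemma hK0 : 0 < S.K := by
  have hc := S.hC0; have ha := S.hA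
  rw [K]; positivity

noncomputable def nf (y : X) : ℝ := ⨆ n, |S.coeff y n|

lemma nf_bdd (y : X) : BddAbove (Set.range fun n => |S.coeff y n|) :=
  ⟨S.K * ‖y‖, by
    rintro - ⟨n, rfl⟩
    exact S.coeff_abs_le y n⟩

lemma abs_coeff_le_nf (y : X) (n : ℕ) : |S.coeff y n| ≤ S.nf y :=
  le_ciSup (S.nf_bdd y) n

lemma nf_le (y : X) : S.nf y ≤ S.K * ‖y‖ :=
  ciSup_le fun n => S.coeff_abs_le y n

lemma nf_nonneg (y : X) : 0 ≤ S.nf y :=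
  le_trans (abs_nonneg _) (S.abs_coeff_le_nf y 0)

lemma nf_eq_zero {y : X} (h : S.nf y = 0) : y = 0 := by
  apply S.coeff_inj
  rw [S.coeff_zero]
  funext n
  have h1 := S.abs_coeff_le_nf y n
  rw [h] at h1
  exact abs_eq_zero.mp (le_antisymm h1 (abs_nonneg _))

lemma nf_add_le (y z : X) : S.nf (y + z) ≤ S.nf y + S.nf z := by
  refine ciSup_le fun n => ?_
  rw [S.coeff_add]
  exact (abs_add_le _ _).trans (add_le_add (S.abs_coeff_le_nf y n) (S.abs_coeff_le_nf z n))

lemma nf_sub_abs (y z : X) : |S.nf y - S.nf z| ≤ S.K * ‖y - z‖ := by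
  have key : ∀ a b : X, S.nf a - S.nf b ≤ S.K * ‖a - b‖ := by
    intro a b
    have h1 : S.nf a ≤ S.nf b + S.nf (a - b) := by
      have : a = b + (a - b) := by abel
      calc S.nf a = S.nf (b + (a - b)) := by rw [← this]
        _ ≤ S.nf b + S.nf (a - b) := S.nf_add_le _ _
    have h2 := S.nf_le (a - b)
    linarith
  rw [abs_sub_le_iff]
  constructor
  · exact key y z
  · have := key z y
    rwa [norm_sub_rev] at this

lemma nf_smul_le (c : ℝ) (y : X) : S.nf (c • y) ≤ |c| * S.nf y := by
  refine ciSup_le fun n => ?_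
  rw [S.coeff_smul, abs_mul]
  exact mul_le_mul_of_nonneg_left (S.abs_coeff_le_nf y n) (abs_nonneg _)

lemma nf_smul_pos {c : ℝ} (hc : 0 < c) (y : X) : S.nf (c • y) = c * S.nf y := by
  refine le_antisymm ?_ ?_
  · have := S.nf_smul_le c y
    rwa [abs_of_pos hc] at this
  · have h1 : S.nf y ≤ c⁻¹ * S.nf (c • y) := by
      have h2 := S.nf_smul_le c⁻¹ (c • y)
      rw [smul_smul, inv_mul_cancel₀ hc.ne', one_smul,
        abs_of_pos (inv_pos.mpr hc)] at h2
      exact h2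
    calc c * S.nf y ≤ c * (c⁻¹ * S.nf (c • y)) := mul_le_mul_of_nonneg_left h1 hc.le
      _ = S.nf (c • y) := by field_simp

lemma coeff_cons (a : ℝ) (v : X) :
    S.coeff (a • S.x 0 + S.sh v) = fun m => if m = 0 then a else S.coeff v (m - 1) := by
  rw [S.coeff_add]
  funext m
  rw [S.coeff_smul, S.coeff_basis, S.sh_coeff]
  rcases eq_or_ne m 0 with rfl | hm
  · simp
  · simp [hm]

lemma nf_cons (a : ℝ) (v : X) :
    S.nf (a • S.x 0 + S.sh v) = max |a| (S.nf v) := by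
  set w := a • S.x 0 + S.sh v with hw
  have hc := S.coeff_cons a v
  refine le_antisymm ?_ ?_
  · refine ciSup_le fun m => ?_
    rw [hc]
    rcases eq_or_ne m 0 with rfl | hm
    · simpa using le_max_left _ _
    · simp only [hm, if_false]
      exact le_trans (S.abs_coeff_le_nf v _) (le_max_right _ _)
  · refine max_le ?_ ?_
    · have := S.abs_coeff_le_nf w 0
      rwa [hc] at this
      
    · refine ciSup_le fun m => ?_
      have := S.abs_coeff_le_nf w (m + 1)
      rw [hc] at this
      simpa using this

noncomputable def rad (z : X) : X := (max 1 ‖z‖)⁻¹ • z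

lemma rad_norm_le (z : X) : ‖rad z‖ ≤ 1 := by
  have h0 : (0:ℝ) < max 1 ‖z‖ := lt_of_lt_of_le one_pos (le_max_left _ _)
  rw [rad, norm_smul, Real.norm_eq_abs, abs_of_pos (inv_pos.mpr h0)]
  have h1 := mul_le_mul_of_nonneg_left (le_max_right 1 ‖z‖) (inv_nonneg.mpr h0.le)
  rwa [inv_mul_cancel₀ h0.ne'] at h1

lemma rad_lip (a b : X) : ‖rad a - rad b‖ ≤ 2 * ‖a - b‖ := by
  set α := max 1 ‖a‖ with hα
  set β := max 1 ‖b‖ with hβ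
  have hα1 : 1 ≤ α := le_max_left _ _
  have hβ1 : 1 ≤ β := le_max_left _ _
  have hα0 : 0 < α := lt_of_lt_of_le one_pos hα1
  have hβ0 : 0 < β := lt_of_lt_of_le one_pos hβ1
  have hbβ : ‖b‖ ≤ β := le_max_right _ _
  have e : rad a - rad b = α⁻¹ • (a - b) + (α⁻¹ - β⁻¹) • b := by
    rw [rad, rad, ← hα, ← hβ]
    module
  rw [e]
  have t1 : ‖α⁻¹ • (a - b)‖ ≤ ‖a - b‖ := by
    rw [norm_smul, Real.norm_eq_abs, abs_of_pos (inv_pos.mpr hα0)]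
    calc α⁻¹ * ‖a - b‖ ≤ 1 * ‖a - b‖ := by
          exact mul_le_mul_of_nonneg_right (inv_le_one_of_one_le₀ hα1) (norm_nonneg _)
      _ = ‖a - b‖ := one_mul _
  have hdiff : |β - α| ≤ ‖a - b‖ := by
    have h1 : |β - α| ≤ |‖b‖ - ‖a‖| := by
      rw [hα, hβ, max_comm 1 ‖a‖, max_comm 1 ‖b‖]
      exact abs_max_sub_max_le_abs _ _ _
    have h2 : |‖b‖ - ‖a‖| ≤ ‖b - a‖ := abs_norm_sub_norm_le _ _
    rw [norm_sub_rev] at h2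
    exact h1.trans h2
  have t2 : ‖(α⁻¹ - β⁻¹) • b‖ ≤ ‖a - b‖ := by
    rw [norm_smul, Real.norm_eq_abs]
    have e2 : α⁻¹ - β⁻¹ = (β - α) / (α * β) := by field_simp
    rw [e2, abs_div, abs_of_pos (by positivity : (0:ℝ) < α * β)]
    rw [div_mul_eq_mul_div, div_le_iff₀ (by positivity)]
    have hβαβ : ‖b‖ ≤ α * β := by nlinarith [norm_nonneg b]
    calc |β - α| * ‖b‖ ≤ ‖a - b‖ * (α * β) := by
          have := mul_le_mul hdiff hβαβ (norm_nonneg b) (norm_nonneg _)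
          linarith
      _ = ‖a - b‖ * (α * β) := rfl
  calc ‖α⁻¹ • (a - b) + (α⁻¹ - β⁻¹) • b‖ ≤ ‖α⁻¹ • (a - b)‖ + ‖(α⁻¹ - β⁻¹) • b‖ :=
        norm_add_le _ _
    _ ≤ ‖a - b‖ + ‖a - b‖ := add_le_add t1 t2
    _ = 2 * ‖a - b‖ := by ring

lemma rad_eq {z : X} (h : ‖z‖ ≤ 1) : rad z = z := by
  rw [rad, max_eq_left h]
  simp

noncomputable def r0 : ℝ := 1 / (2 * S.C * (1 + S.C))

lemma hr0_pos : 0 < S.r0 := by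
  have := S.hC0; rw [r0]; positivity

lemma hr0_le : S.r0 ≤ 1 := by
  rw [r0]
  rw [div_le_one (by have := S.hC0; positivity)]
  nlinarith [S.hC, S.hC0]

noncomputable def hmap (y : X) : ℝ := S.nf y + max 0 (S.r0 - ‖y‖)

noncomputable def wmap (y : X) : X := S.hmap y • S.x 0 + S.sh y

noncomputable def tmap (y : X) : X := rad (S.wmap y)

lemma hmap_pos (y : X) : 0 < S.hmap y := by
  rcases eq_or_ne y 0 with rfl | hy
  · have h1 : S.nf (0:X) = 0 := by
      refine le_antisymm ?_ (S.nf_nonneg 0)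
      refine ciSup_le fun n => ?_
      rw [S.coeff_zero]
      simp
    rw [hmap, h1, norm_zero, sub_zero, max_eq_right S.hr0_pos.le]
    simpa using S.hr0_pos
  · have h1 : 0 < S.nf y := by
      rcases lt_or_eq_of_le (S.nf_nonneg y) with h | h
      · exact h
      · exact absurd (S.nf_eq_zero h.symm) hy
    have h2 : 0 ≤ max 0 (S.r0 - ‖y‖) := le_max_left _ _
    rw [hmap]; linarith

lemma hmap_lip (y z : X) : |S.hmap y - S.hmap z| ≤ (S.K + 1) * ‖y - z‖ := by
  rw [hmap, hmap]
  have h1 := S.nf_sub_abs y z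
  have h2 : |max 0 (S.r0 - ‖y‖) - max 0 (S.r0 - ‖z‖)| ≤ ‖y - z‖ := by
    have h3 : |max 0 (S.r0 - ‖y‖) - max 0 (S.r0 - ‖z‖)| ≤ |(S.r0 - ‖y‖) - (S.r0 - ‖z‖)| := by
      rw [max_comm 0 (S.r0 - ‖y‖), max_comm 0 (S.r0 - ‖z‖)]
      exact abs_max_sub_max_le_abs _ _ _
    have h4 : (S.r0 - ‖y‖) - (S.r0 - ‖z‖) = ‖z‖ - ‖y‖ := by ring
    rw [h4] at h3
    have h5 : |‖z‖ - ‖y‖| ≤ ‖z - y‖ := abs_norm_sub_norm_le _ _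
    rw [norm_sub_rev] at h5
    exact h3.trans h5
  calc |S.nf y + max 0 (S.r0 - ‖y‖) - (S.nf z + max 0 (S.r0 - ‖z‖))|
      ≤ |S.nf y - S.nf z| + |max 0 (S.r0 - ‖y‖) - max 0 (S.r0 - ‖z‖)| := by
        have : S.nf y + max 0 (S.r0 - ‖y‖) - (S.nf z + max 0 (S.r0 - ‖z‖))
            = (S.nf y - S.nf z) + (max 0 (S.r0 - ‖y‖) - max 0 (S.r0 - ‖z‖)) := by ring
        rw [this]
        exact abs_add_le _ _
    _ ≤ S.K * ‖y - z‖ + ‖y - z‖ := add_le_add h1 h2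
    _ = (S.K + 1) * ‖y - z‖ := by ring

lemma wmap_coeff (y : X) :
    S.coeff (S.wmap y) = fun m => if m = 0 then S.hmap y else S.coeff y (m - 1) :=
  S.coeff_cons _ y

lemma wmap_lip (y z : X) : ‖S.wmap y - S.wmap z‖ ≤ ((S.K + 1) * S.B + S.C) * ‖y - z‖ := by
  have e : S.wmap y - S.wmap z = (S.hmap y - S.hmap z) • S.x 0 + S.sh (y - z) := by
    rw [wmap, wmap, S.sh_sub]
    module
  rw [e]
  calc ‖(S.hmap y - S.hmap z) • S.x 0 + S.sh (y - z)‖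
      ≤ ‖(S.hmap y - S.hmap z) • S.x 0‖ + ‖S.sh (y - z)‖ := norm_add_le _ _
    _ ≤ |S.hmap y - S.hmap z| * S.B + S.C * ‖y - z‖ := by
        refine add_le_add ?_ (S.sh_norm_le _)
        rw [norm_smul, Real.norm_eq_abs]
        exact mul_le_mul_of_nonneg_left (S.hxB 0) (abs_nonneg _)
    _ ≤ ((S.K + 1) * ‖y - z‖) * S.B + S.C * ‖y - z‖ := by
        refine add_le_add_left (mul_le_mul_of_nonneg_right (S.hmap_lip y z) S.hB.le) _
    _ = ((S.K + 1) * S.B + S.C) * ‖y - z‖ := by ring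

lemma tmap_lip (y z : X) :
    ‖S.tmap y - S.tmap z‖ ≤ (2 * ((S.K + 1) * S.B + S.C)) * ‖y - z‖ := by
  calc ‖S.tmap y - S.tmap z‖ ≤ 2 * ‖S.wmap y - S.wmap z‖ := rad_lip _ _
    _ ≤ 2 * (((S.K + 1) * S.B + S.C) * ‖y - z‖) := by
        refine mul_le_mul_of_nonneg_left (S.wmap_lip y z) (by norm_num)
    _ = (2 * ((S.K + 1) * S.B + S.C)) * ‖y - z‖ := by ring

lemma tmap_norm_le (y : X) : ‖S.tmap y‖ ≤ 1 := rad_norm_le _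

end Setup
namespace Setup

variable {X : Type*} [NormedAddCommGroup X] [NormedSpace ℝ X] [CompleteSpace X] (S : Setup X)

lemma tmap_eq (y : X) : S.tmap y = (max 1 ‖S.wmap y‖)⁻¹ • S.wmap y := rfl

lemma tmap_ne (y : X) : S.tmap y ≠ y := by
  intro hT
  set w := S.wmap y with hw
  set m := max 1 ‖w‖ with hm
  have hm1 : 1 ≤ m := le_max_left _ _
  have hm0 : 0 < m := lt_of_lt_of_le one_pos hm1
  have hy : y = m⁻¹ • w := by rw [← hT, tmap_eq]
  have ceq : S.coeff y = fun k => m⁻¹ * S.coeff w k := by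
    conv_lhs => rw [hy]
    exact S.coeff_smul _ _
  have wcoeff : S.coeff w = fun k => if k = 0 then S.hmap y else S.coeff y (k - 1) :=
    S.wmap_coeff y
  have c0 : S.coeff y 0 = m⁻¹ * S.hmap y := by
    have e1 := congrFun ceq 0
    have e2 := congrFun wcoeff 0
    norm_num at e2
    rw [e1, e2]
  have csucc : ∀ k, S.coeff y (k + 1) = m⁻¹ * S.coeff y k := by
    intro k
    have e1 := congrFun ceq (k+1)
    have e2 := congrFun wcoeff (k+1)
    norm_num at e2
    rw [e1, e2]
  have cform : ∀ k, S.coeff y k = S.hmap y * (m⁻¹) ^ (k + 1) := by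
    intro k
    induction k with
    | zero => rw [c0]; ring
    | succ k ih => rw [csucc, ih]; ring
  have hpos := S.hmap_pos y
  rcases eq_or_lt_of_le hm1 with hm1' | hm1'
  · -- m = 1
    have hcc : ∀ k, S.coeff y k = S.hmap y := by
      intro k
      rw [cform k, ← hm1']
      simp
    obtain ⟨N, hN⟩ := S.sbig (S.C * ‖y‖ / S.hmap y + 1)
    have hps : S.ps y N = S.hmap y • ∑ n ∈ Finset.range N, S.x n := by
      rw [ps, Finset.smul_sum]
      exact Finset.sum_congr rfl fun n _ => by rw [hcc n]
    have h1 : ‖S.ps y N‖ = S.hmap y * ‖∑ n ∈ Finset.range N, S.x n‖ := by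
      rw [hps, norm_smul, Real.norm_eq_abs, abs_of_pos hpos]
    have h2 := S.ps_norm_le y N
    rw [h1] at h2
    have h3 : S.hmap y * (S.C * ‖y‖ / S.hmap y + 1) ≤ S.C * ‖y‖ := by
      calc S.hmap y * (S.C * ‖y‖ / S.hmap y + 1)
          ≤ S.hmap y * ‖∑ n ∈ Finset.range N, S.x n‖ :=
            mul_le_mul_of_nonneg_left hN hpos.le
        _ ≤ S.C * ‖y‖ := h2
    rw [mul_add, mul_div_cancel₀ _ hpos.ne'] at h3
    linarith
  · -- m > 1
    have hwm : ‖w‖ = m := by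
      rcases max_cases 1 ‖w‖ with ⟨h1, h2⟩ | ⟨h1, h2⟩
      · rw [← hm] at h1; rw [h1] at hm1'; linarith [hm1', h2]
      · rw [← hm] at h1; exact h1.symm
    have hy1 : ‖y‖ = 1 := by
      rw [hy, norm_smul, Real.norm_eq_abs, abs_of_pos (inv_pos.mpr hm0), hwm,
        inv_mul_cancel₀ hm0.ne']
    have hmax0 : max 0 (S.r0 - ‖y‖) = 0 := by
      rw [hy1, max_eq_left (by linarith [S.hr0_le])]
    have hh : S.hmap y = S.nf y := by rw [hmap, hmax0, add_zero]
    have hminv : m⁻¹ < 1 := by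
      rw [inv_lt_one_iff₀]; right; exact hm1'
    have hnf : S.nf y = S.hmap y * m⁻¹ := by
      refine le_antisymm ?_ ?_
      · refine ciSup_le fun k => ?_
        rw [cform k, abs_of_nonneg (by positivity)]
        have : (m⁻¹) ^ (k + 1) ≤ m⁻¹ := by
          calc (m⁻¹) ^ (k + 1) ≤ (m⁻¹) ^ 1 :=
            pow_le_pow_of_le_one (by positivity) hminv.le (by omega)
          _ = m⁻¹ := pow_one _
        exact mul_le_mul_of_nonneg_left this hpos.le
      · have := S.abs_coeff_le_nf y 0
        rw [cform 0, pow_one, abs_of_nonneg (by positivity)] at this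
        exact this
    have hpos' : 0 < S.nf y := by rw [← hh]; exact hpos
    have hmain : S.nf y = S.nf y * m⁻¹ := by
      conv_lhs => rw [hnf]
      rw [hh]
    nlinarith [hpos', hminv, hmain]

end Setup
namespace Setup

variable {X : Type*} [NormedAddCommGroup X] [NormedSpace ℝ X] [CompleteSpace X] (S : Setup X)

section Orbit

variable (y₀ : X)

noncomputable def orb (n : ℕ) : X := S.tmap^[n] y₀
noncomputable def mu (n : ℕ) : ℝ := max 1 ‖S.wmap (S.orb y₀ n)‖
noncomputable def Pr (n : ℕ) : ℝ := ∏ k ∈ Finset.range n, S.mu y₀ k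
noncomputable def zz (n : ℕ) : X := S.Pr y₀ n • S.orb y₀ n
noncomputable def hh (n : ℕ) : ℝ := S.Pr y₀ n * S.hmap (S.orb y₀ n)
noncomputable def nn (n : ℕ) : ℝ := S.nf (S.zz y₀ n)
noncomputable def dd (n : ℕ) : X := S.zz y₀ (n+1) - S.zz y₀ n

lemma orb_zero : S.orb y₀ 0 = y₀ := rfl

lemma orb_succ (n : ℕ) : S.orb y₀ (n+1) = S.tmap (S.orb y₀ n) := by
  rw [orb, orb, Function.iterate_succ_apply']

lemma mu_ge1 (n : ℕ) : 1 ≤ S.mu y₀ n := le_max_left _ _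

lemma mu_pos (n : ℕ) : 0 < S.mu y₀ n := lt_of_lt_of_le one_pos (S.mu_ge1 y₀ n)

lemma Pr_zero : S.Pr y₀ 0 = 1 := by simp [Pr]

lemma Pr_succ (n : ℕ) : S.Pr y₀ (n+1) = S.Pr y₀ n * S.mu y₀ n := by
  rw [Pr, Pr, Finset.prod_range_succ]

lemma Pr_ge1 (n : ℕ) : 1 ≤ S.Pr y₀ n := by
  induction n with
  | zero => rw [Pr_zero]
  | succ n ih =>
    rw [Pr_succ]
    nlinarith [S.mu_ge1 y₀ n]

lemma Pr_pos (n : ℕ) : 0 < S.Pr y₀ n := lt_of_lt_of_le one_pos (S.Pr_ge1 y₀ n)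

lemma Pr_mono : Monotone (S.Pr y₀) := by
  apply monotone_nat_of_le_succ
  intro n
  rw [Pr_succ]
  calc S.Pr y₀ n = S.Pr y₀ n * 1 := (mul_one _).symm
    _ ≤ S.Pr y₀ n * S.mu y₀ n :=
        mul_le_mul_of_nonneg_left (S.mu_ge1 y₀ n) (S.Pr_pos y₀ n).le

lemma orb_succ_eq (n : ℕ) :
    S.orb y₀ (n+1) = (S.mu y₀ n)⁻¹ • S.wmap (S.orb y₀ n) := by
  rw [orb_succ, tmap_eq, mu]

lemma zz_zero : S.zz y₀ 0 = y₀ := by rw [zz, Pr_zero, one_smul, orb_zero]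

lemma zz_succ (n : ℕ) :
    S.zz y₀ (n+1) = S.hh y₀ n • S.x 0 + S.sh (S.zz y₀ n) := by
  rw [zz, Pr_succ, orb_succ_eq, smul_smul, mul_assoc,
    mul_inv_cancel₀ (S.mu_pos y₀ n).ne', mul_one, wmap, smul_add, smul_smul, zz,
    S.sh_smul]
  rfl

lemma norm_orb_le (hy₀ : ‖y₀‖ ≤ 1) (n : ℕ) : ‖S.orb y₀ n‖ ≤ 1 := by
  cases n with
  | zero => exact hy₀
  | succ n => rw [orb_succ]; exact S.tmap_norm_le _

lemma norm_zz_eq (n : ℕ) : ‖S.zz y₀ n‖ = S.Pr y₀ n * ‖S.orb y₀ n‖ := by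
  rw [zz, norm_smul, Real.norm_eq_abs, abs_of_pos (S.Pr_pos y₀ n)]

lemma norm_zz_le_Pr (hy₀ : ‖y₀‖ ≤ 1) (n : ℕ) : ‖S.zz y₀ n‖ ≤ S.Pr y₀ n := by
  rw [norm_zz_eq]
  calc S.Pr y₀ n * ‖S.orb y₀ n‖ ≤ S.Pr y₀ n * 1 :=
      mul_le_mul_of_nonneg_left (S.norm_orb_le y₀ hy₀ n) (S.Pr_pos y₀ n).le
    _ = S.Pr y₀ n := mul_one _

lemma hh_pos (n : ℕ) : 0 < S.hh y₀ n :=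
  mul_pos (S.Pr_pos y₀ n) (S.hmap_pos _)

lemma nn_le_hh (n : ℕ) : S.nn y₀ n ≤ S.hh y₀ n := by
  rw [nn, zz, S.nf_smul_pos (S.Pr_pos y₀ n), hh]
  refine mul_le_mul_of_nonneg_left ?_ (S.Pr_pos y₀ n).le
  rw [hmap]
  have := le_max_left (0:ℝ) (S.r0 - ‖S.orb y₀ n‖)
  linarith

lemma nn_succ (n : ℕ) : S.nn y₀ (n+1) = S.hh y₀ n := by
  rw [nn, zz_succ, S.nf_cons, abs_of_pos (S.hh_pos y₀ n)]
  exact max_eq_left (S.nn_le_hh y₀ n)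

lemma hh_mono {a b : ℕ} (hab : a ≤ b) : S.hh y₀ a ≤ S.hh y₀ b := by
  have step : ∀ n, S.hh y₀ n ≤ S.hh y₀ (n+1) := by
    intro n
    rw [← nn_succ]
    exact S.nn_le_hh y₀ (n+1)
  exact monotone_nat_of_le_succ step hab

lemma hh_zero : S.hh y₀ 0 = S.hmap y₀ := by
  rw [hh, Pr_zero, one_mul, orb_zero]

lemma coeff_zz (n m : ℕ) :
    S.coeff (S.zz y₀ n) m = if m < n then S.hh y₀ (n - 1 - m) else S.coeff y₀ (m - n) := by
  induction n generalizing m with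
  | zero => simp [zz_zero]
  | succ n ih =>
    rw [zz_succ]
    have hc := congrFun (S.coeff_cons (S.hh y₀ n) (S.zz y₀ n)) m
    rw [hc]
    rcases Nat.eq_zero_or_pos m with rfl | hm
    · simp
    · obtain ⟨m', rfl⟩ := Nat.exists_eq_succ_of_ne_zero hm.ne'
      simp only [Nat.succ_ne_zero, if_false, Nat.succ_sub_one]
      rw [ih m']
      by_cases h : m' < n
      · have h1 : m' + 1 < n + 1 := by omega
        rw [if_pos h, if_pos h1]
        congr 1
        omega
      · have h1 : ¬ (m' + 1 < n + 1) := by omega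
        rw [if_neg h, if_neg h1]
        congr 1
        omega

lemma Pr_succ_max (n : ℕ) :
    S.Pr y₀ (n+1) = max (S.Pr y₀ n) ‖S.zz y₀ (n+1)‖ := by
  have h1 : ‖S.zz y₀ (n+1)‖ = S.Pr y₀ n * ‖S.wmap (S.orb y₀ n)‖ := by
    rw [norm_zz_eq, Pr_succ, orb_succ_eq, norm_smul, Real.norm_eq_abs,
      abs_of_pos (inv_pos.mpr (S.mu_pos y₀ n))]
    rw [show S.Pr y₀ n * S.mu y₀ n * ((S.mu y₀ n)⁻¹ * ‖S.wmap (S.orb y₀ n)‖)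
      = S.Pr y₀ n * (S.mu y₀ n * (S.mu y₀ n)⁻¹) * ‖S.wmap (S.orb y₀ n)‖ from by ring,
      mul_inv_cancel₀ (S.mu_pos y₀ n).ne', mul_one]
  rw [h1, Pr_succ, mu]
  rw [max_comm 1 _, mul_max_of_nonneg _ _ (S.Pr_pos y₀ n).le, mul_one]
  rw [max_comm]

lemma zz_le_Pr_all (hy₀ : ‖y₀‖ ≤ 1) {k n : ℕ} (hkn : k ≤ n) : ‖S.zz y₀ k‖ ≤ S.Pr y₀ n := by
  calc ‖S.zz y₀ k‖ ≤ S.Pr y₀ k := S.norm_zz_le_Pr y₀ hy₀ k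
    _ ≤ S.Pr y₀ n := S.Pr_mono y₀ hkn

-- coefficients of partial sums
lemma coeff_sum (s : Finset ℕ) (f : ℕ → X) (m : ℕ) :
    S.coeff (∑ i ∈ s, f i) m = ∑ i ∈ s, S.coeff (f i) m := by
  classical
  induction s using Finset.induction_on with
  | empty => simp [congrFun S.coeff_zero m]
  | insert a s ha ih =>
    rw [Finset.sum_insert ha, Finset.sum_insert ha, congrFun (S.coeff_add _ _) m, ih]

lemma ps_coeff (y : X) (N m : ℕ) :
    S.coeff (S.ps y N) m = if m < N then S.coeff y m else 0 := by
  rw [ps, coeff_sum]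
  have : ∀ n ∈ Finset.range N, S.coeff (S.coeff y n • S.x n) m
      = if m = n then S.coeff y n else 0 := by
    intro n _
    rw [congrFun (S.coeff_smul _ _) m, congrFun (S.coeff_basis n) m]
    by_cases h : m = n <;> simp [h]
  rw [Finset.sum_congr rfl this, Finset.sum_ite_eq (Finset.range N) m]
  by_cases h : m < N <;> simp [Finset.mem_range, h]

lemma drop_bound {k n : ℕ} (hkn : k ≤ n) :
    ‖S.zz y₀ k‖ ≤ (S.C * (1 + S.C)) * ‖S.zz y₀ n‖ := by
  set j := n - k with hj
  have hkey : S.sh^[j] (S.zz y₀ k) = S.zz y₀ n - S.ps (S.zz y₀ n) j := by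
    apply S.coeff_inj
    funext m
    rw [congrFun (S.sh_iter_coeff j (S.zz y₀ k)) m,
      congrFun (S.coeff_sub (S.zz y₀ n) (S.ps (S.zz y₀ n) j)) m,
      S.ps_coeff, coeff_zz, coeff_zz]
    by_cases hmj : m < j
    · simp only [hmj, if_true]
      have h1 : m < n := by omega
      simp [h1]
    · simp only [hmj, if_false]
      by_cases hmn : m < n
      · have h1 : m - j < k := by omega
        have h2 : k - 1 - (m - j) = n - 1 - m := by omega
        simp [h1, hmn, h2]
      · have h1 : ¬ (m - j < k) := by omega
        have h2 : m - j - k = m - n := by omega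
        simp [h1, hmn, h2]
  have hb1 : ‖S.zz y₀ k‖ ≤ S.C * ‖S.sh^[j] (S.zz y₀ k)‖ := S.norm_le_sh_iter j _
  rw [hkey] at hb1
  have hb2 : ‖S.zz y₀ n - S.ps (S.zz y₀ n) j‖ ≤ (1 + S.C) * ‖S.zz y₀ n‖ := by
    calc ‖S.zz y₀ n - S.ps (S.zz y₀ n) j‖
        ≤ ‖S.zz y₀ n‖ + ‖S.ps (S.zz y₀ n) j‖ := norm_sub_le _ _
      _ ≤ ‖S.zz y₀ n‖ + S.C * ‖S.zz y₀ n‖ := by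
          exact add_le_add_right (S.ps_norm_le _ _) _
      _ = (1 + S.C) * ‖S.zz y₀ n‖ := by ring
  calc ‖S.zz y₀ k‖ ≤ S.C * ‖S.zz y₀ n - S.ps (S.zz y₀ n) j‖ := hb1
    _ ≤ S.C * ((1 + S.C) * ‖S.zz y₀ n‖) := mul_le_mul_of_nonneg_left hb2 S.hC0.le
    _ = (S.C * (1 + S.C)) * ‖S.zz y₀ n‖ := by ring

end Orbit

end Setup
namespace Setup

variable {X : Type*} [NormedAddCommGroup X] [NormedSpace ℝ X] [CompleteSpace X] (S : Setup X)

section Orbit2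

variable (y₀ : X)

lemma Pr_attained (n : ℕ) :
    S.Pr y₀ n = 1 ∨ ∃ k, 1 ≤ k ∧ k ≤ n ∧ S.Pr y₀ n = ‖S.zz y₀ k‖ := by
  induction n with
  | zero => left; exact S.Pr_zero y₀
  | succ n ih =>
    rw [Pr_succ_max]
    rcases max_cases (S.Pr y₀ n) ‖S.zz y₀ (n+1)‖ with ⟨h1, _⟩ | ⟨h1, _⟩
    · rw [h1]
      rcases ih with h | ⟨k, hk1, hk2, hk3⟩
      · left; exact h
      · right; exact ⟨k, hk1, hk2.trans (Nat.le_succ n), hk3⟩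
    · right
      exact ⟨n+1, by omega, le_refl _, h1⟩

lemma bump_Pr_one {n : ℕ} (h : ‖S.orb y₀ n‖ < S.r0) : S.Pr y₀ n = 1 := by
  rcases S.Pr_attained y₀ n with h1 | ⟨k, hk1, hk2, hk3⟩
  · exact h1
  · exfalso
    have hd := S.drop_bound y₀ hk2
    rw [← hk3] at hd
    -- ‖orb n‖ = (Pr n)⁻¹ * ‖zz n‖
    have horb : ‖S.zz y₀ n‖ = S.Pr y₀ n * ‖S.orb y₀ n‖ := S.norm_zz_eq y₀ n
    have hCC : (0:ℝ) < S.C * (1 + S.C) := by nlinarith [S.hC0]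
    have h2 : S.Pr y₀ n ≤ (S.C * (1 + S.C)) * (S.Pr y₀ n * ‖S.orb y₀ n‖) := by
      rw [← horb]; exact hd
    have h3 : S.Pr y₀ n * 1 ≤ S.Pr y₀ n * ((S.C * (1 + S.C)) * ‖S.orb y₀ n‖) := by
      calc S.Pr y₀ n * 1 = S.Pr y₀ n := mul_one _
        _ ≤ (S.C * (1 + S.C)) * (S.Pr y₀ n * ‖S.orb y₀ n‖) := h2
        _ = S.Pr y₀ n * ((S.C * (1 + S.C)) * ‖S.orb y₀ n‖) := by ring
    have h4 : 1 ≤ (S.C * (1 + S.C)) * ‖S.orb y₀ n‖ :=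
      le_of_mul_le_mul_left h3 (S.Pr_pos y₀ n)
    have h5 : ‖S.orb y₀ n‖ < 1 / (2 * S.C * (1 + S.C)) := h
    have hC := S.hC0
    have h6 := mul_lt_mul_of_pos_left h5 hCC
    have h7 : S.C * (1 + S.C) * (1 / (2 * S.C * (1 + S.C))) = 1/2 := by
      field_simp
    linarith

lemma sN_le (n : ℕ) :
    S.hmap y₀ * ‖∑ m ∈ Finset.range n, S.x m‖ ≤ S.C * (S.C * ‖S.zz y₀ n‖) := by
  have h1 : ‖∑ m ∈ Finset.range n, S.hmap y₀ • S.x m‖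
      ≤ S.C * ‖∑ m ∈ Finset.range n, S.coeff (S.zz y₀ n) m • S.x m‖ := by
    refine S.dom (Finset.range n) _ _ (fun m hm => ?_)
    rw [coeff_zz]
    rw [Finset.mem_range] at hm
    rw [if_pos hm]
    have hle : S.hmap y₀ ≤ S.hh y₀ (n - 1 - m) := by
      rw [← S.hh_zero y₀]
      exact S.hh_mono y₀ (Nat.zero_le _)
    rw [abs_of_pos (S.hmap_pos y₀), abs_of_pos (S.hh_pos y₀ _)]
    exact hle
  have h2 : ‖∑ m ∈ Finset.range n, S.hmap y₀ • S.x m‖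
      = S.hmap y₀ * ‖∑ m ∈ Finset.range n, S.x m‖ := by
    rw [← Finset.smul_sum, norm_smul, Real.norm_eq_abs, abs_of_pos (S.hmap_pos y₀)]
  have h3 : ‖∑ m ∈ Finset.range n, S.coeff (S.zz y₀ n) m • S.x m‖ ≤ S.C * ‖S.zz y₀ n‖ :=
    S.ps_norm_le (S.zz y₀ n) n
  rw [h2] at h1
  calc S.hmap y₀ * ‖∑ m ∈ Finset.range n, S.x m‖
      ≤ S.C * ‖∑ m ∈ Finset.range n, S.coeff (S.zz y₀ n) m • S.x m‖ := h1
    _ ≤ S.C * (S.C * ‖S.zz y₀ n‖) := mul_le_mul_of_nonneg_left h3 S.hC0.le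

lemma Pr_tendsto (hy₀ : ‖y₀‖ ≤ 1) :
    Filter.Tendsto (S.Pr y₀) Filter.atTop Filter.atTop := by
  rw [Filter.tendsto_atTop]
  intro b
  have hpos := S.hmap_pos y₀
  obtain ⟨N, hN⟩ := S.sbig (max 1 (S.C * S.C * b / S.hmap y₀))
  have hN1 : 1 ≤ ‖∑ m ∈ Finset.range N, S.x m‖ := le_trans (le_max_left _ _) hN
  have hzzN : b ≤ ‖S.zz y₀ N‖ := by
    have h1 := S.sN_le y₀ N
    have h2 : S.hmap y₀ * (S.C * S.C * b / S.hmap y₀)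
        ≤ S.hmap y₀ * ‖∑ m ∈ Finset.range N, S.x m‖ :=
      mul_le_mul_of_nonneg_left (le_trans (le_max_right _ _) hN) hpos.le
    rw [mul_div_cancel₀ _ hpos.ne'] at h2
    have h3 : S.C * S.C * b ≤ S.C * S.C * ‖S.zz y₀ N‖ := by
      calc S.C * S.C * b ≤ S.hmap y₀ * ‖∑ m ∈ Finset.range N, S.x m‖ := h2
        _ ≤ S.C * (S.C * ‖S.zz y₀ N‖) := h1
        _ = S.C * S.C * ‖S.zz y₀ N‖ := by ring
    have hC2 : (0:ℝ) < S.C * S.C := by nlinarith [S.hC0]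
    exact le_of_mul_le_mul_left h3 hC2
  refine Filter.eventually_atTop.mpr ⟨N, fun n hn => ?_⟩
  calc b ≤ ‖S.zz y₀ N‖ := hzzN
    _ ≤ S.Pr y₀ n := S.zz_le_Pr_all y₀ hy₀ hn

lemma no_bump_freeze (hy₀ : ‖y₀‖ ≤ 1) :
    ∃ n₁ : ℕ, ∀ n, n₁ ≤ n → S.hh y₀ (n+1) = S.hh y₀ n := by
  have hev : ∀ᶠ n in Filter.atTop, (2:ℝ) ≤ S.Pr y₀ n :=
    (S.Pr_tendsto y₀ hy₀).eventually_ge_atTop 2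
  obtain ⟨n₁, hn₁⟩ := Filter.eventually_atTop.mp hev
  refine ⟨n₁, fun n hn => ?_⟩
  have key : ∀ m, n₁ ≤ m → S.hh y₀ m = S.nn y₀ m := by
    intro m hm
    have hP : (2:ℝ) ≤ S.Pr y₀ m := hn₁ m hm
    have hnb : ¬ (‖S.orb y₀ m‖ < S.r0) := by
      intro hb
      have := S.bump_Pr_one y₀ hb
      rw [this] at hP
      norm_num at hP
    push_neg at hnb
    have hmax : max 0 (S.r0 - ‖S.orb y₀ m‖) = 0 :=
      max_eq_left (by linarith)
    rw [hh, hmap, hmax, add_zero, nn, zz, S.nf_smul_pos (S.Pr_pos y₀ m)]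
  rw [key (n+1) (by omega), S.nn_succ y₀ n]

lemma dd_recur (n : ℕ) :
    S.dd y₀ (n+1) = (S.hh y₀ (n+1) - S.hh y₀ n) • S.x 0 + S.sh (S.dd y₀ n) := by
  rw [dd, dd, zz_succ, zz_succ, S.sh_sub]
  module

lemma dd_freeze {n₁ : ℕ} (hfr : ∀ n, n₁ ≤ n → S.hh y₀ (n+1) = S.hh y₀ n) :
    ∀ k : ℕ, S.dd y₀ (n₁ + k) = S.sh^[k] (S.dd y₀ n₁) := by
  intro k
  induction k with
  | zero => simp
  | succ k ih =>
    have h1 : n₁ + (k + 1) = (n₁ + k) + 1 := by omega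
    rw [h1, dd_recur, ih, hfr (n₁ + k) (by omega), sub_self, zero_smul, zero_add,
      Function.iterate_succ_apply']

lemma dd_bound {n₁ : ℕ} (hfr : ∀ n, n₁ ≤ n → S.hh y₀ (n+1) = S.hh y₀ n) :
    ∀ n, n₁ ≤ n → ‖S.dd y₀ n‖ ≤ S.C * ‖S.dd y₀ n₁‖ := by
  intro n hn
  have h1 : n = n₁ + (n - n₁) := by omega
  rw [h1, S.dd_freeze y₀ hfr (n - n₁)]
  exact S.sh_iter_norm_le _ _

lemma step_bound (hy₀ : ‖y₀‖ ≤ 1) (n : ℕ) :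
    ‖S.orb y₀ (n+1) - S.orb y₀ n‖ ≤ 2 * ‖S.dd y₀ n‖ / S.Pr y₀ n := by
  set P := S.Pr y₀ n with hP
  set Q := S.Pr y₀ (n+1) with hQ
  have hP1 : 1 ≤ P := S.Pr_ge1 y₀ n
  have hQ1 : 1 ≤ Q := S.Pr_ge1 y₀ (n+1)
  have hP0 : 0 < P := lt_of_lt_of_le one_pos hP1
  have hQ0 : 0 < Q := lt_of_lt_of_le one_pos hQ1
  have hPQ : P ≤ Q := S.Pr_mono y₀ (Nat.le_succ n)
  have hzP : ‖S.zz y₀ n‖ ≤ P := S.norm_zz_le_Pr y₀ hy₀ n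
  have hQP : Q - P ≤ ‖S.dd y₀ n‖ := by
    have h1 : Q = max P ‖S.zz y₀ (n+1)‖ := S.Pr_succ_max y₀ n
    have h2 : ‖S.zz y₀ (n+1)‖ ≤ ‖S.zz y₀ n‖ + ‖S.dd y₀ n‖ := by
      have : S.zz y₀ (n+1) = S.zz y₀ n + S.dd y₀ n := by rw [dd]; abel
      rw [this]
      exact norm_add_le _ _
    have h3 : Q ≤ P + ‖S.dd y₀ n‖ := by
      rw [h1]
      refine max_le (by linarith [norm_nonneg (S.dd y₀ n)]) ?_
      calc ‖S.zz y₀ (n+1)‖ ≤ ‖S.zz y₀ n‖ + ‖S.dd y₀ n‖ := h2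
        _ ≤ P + ‖S.dd y₀ n‖ := by linarith
    linarith
  have horb : S.orb y₀ n = P⁻¹ • S.zz y₀ n := by
    rw [hP, zz, smul_smul, inv_mul_cancel₀ (S.Pr_pos y₀ n).ne', one_smul]
  have horb1 : S.orb y₀ (n+1) = Q⁻¹ • S.zz y₀ (n+1) := by
    rw [hQ, zz, smul_smul, inv_mul_cancel₀ (S.Pr_pos y₀ (n+1)).ne', one_smul]
  have e : S.orb y₀ (n+1) - S.orb y₀ n
      = Q⁻¹ • S.dd y₀ n + (Q⁻¹ - P⁻¹) • S.zz y₀ n := by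
    rw [horb, horb1, dd]
    module
  rw [e]
  have t1 : ‖Q⁻¹ • S.dd y₀ n‖ ≤ ‖S.dd y₀ n‖ / P := by
    rw [norm_smul, Real.norm_eq_abs, abs_of_pos (inv_pos.mpr hQ0)]
    rw [div_eq_inv_mul]
    refine mul_le_mul_of_nonneg_right ?_ (norm_nonneg _)
    exact inv_anti₀ hP0 hPQ
  have t2 : ‖(Q⁻¹ - P⁻¹) • S.zz y₀ n‖ ≤ ‖S.dd y₀ n‖ / P := by
    rw [norm_smul, Real.norm_eq_abs]
    have habs : |Q⁻¹ - P⁻¹| = P⁻¹ - Q⁻¹ := by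
      rw [abs_sub_comm]
      exact abs_of_nonneg (by
        have := inv_anti₀ hP0 hPQ
        linarith)
    rw [habs]
    have key : (P⁻¹ - Q⁻¹) * ‖S.zz y₀ n‖ ≤ (P⁻¹ - Q⁻¹) * P := by
      refine mul_le_mul_of_nonneg_left hzP ?_
      have := inv_anti₀ hP0 hPQ
      linarith
    have key2 : (P⁻¹ - Q⁻¹) * P = (Q - P) / Q := by
      field_simp
    calc (P⁻¹ - Q⁻¹) * ‖S.zz y₀ n‖ ≤ (P⁻¹ - Q⁻¹) * P := key
      _ = (Q - P) / Q := key2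
      _ ≤ ‖S.dd y₀ n‖ / Q := by gcongr
      _ ≤ ‖S.dd y₀ n‖ / P := by gcongr
  calc ‖Q⁻¹ • S.dd y₀ n + (Q⁻¹ - P⁻¹) • S.zz y₀ n‖
      ≤ ‖Q⁻¹ • S.dd y₀ n‖ + ‖(Q⁻¹ - P⁻¹) • S.zz y₀ n‖ := norm_add_le _ _
    _ ≤ ‖S.dd y₀ n‖ / P + ‖S.dd y₀ n‖ / P := add_le_add t1 t2
    _ = 2 * ‖S.dd y₀ n‖ / P := by ring

end Orbit2

end Setup
namespace Setup

variable {X : Type*} [NormedAddCommGroup X] [NormedSpace ℝ X] [CompleteSpace X] (S : Setup X)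

lemma asreg (y₀ : X) (hy₀ : ‖y₀‖ ≤ 1) :
    Filter.Tendsto (fun n : ℕ => ‖S.tmap^[n + 1] y₀ - S.tmap^[n] y₀‖)
      Filter.atTop (nhds 0) := by
  obtain ⟨n₁, hfr⟩ := S.no_bump_freeze y₀ hy₀
  have heq : (fun n : ℕ => ‖S.tmap^[n + 1] y₀ - S.tmap^[n] y₀‖)
      = fun n : ℕ => ‖S.orb y₀ (n+1) - S.orb y₀ n‖ := rfl
  rw [heq]
  refine squeeze_zero' (g := fun n => 2 * (S.C * ‖S.dd y₀ n₁‖) / S.Pr y₀ n)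
    (Filter.Eventually.of_forall fun n => norm_nonneg _) ?_ ?_
  · refine Filter.eventually_atTop.mpr ⟨n₁, fun n hn => ?_⟩
    calc ‖S.orb y₀ (n+1) - S.orb y₀ n‖ ≤ 2 * ‖S.dd y₀ n‖ / S.Pr y₀ n :=
        S.step_bound y₀ hy₀ n
      _ ≤ 2 * (S.C * ‖S.dd y₀ n₁‖) / S.Pr y₀ n := by
          have h1 := S.dd_bound y₀ hfr n hn
          gcongr
          exact (S.Pr_pos y₀ n).le
  · exact Filter.Tendsto.div_atTop tendsto_const_nhds (S.Pr_tendsto y₀ hy₀)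

end Setup

theorem Setup.main {X : Type*} [NormedAddCommGroup X] [NormedSpace ℝ X] [CompleteSpace X]
    (S : Setup X) :
    ∃ T : X → X,
      Set.MapsTo T (Metric.closedBall (0 : X) 1) (Metric.closedBall (0 : X) 1) ∧
      (∀ y ∈ Metric.closedBall (0 : X) 1, T y ≠ y) ∧
      (∃ L : ℝ, 0 ≤ L ∧ ∀ y ∈ Metric.closedBall (0 : X) 1,
        ∀ z ∈ Metric.closedBall (0 : X) 1, ‖T y - T z‖ ≤ L * ‖y - z‖) ∧
      (∀ y ∈ Metric.closedBall (0 : X) 1,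
        Filter.Tendsto (fun n : ℕ => ‖T^[n + 1] y - T^[n] y‖) Filter.atTop (nhds 0)) := by
  refine ⟨S.tmap, ?_, ?_, ?_, ?_⟩
  · intro y _
    rw [Metric.mem_closedBall, dist_zero_right]
    exact S.tmap_norm_le y
  · intro y _
    exact S.tmap_ne y
  · refine ⟨2 * ((S.K + 1) * S.B + S.C), ?_, ?_⟩
    · have h1 := S.hK0
      have h2 := S.hB
      have h3 := S.hC0
      nlinarith
    · intro y _ z _
      exact S.tmap_lip y z
  · intro y hy
    rw [Metric.mem_closedBall, dist_zero_right] at hy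
    exact S.asreg y hy
/-- Let `X` be a real Banach space with a semi-normalized subsymmetric
Schauder basis and containing no subspace isomorphic to `c₀`.  Then there exists a
fixed-point-free Lipschitz asymptotically regular map `T : B_X → B_X`. -/
theorem statement5 {X : Type*} [NormedAddCommGroup X] [NormedSpace ℝ X] [CompleteSpace X]
    (x : ℕ → X)
    (hbasis : ∀ y : X, ∃! a : ℕ → ℝ,
      Filter.Tendsto (fun N : ℕ => ∑ i ∈ Finset.range N, a i • x i)
        Filter.atTop (nhds y))
    (hsemi : ∃ A B : ℝ, 0 < A ∧ 0 < B ∧ ∀ n : ℕ, A ≤ ‖x n‖ ∧ ‖x n‖ ≤ B)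
    (huncond : ∃ C : ℝ, 1 ≤ C ∧ ∀ (s : Finset ℕ) (a ε : ℕ → ℝ),
      (∀ n, ε n = 1 ∨ ε n = -1) →
      ‖∑ n ∈ s, (ε n * a n) • x n‖ ≤ C * ‖∑ n ∈ s, a n • x n‖)
    (hsub : ∃ C : ℝ, 1 ≤ C ∧ ∀ φ : ℕ → ℕ, StrictMono φ →
      ∀ (s : Finset ℕ) (a : ℕ → ℝ),
        C⁻¹ * ‖∑ n ∈ s, a n • x n‖ ≤ ‖∑ n ∈ s, a n • x (φ n)‖ ∧
        ‖∑ n ∈ s, a n • x (φ n)‖ ≤ C * ‖∑ n ∈ s, a n • x n‖)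
    (hnoc0 : ¬ ∃ (f : C₀(ℕ, ℝ) →L[ℝ] X) (c : ℝ), 0 < c ∧ ∀ u : C₀(ℕ, ℝ), c * ‖u‖ ≤ ‖f u‖) :
    ∃ T : X → X,
      Set.MapsTo T (Metric.closedBall (0 : X) 1) (Metric.closedBall (0 : X) 1) ∧
      (∀ y ∈ Metric.closedBall (0 : X) 1, T y ≠ y) ∧
      (∃ L : ℝ, 0 ≤ L ∧ ∀ y ∈ Metric.closedBall (0 : X) 1,
        ∀ z ∈ Metric.closedBall (0 : X) 1, ‖T y - T z‖ ≤ L * ‖y - z‖) ∧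
      (∀ y ∈ Metric.closedBall (0 : X) 1,
        Filter.Tendsto (fun n : ℕ => ‖T^[n + 1] y - T^[n] y‖) Filter.atTop (nhds 0)) := by
  classical
  obtain ⟨A, B, hA, hB, hAB⟩ := hsemi
  obtain ⟨Cu, hCu1, hCu⟩ := huncond
  obtain ⟨Cs, hCs1, hCs⟩ := hsub
  set C : ℝ := max Cu Cs with hCdef
  have hC1 : 1 ≤ C := le_trans hCu1 (le_max_left _ _)
  have hC0 : (0:ℝ) < C := lt_of_lt_of_le one_pos hC1
  have hCs0 : (0:ℝ) < Cs := lt_of_lt_of_le one_pos hCs1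
  have huC : ∀ (s : Finset ℕ) (a ε : ℕ → ℝ), (∀ n, ε n = 1 ∨ ε n = -1) →
      ‖∑ n ∈ s, (ε n * a n) • x n‖ ≤ C * ‖∑ n ∈ s, a n • x n‖ := by
    intro s a ε hε
    refine (hCu s a ε hε).trans ?_
    exact mul_le_mul_of_nonneg_right (le_max_left _ _) (norm_nonneg _)
  have hsubC : ∀ (j : ℕ) (s : Finset ℕ) (a : ℕ → ℝ),
      C⁻¹ * ‖∑ n ∈ s, a n • x n‖ ≤ ‖∑ n ∈ s, a n • x (n + j)‖ ∧
      ‖∑ n ∈ s, a n • x (n + j)‖ ≤ C * ‖∑ n ∈ s, a n • x n‖ := by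
    intro j s a
    have hmono : StrictMono (fun n : ℕ => n + j) := fun a b h => Nat.add_lt_add_right h j
    obtain ⟨h1, h2⟩ := hCs _ hmono s a
    constructor
    · refine le_trans ?_ h1
      refine mul_le_mul_of_nonneg_right ?_ (norm_nonneg _)
      exact inv_anti₀ hCs0 (le_max_right _ _)
    · refine h2.trans ?_
      exact mul_le_mul_of_nonneg_right (le_max_right _ _) (norm_nonneg _)
  -- the fundamental function is unbounded (else we embed c₀)
  have hsbig : ∀ R : ℝ, ∃ N : ℕ, R ≤ ‖∑ n ∈ Finset.range N, x n‖ := by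
    by_contra hcon
    push_neg at hcon
    obtain ⟨R, hR⟩ := hcon
    set M : ℝ := max R 1 with hMdef
    have hM0 : (0:ℝ) < M := lt_of_lt_of_le one_pos (le_max_right _ _)
    have hMb : ∀ N, ‖∑ n ∈ Finset.range N, x n‖ ≤ M :=
      fun N => le_trans (hR N).le (le_max_left _ _)
    have hfin : ∀ (s : Finset ℕ) (u : ℕ → ℝ) (t : ℝ), 0 ≤ t → (∀ n ∈ s, |u n| ≤ t) →
        ‖∑ n ∈ s, u n • x n‖ ≤ C * C * M * t := by
      intro s u t ht hu
      obtain ⟨N, hsN⟩ := s.exists_nat_subset_range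
      have h1 : ‖∑ n ∈ s, u n • x n‖ ≤ C * ‖∑ n ∈ s, t • x n‖ := by
        refine dom_le x huC s u (fun _ => t) (fun n hn => ?_)
        rw [abs_of_nonneg ht]
        exact hu n hn
      have h2 : ‖∑ n ∈ s, t • x n‖ = t * ‖∑ n ∈ s, x n‖ := by
        rw [← Finset.smul_sum, norm_smul, Real.norm_eq_abs, abs_of_nonneg ht]
      have h3 : ‖∑ n ∈ s, x n‖ ≤ C * M := by
        have h4 : ∑ n ∈ s, x n = ∑ n ∈ s, (1:ℝ) • x n := by simp
        have h5 : ∑ n ∈ Finset.range N, x n = ∑ n ∈ Finset.range N, (1:ℝ) • x n := by simp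
        rw [h4]
        calc ‖∑ n ∈ s, (1:ℝ) • x n‖ ≤ C * ‖∑ n ∈ Finset.range N, (1:ℝ) • x n‖ :=
            subset_le x hC0.le huC hsN _
          _ = C * ‖∑ n ∈ Finset.range N, x n‖ := by rw [← h5]
          _ ≤ C * M := mul_le_mul_of_nonneg_left (hMb N) hC0.le
      calc ‖∑ n ∈ s, u n • x n‖ ≤ C * ‖∑ n ∈ s, t • x n‖ := h1
        _ = C * (t * ‖∑ n ∈ s, x n‖) := by rw [h2]
        _ ≤ C * (t * (C * M)) := by
            refine mul_le_mul_of_nonneg_left ?_ hC0.le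
            exact mul_le_mul_of_nonneg_left h3 ht
        _ = C * C * M * t := by ring
    have hu0 : ∀ u : C₀(ℕ, ℝ), Filter.Tendsto (fun n => u n) Filter.atTop (nhds 0) := by
      intro u
      have h := ZeroAtInftyContinuousMapClass.zero_at_infty u
      rwa [cocompact_eq_cofinite, Nat.cofinite_eq_atTop] at h
    have hcoord : ∀ (u : C₀(ℕ, ℝ)) (n : ℕ), |u n| ≤ ‖u‖ := by
      intro u n
      have h := BoundedContinuousFunction.norm_coe_le_norm u.toBCF n
      rw [ZeroAtInftyContinuousMap.norm_toBCF_eq_norm] at h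
      simpa [Real.norm_eq_abs] using h
    have hcauchy : ∀ u : C₀(ℕ, ℝ),
        CauchySeq (fun N => ∑ n ∈ Finset.range N, u n • x n) := by
      intro u
      rw [Metric.cauchySeq_iff]
      intro ε hε
      have hδ : (0:ℝ) < ε / (C * C * M + 1) := by positivity
      obtain ⟨N₀, hN₀⟩ := Metric.tendsto_atTop.mp (hu0 u) _ hδ
      have key : ∀ p q : ℕ, N₀ ≤ p → p ≤ q →
          dist (∑ n ∈ Finset.range q, u n • x n) (∑ n ∈ Finset.range p, u n • x n) < ε := by
        intro p q hp hpq
        rw [dist_eq_norm, ← Finset.sum_Ico_eq_sub _ hpq]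
        have h1 : ‖∑ n ∈ Finset.Ico p q, u n • x n‖ ≤ C * C * M * (ε / (C * C * M + 1)) := by
          refine hfin _ u _ hδ.le (fun n hn => ?_)
          have hnp : N₀ ≤ n := le_trans hp (Finset.mem_Ico.mp hn).1
          have := hN₀ n hnp
          rw [Real.dist_eq, sub_zero] at this
          exact this.le
        refine lt_of_le_of_lt h1 ?_
        have hCCM : (0:ℝ) < C * C * M + 1 := by positivity
        have h2 : C * C * M * (ε / (C * C * M + 1))
            < (C * C * M + 1) * (ε / (C * C * M + 1)) := by
          refine mul_lt_mul_of_pos_right (by linarith) hδ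
        have h3 : (C * C * M + 1) * (ε / (C * C * M + 1)) = ε := by
          field_simp
        linarith
      refine ⟨N₀, fun m hm n hn => ?_⟩
      rcases le_total n m with hnm | hmn
      · exact key n m hn hnm
      · rw [dist_comm]; exact key m n hm hmn
    choose g hg using fun u : C₀(ℕ, ℝ) => cauchySeq_tendsto_of_complete (hcauchy u)
    have hg_add : ∀ u v : C₀(ℕ, ℝ), g (u + v) = g u + g v := by
      intro u v
      refine tendsto_nhds_unique (hg (u + v))
        (Filter.Tendsto.congr (fun N => ?_) ((hg u).add (hg v)))
      rw [← Finset.sum_add_distrib]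
      refine Finset.sum_congr rfl fun n _ => ?_
      simp [add_smul]
    have hg_smul : ∀ (c : ℝ) (u : C₀(ℕ, ℝ)), g (c • u) = c • g u := by
      intro c u
      refine tendsto_nhds_unique (hg (c • u))
        (Filter.Tendsto.congr (fun N => ?_) ((hg u).const_smul c))
      rw [Finset.smul_sum]
      refine Finset.sum_congr rfl fun n _ => ?_
      rw [smul_smul]
      simp
    have hg_bound : ∀ u : C₀(ℕ, ℝ), ‖g u‖ ≤ C * C * M * ‖u‖ := by
      intro u
      refine le_of_tendsto (hg u).norm (Filter.Eventually.of_forall fun N => ?_)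
      exact hfin _ u ‖u‖ (norm_nonneg u) (fun n _ => hcoord u n)
    have hg_low : ∀ (u : C₀(ℕ, ℝ)) (n : ℕ), A * |u n| ≤ C * ‖g u‖ := by
      intro u n
      have h1 : ‖u n • x n‖ ≤ C * ‖g u‖ := by
        refine ge_of_tendsto ((hg u).norm.const_mul C) ?_
        refine Filter.eventually_atTop.mpr ⟨n + 1, fun N hN => ?_⟩
        have hsub' : ({n} : Finset ℕ) ⊆ Finset.range N := by
          simp [Finset.singleton_subset_iff, Finset.mem_range]
          omega
        have := subset_le x hC0.le huC hsub' (fun k => u k)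
        simpa using this
      have h2 : A * |u n| ≤ ‖u n • x n‖ := by
        rw [norm_smul, Real.norm_eq_abs]
        calc A * |u n| = |u n| * A := by ring
          _ ≤ |u n| * ‖x n‖ := mul_le_mul_of_nonneg_left (hAB n).1 (abs_nonneg _)
      exact h2.trans h1
    let flin : C₀(ℕ, ℝ) →ₗ[ℝ] X :=
      { toFun := g
        map_add' := hg_add
        map_smul' := hg_smul }
    let f : C₀(ℕ, ℝ) →L[ℝ] X :=
      LinearMap.mkContinuous flin (C * C * M) hg_bound
    refine hnoc0 ⟨f, A / C, by positivity, fun u => ?_⟩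
    have hfu : f u = g u := rfl
    rw [hfu]
    have hnorm_le : ‖u‖ ≤ (C / A) * ‖g u‖ := by
      have h0 : ‖u‖ = ‖u.toBCF‖ := ZeroAtInftyContinuousMap.norm_toBCF_eq_norm.symm
      rw [h0]
      rw [BoundedContinuousFunction.norm_le (by positivity)]
      intro n
      have hbc : ‖u.toBCF n‖ = |u n| := by simp [Real.norm_eq_abs]
      rw [hbc]
      have := hg_low u n
      rw [div_mul_eq_mul_div, le_div_iff₀ hA]
      calc |u n| * A = A * |u n| := by ring
        _ ≤ C * ‖g u‖ := this
    calc A / C * ‖u‖ ≤ A / C * ((C / A) * ‖g u‖) := by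
          refine mul_le_mul_of_nonneg_left hnorm_le (by positivity)
      _ = ‖g u‖ := by
          field_simp
  -- assemble the Setup and conclude
  let S : Setup X :=
    { x := x
      coeff := fun y => (hbasis y).choose
      C := C
      A := A
      B := B
      hC := hC1
      hA := hA
      hB := hB
      hxA := fun n => (hAB n).1
      hxB := fun n => (hAB n).2
      expand := fun y => (hbasis y).choose_spec.1
      unique := fun y a h => (hbasis y).choose_spec.2 a h
      uncond := huC
      subsym := hsubC
      sbig := hsbig }
  exact S.main
end

section
/- Let X be a real Banach space and let K ⊆ B_X be a nonempty bounded closed convex set that is a Lipschitz retract of B_X. (i) If there exists a uniformly Lipschitz fixed-point-free map F : K → K with d(F,K) = 0, then there exists a uniformly Lipschitz fixed-point-free map T : B_X → B_X with d(T,B_X) = 0. (ii) If there exists a Lipschitz fixed-point-free map F : K → K with d(F,K) = 0, then for every ε ∈ (0,1) there exists a (1+ε)-Lipschitz fixed-point-free map T : B_X → B_X with d(T,B_X) = 0. -/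
open Metric Set Filter Topology

private lemma sInf_eq_zero_aux (s : Set ℝ) (hnn : ∀ a ∈ s, 0 ≤ a)
    (h : ∀ η : ℝ, 0 < η → ∃ a ∈ s, a < η) : sInf s = 0 := by
  have hbdd : BddBelow s := ⟨0, fun a ha => hnn a ha⟩
  have hne : s.Nonempty := by
    obtain ⟨a, ha, _⟩ := h 1 one_pos
    exact ⟨a, ha⟩
  have h1 : sInf s ≤ 0 := by
    by_contra hc
    push_neg at hc
    obtain ⟨a, has, hlt⟩ := h (sInf s) hc
    exact absurd (csInf_le hbdd has) (not_le.mpr hlt)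
  have h2 : 0 ≤ sInf s := le_csInf hne hnn
  linarith

/-- Let `K ⊆ B_X` be a nonempty bounded closed convex Lipschitz retract of
`B_X` in a real Banach space `X`.  (i) If `K` admits a uniformly Lipschitz fixed-point-free
self-map with null minimal displacement, so does `B_X`.  (ii) If `K` admits a Lipschitz
fixed-point-free self-map with null minimal displacement, then for every `ε ∈ (0,1)` the ball
`B_X` admits a `(1+ε)`-Lipschitz fixed-point-free self-map with null minimal displacement. -/
theorem statement8 {X : Type*} [NormedAddCommGroup X] [NormedSpace ℝ X] [CompleteSpace X]
    (K : Set X) (hKne : K.Nonempty) (hKb : Bornology.IsBounded K) (hKcl : IsClosed K)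
    (hKcv : Convex ℝ K) (hKB : K ⊆ Metric.closedBall (0 : X) 1)
    (hretr : ∃ R : X → X, Set.MapsTo R (Metric.closedBall (0 : X) 1) K ∧
      (∀ y ∈ K, R y = y) ∧
      ∃ L : ℝ, 0 ≤ L ∧ ∀ y ∈ Metric.closedBall (0 : X) 1,
        ∀ z ∈ Metric.closedBall (0 : X) 1, ‖R y - R z‖ ≤ L * ‖y - z‖) :
    ((∃ F : X → X, Set.MapsTo F K K ∧ (∀ y ∈ K, F y ≠ y) ∧
        (∃ L : ℝ, 0 ≤ L ∧ ∀ n : ℕ, ∀ y ∈ K, ∀ z ∈ K,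
          ‖F^[n] y - F^[n] z‖ ≤ L * ‖y - z‖) ∧
        sInf ((fun y => ‖y - F y‖) '' K) = 0) →
      ∃ T : X → X,
        Set.MapsTo T (Metric.closedBall (0 : X) 1) (Metric.closedBall (0 : X) 1) ∧
        (∀ y ∈ Metric.closedBall (0 : X) 1, T y ≠ y) ∧
        (∃ L : ℝ, 0 ≤ L ∧ ∀ n : ℕ, ∀ y ∈ Metric.closedBall (0 : X) 1,
          ∀ z ∈ Metric.closedBall (0 : X) 1, ‖T^[n] y - T^[n] z‖ ≤ L * ‖y - z‖) ∧
        sInf ((fun y => ‖y - T y‖) '' Metric.closedBall (0 : X) 1) = 0) ∧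
    ((∃ F : X → X, Set.MapsTo F K K ∧ (∀ y ∈ K, F y ≠ y) ∧
        (∃ L : ℝ, 0 ≤ L ∧ ∀ y ∈ K, ∀ z ∈ K, ‖F y - F z‖ ≤ L * ‖y - z‖) ∧
        sInf ((fun y => ‖y - F y‖) '' K) = 0) →
      ∀ ε : ℝ, ε ∈ Set.Ioo (0 : ℝ) 1 →
        ∃ T : X → X,
          Set.MapsTo T (Metric.closedBall (0 : X) 1) (Metric.closedBall (0 : X) 1) ∧
          (∀ y ∈ Metric.closedBall (0 : X) 1, T y ≠ y) ∧
          (∀ y ∈ Metric.closedBall (0 : X) 1, ∀ z ∈ Metric.closedBall (0 : X) 1,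
            ‖T y - T z‖ ≤ (1 + ε) * ‖y - z‖) ∧
          sInf ((fun y => ‖y - T y‖) '' Metric.closedBall (0 : X) 1) = 0) := by
  obtain ⟨R, hRmaps, hRfix, LR, hLR0, hRlip⟩ := hretr
  constructor
  · -- Part (i): T = F ∘ R
    rintro ⟨F, hFK, hFfree, ⟨LF, hLF0, hLF⟩, hsInf⟩
    refine ⟨fun y => F (R y), ?_, ?_, ?_, ?_⟩
    · intro y hy
      exact hKB (hFK (hRmaps hy))
    · intro y hy heq
      have hyK : y ∈ K := heq ▸ hFK (hRmaps hy)
      have hRy : R y = y := hRfix y hyK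
      have heq' : F (R y) = y := heq
      rw [hRy] at heq'
      exact hFfree y hyK heq'
    · refine ⟨max 1 (LF * LF * LR), le_trans zero_le_one (le_max_left _ _), ?_⟩
      have hiter : ∀ n : ℕ, ∀ y ∈ closedBall (0:X) 1,
          (fun y => F (R y))^[n+1] y = F^[n] (F (R y)) := by
        intro n
        induction n with
        | zero => intro y hy; simp
        | succ n ih =>
          intro y hy
          have hmem : F^[n] (F (R y)) ∈ K := (hFK.iterate n) (hFK (hRmaps hy))
          rw [Function.iterate_succ_apply' (fun y => F (R y)) (n+1), ih y hy]
          show F (R (F^[n] (F (R y)))) = _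
          rw [hRfix _ hmem, ← Function.iterate_succ_apply' F n]
      intro n y hy z hz
      cases n with
      | zero =>
        simpa using le_mul_of_one_le_left (norm_nonneg _) (le_max_left 1 (LF * LF * LR))
      | succ n =>
        rw [hiter n y hy, hiter n z hz]
        have h1 : ‖F^[n] (F (R y)) - F^[n] (F (R z))‖ ≤ LF * ‖F (R y) - F (R z)‖ :=
          hLF n _ (hFK (hRmaps hy)) _ (hFK (hRmaps hz))
        have h2 : ‖F (R y) - F (R z)‖ ≤ LF * ‖R y - R z‖ := by
          have := hLF 1 (R y) (hRmaps hy) (R z) (hRmaps hz)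
          simpa using this
        have h3 : ‖R y - R z‖ ≤ LR * ‖y - z‖ := hRlip y hy z hz
        have h4 : LF * LF * LR ≤ max 1 (LF * LF * LR) := le_max_right _ _
        nlinarith [norm_nonneg (y - z), norm_nonneg (R y - R z),
          norm_nonneg (F (R y) - F (R z))]
    · apply sInf_eq_zero_aux
      · rintro a ⟨y, hy, rfl⟩; exact norm_nonneg _
      · intro η hη
        have hne : ((fun y => ‖y - F y‖) '' K).Nonempty := hKne.image _
        obtain ⟨b, ⟨y, hyK, rfl⟩, hb⟩ :=
          exists_lt_of_csInf_lt hne (by rw [hsInf]; exact hη)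
        exact ⟨‖y - F (R y)‖, ⟨y, hKB hyK, rfl⟩, by rwa [hRfix y hyK]⟩
  · -- Part (ii): T y = y + λ • (F (R y) - y)
    rintro ⟨F, hFK, hFfree, ⟨LF, hLF0, hLF⟩, hsInf⟩ ε ⟨hε0, hε1⟩
    set lam := min 1 (ε / (LF * LR + 1)) with hlamdef
    have hden : (0:ℝ) < LF * LR + 1 := by positivity
    have hlampos : 0 < lam := lt_min one_pos (div_pos hε0 hden)
    have hlam1 : lam ≤ 1 := min_le_left _ _
    have hkey : lam * (LF * LR) ≤ ε := by
      have h1 : lam ≤ ε / (LF * LR + 1) := min_le_right _ _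
      have h2 : lam * (LF * LR + 1) ≤ ε := (le_div_iff₀ hden).mp h1
      nlinarith [hlampos.le]
    have hrw : ∀ y a : X, y + lam • (a - y) = (1 - lam) • y + lam • a := by
      intro y a
      rw [smul_sub, sub_smul, one_smul]
      abel
    refine ⟨fun y => y + lam • (F (R y) - y), ?_, ?_, ?_, ?_⟩
    · intro y hy
      show y + lam • (F (R y) - y) ∈ closedBall (0:X) 1
      rw [hrw]
      exact (convex_closedBall (0:X) 1) hy (hKB (hFK (hRmaps hy)))
        (by linarith) hlampos.le (by ring)
    · intro y hy heq
      have heq' : y + lam • (F (R y) - y) = y := heq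
      have h0 : lam • (F (R y) - y) = 0 := by
        have := heq'
        rwa [add_eq_left] at this
      have hFy : F (R y) = y := by
        rcases smul_eq_zero.mp h0 with h | h
        · exact absurd h (ne_of_gt hlampos)
        · exact sub_eq_zero.mp h
      have hyK : y ∈ K := hFy ▸ hFK (hRmaps hy)
      have hRy : R y = y := hRfix y hyK
      exact hFfree y hyK (by rwa [hRy] at hFy)
    · intro y hy z hz
      have hdiff : (y + lam • (F (R y) - y)) - (z + lam • (F (R z) - z))
          = (1 - lam) • (y - z) + lam • (F (R y) - F (R z)) := by
        module
      show ‖(y + lam • (F (R y) - y)) - (z + lam • (F (R z) - z))‖ ≤ (1 + ε) * ‖y - z‖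
      rw [hdiff]
      have h1 : ‖(1 - lam) • (y - z) + lam • (F (R y) - F (R z))‖
          ≤ (1 - lam) * ‖y - z‖ + lam * ‖F (R y) - F (R z)‖ := by
        refine le_trans (norm_add_le _ _) ?_
        rw [norm_smul, norm_smul, Real.norm_of_nonneg (by linarith : (0:ℝ) ≤ 1 - lam),
          Real.norm_of_nonneg hlampos.le]
      have h2 : ‖F (R y) - F (R z)‖ ≤ LF * ‖R y - R z‖ :=
        hLF (R y) (hRmaps hy) (R z) (hRmaps hz)
      have h3 : ‖R y - R z‖ ≤ LR * ‖y - z‖ := hRlip y hy z hz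
      have h4 : ‖F (R y) - F (R z)‖ ≤ LF * LR * ‖y - z‖ := by
        nlinarith [norm_nonneg (R y - R z)]
      have h5 : lam * ‖F (R y) - F (R z)‖ ≤ lam * (LF * LR * ‖y - z‖) :=
        mul_le_mul_of_nonneg_left h4 hlampos.le
      have h6 : lam * (LF * LR) * ‖y - z‖ ≤ ε * ‖y - z‖ :=
        mul_le_mul_of_nonneg_right hkey (norm_nonneg _)
      nlinarith [norm_nonneg (y - z), hlampos.le]
    · apply sInf_eq_zero_aux
      · rintro a ⟨y, hy, rfl⟩; exact norm_nonneg _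
      · intro η hη
        have hne : ((fun y => ‖y - F y‖) '' K).Nonempty := hKne.image _
        obtain ⟨b, ⟨y, hyK, rfl⟩, hb⟩ :=
          exists_lt_of_csInf_lt hne (by rw [hsInf]; exact hη)
        refine ⟨‖y - (y + lam • (F (R y) - y))‖, ⟨y, hKB hyK, rfl⟩, ?_⟩
        have : y - (y + lam • (F (R y) - y)) = -(lam • (F (R y) - y)) := by abel
        rw [this, norm_neg, norm_smul, Real.norm_of_nonneg hlampos.le, hRfix y hyK]
        calc lam * ‖F y - y‖ ≤ 1 * ‖F y - y‖ :=
              mul_le_mul_of_nonneg_right hlam1 (norm_nonneg _)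
          _ = ‖y - F y‖ := by rw [one_mul, norm_sub_rev]
          _ < η := hb
end

section
/- Let X be a real Banach space containing an isomorphic copy of c₀. Then for every ε ∈ (0,1) there exist a nonempty bounded closed convex set K ⊆ X and a fixed-point-free map F : K → K that is uniformly asymptotically regular and uniformly (1+ε)-Lipschitz, i.e. ‖Fⁿ x − Fⁿ y‖ ≤ (1+ε)‖x − y‖ for all x, y ∈ K and all n ∈ ℕ. -/
open Metric Set Filter Topology
open scoped ZeroAtInfty

section Stmt9Aux
open Finset




/-! Binomial estimates -/

lemma cb_sq_bound : ∀ m : ℕ, (Nat.centralBinom m)^2 * (2*m+1) ≤ 16^m := by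
  intro m
  induction m with
  | zero => simp [Nat.centralBinom]
  | succ m ih =>
    have key : (m+1) * Nat.centralBinom (m+1) = 2*(2*m+1) * Nat.centralBinom m :=
      Nat.succ_mul_centralBinom_succ m
    have h1 : ((m+1) * Nat.centralBinom (m+1))^2 * (2*(m+1)+1)
        = (m+1)^2 * ((Nat.centralBinom (m+1))^2 * (2*(m+1)+1)) := by ring
    have h2 : ((2*(2*m+1)) * Nat.centralBinom m)^2 * (2*(m+1)+1)
        = (4*(2*m+1)*(2*m+3)) * ((Nat.centralBinom m)^2 * (2*m+1)) := by ring
    have h3 : (4*(2*m+1)*(2*m+3)) * ((Nat.centralBinom m)^2 * (2*m+1))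
        ≤ (4*(2*m+2)^2) * 16^m := by
      have : (4*(2*m+1)*(2*m+3)) ≤ 4*(2*m+2)^2 := by nlinarith
      exact Nat.mul_le_mul this ih
    have h4 : (m+1)^2 * ((Nat.centralBinom (m+1))^2 * (2*(m+1)+1)) ≤ (m+1)^2 * 16^(m+1) := by
      rw [← h1, key, h2]
      calc (4*(2*m+1)*(2*m+3)) * ((Nat.centralBinom m)^2 * (2*m+1))
          ≤ (4*(2*m+2)^2) * 16^m := h3
        _ = (m+1)^2 * 16^(m+1) := by ring
    exact Nat.le_of_mul_le_mul_left h4 (Nat.pos_of_ne_zero (by positivity))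

lemma middle_sq_bound (n : ℕ) : ((n.choose (n/2) : ℝ) / 2^n)^2 * n ≤ 1 := by
  rcases Nat.even_or_odd n with ⟨m, hm⟩ | ⟨m, hm⟩
  · subst hm
    have h2 : (m+m)/2 = m := by omega
    rw [h2]
    have hcb : (m+m).choose m = Nat.centralBinom m := by
      rw [Nat.centralBinom]; congr 1; omega
    have hbR : ((Nat.centralBinom m : ℝ))^2 * (2*m+1) ≤ 16^m := by exact_mod_cast cb_sq_bound m
    rw [div_pow, div_mul_eq_mul_div, div_le_one (by positivity)]
    have h16 : ((2:ℝ)^(m+m))^2 = (16:ℝ)^m := by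
      rw [show (16:ℝ) = 2^4 by norm_num, ← pow_mul, ← pow_mul]; congr 1; ring
    rw [h16, hcb]
    have hcast : ((m+m : ℕ) : ℝ) = 2*m := by push_cast; ring
    rw [hcast]
    nlinarith [sq_nonneg ((Nat.centralBinom m : ℝ))]
  · subst hm
    have h2 : (2*m+1)/2 = m := by omega
    rw [h2]
    have hch : (2*m+1).choose m ≤ 2 * Nat.centralBinom m := by
      rcases Nat.eq_zero_or_pos m with rfl | hm0
      · simp [Nat.centralBinom]
      · have : (2*m+1).choose m = (2*m).choose (m-1) + (2*m).choose m := by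
          have hm1 : m = (m-1)+1 := by omega
          rw [hm1]
          rw [show 2*((m-1)+1)+1 = (2*(m-1)+2)+1 by ring]
          rw [Nat.choose_succ_succ]
          congr 2 <;> omega
        rw [this, Nat.centralBinom]
        have : (2*m).choose (m-1) ≤ (2*m).choose m := by
          have h := Nat.choose_le_middle (m-1) (2*m)
          simpa [show (2*m)/2 = m by omega] using h
        omega
    have hb := cb_sq_bound m
    have hbR : ((Nat.centralBinom m : ℝ))^2 * (2*m+1) ≤ 16^m := by exact_mod_cast hb
    rw [div_pow, div_mul_eq_mul_div, div_le_one (by positivity)]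
    have h16 : ((2:ℝ)^(2*m+1))^2 = 4 * (16:ℝ)^m := by
      rw [show (16:ℝ) = 2^4 by norm_num, ← pow_mul, ← pow_mul]
      rw [show (4:ℝ) = 2^2 by norm_num, ← pow_add]
      congr 1; ring
    rw [h16]
    have hchR : ((2*m+1).choose m : ℝ) ≤ 2 * (Nat.centralBinom m : ℝ) := by exact_mod_cast hch
    have hnn : (0:ℝ) ≤ ((2*m+1).choose m : ℝ) := by positivity
    calc ((2*m+1).choose m : ℝ)^2 * ((2*m+1 : ℕ) : ℝ)
        ≤ (2 * (Nat.centralBinom m : ℝ))^2 * ((2*m+1 : ℕ) : ℝ) := by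
          apply mul_le_mul_of_nonneg_right _ (by positivity)
          exact pow_le_pow_left₀ hnn hchR 2
      _ = 4 * (((Nat.centralBinom m : ℝ))^2 * (2*m+1)) := by push_cast; ring
      _ ≤ 4 * 16^m := by nlinarith
      _ = 4 * (16:ℝ)^m := by ring
lemma choose_succ_le_of_half_le {n j : ℕ} (h : n/2 ≤ j) : n.choose (j+1) ≤ n.choose j := by
  rcases le_or_gt n j with hnj | hnj
  · rw [Nat.choose_eq_zero_of_lt (by omega)]; exact Nat.zero_le _
  · rcases eq_or_lt_of_le h with heq | hlt
    · rw [← heq]; exact Nat.choose_le_middle _ _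
    · have h1 : n.choose (j+1) = n.choose (n-(j+1)) := (Nat.choose_symm (by omega)).symm
      have h2 : n.choose j = n.choose (n-j) := (Nat.choose_symm (by omega)).symm
      rw [h1, h2]
      have h3 : n-(j+1) < n/2 := by omega
      have h4 : n-(j+1)+1 = n-j := by omega
      have := Nat.choose_le_succ_of_lt_half_left h3
      rwa [h4] at this

/-- the sum of absolute differences of the binomial row is twice the middle value -/
lemma delta_sum_le (n : ℕ) :
    ∑ j ∈ range (n+2), |(if j = 0 then (0:ℝ) else (n.choose (j-1) : ℝ)) - (n.choose j : ℝ)|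
      ≤ 2 * (n.choose (n/2) : ℝ) := by
  set h := n/2 with hh
  set g : ℕ → ℝ := fun j => if j = 0 then (0:ℝ) else (n.choose (j-1) : ℝ) with hg
  have hgsucc : ∀ j : ℕ, g (j+1) = (n.choose j : ℝ) := by intro j; simp [hg]
  have hsplit : range (n+2) = Finset.Ico 0 (h+1) ∪ Finset.Ico (h+1) (n+2) := by
    rw [Finset.range_eq_Ico, Finset.Ico_union_Ico_eq_Ico (by omega) (by omega)]
  rw [hsplit, Finset.sum_union (by
    apply Finset.Ico_disjoint_Ico_consecutive)]
  have part1 : ∑ j ∈ Finset.Ico 0 (h+1), |g j - (n.choose j : ℝ)| = (n.choose h : ℝ) := by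
    rw [← Finset.range_eq_Ico]
    have : ∀ j ∈ range (h+1), |g j - (n.choose j : ℝ)| = g (j+1) - g j := by
      intro j hj
      simp only [Finset.mem_range] at hj
      rw [hgsucc, abs_sub_comm, abs_of_nonneg]
      rcases Nat.eq_zero_or_pos j with rfl | hj0
      · simp [hg]
      · simp only [hg, if_neg (by omega : ¬ j = 0)]
        have : n.choose (j-1) ≤ n.choose j := by
          have h3 : j - 1 < n/2 := by omega
          have := Nat.choose_le_succ_of_lt_half_left h3
          rwa [show j-1+1 = j by omega] at this
        simp only [sub_nonneg]
        exact_mod_cast this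
    rw [Finset.sum_congr rfl this, Finset.sum_range_sub g (h+1), hgsucc]
    simp [hg]
  have part2 : ∑ j ∈ Finset.Ico (h+1) (n+2), |g j - (n.choose j : ℝ)| ≤ (n.choose h : ℝ) := by
    have hterm : ∀ j ∈ Finset.Ico (h+1) (n+2), |g j - (n.choose j : ℝ)| = g j - g (j+1) := by
      intro j hj
      simp only [Finset.mem_Ico] at hj
      rw [hgsucc, abs_of_nonneg]
      obtain ⟨hj1, hj2⟩ := hj
      have : n.choose j ≤ n.choose (j-1) := by
        have := choose_succ_le_of_half_le (n := n) (j := j-1) (by omega)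
        rwa [show j-1+1 = j by omega] at this
      simp only [hg, if_neg (by omega : ¬ j = 0), sub_nonneg]
      exact_mod_cast this
    rw [Finset.sum_congr rfl hterm]
    rw [Finset.sum_Ico_eq_sum_range]
    have hrw : (∑ i ∈ range (n+2-(h+1)), (g (h+1+i) - g (h+1+i+1)))
        = g (h+1+0) - g (h+1+(n+2-(h+1))) := Finset.sum_range_sub' (fun i => g (h+1+i)) _
    rw [hrw]
    have h1 : g (h+1+0) = (n.choose h : ℝ) := by rw [show h+1+0 = h+1 by ring, hgsucc]
    rw [h1]
    have h0 : 0 ≤ g (h+1+(n+2-(h+1))) := by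
      simp only [hg]; split
      · exact le_refl _
      · positivity
    linarith
  rw [show (fun j => if j = 0 then (0:ℝ) else (n.choose (j-1):ℝ)) = g from rfl] at *
  calc ∑ j ∈ Finset.Ico 0 (h+1), |g j - (n.choose j : ℝ)|
        + ∑ j ∈ Finset.Ico (h+1) (n+2), |g j - (n.choose j : ℝ)|
      ≤ (n.choose h : ℝ) + (n.choose h : ℝ) := by rw [part1]; linarith
    _ = 2 * (n.choose h : ℝ) := by ring



namespace Stmt9

/-! ### c₀ basics -/

noncomputable def mk0 (u : ℕ → ℝ) (hu : Tendsto u atTop (𝓝 0)) : C₀(ℕ, ℝ) :=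
  ⟨⟨u, continuous_of_discreteTopology⟩, by rwa [cocompact_eq_atTop]⟩

@[simp] lemma mk0_apply (u : ℕ → ℝ) (hu) (m : ℕ) : mk0 u hu m = u m := rfl

lemma c0_tendsto (t : C₀(ℕ, ℝ)) : Tendsto (fun m => t m) atTop (𝓝 0) := by
  have := t.zero_at_infty'
  rwa [cocompact_eq_atTop] at this

lemma coord_le_norm (t : C₀(ℕ, ℝ)) (m : ℕ) : |t m| ≤ ‖t‖ := by
  have : ‖t.toBCF m‖ ≤ ‖t.toBCF‖ := BoundedContinuousFunction.norm_coe_le_norm _ _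
  simpa [ZeroAtInftyContinuousMap.norm_toBCF_eq_norm] using this

lemma norm_le_of_coords (t : C₀(ℕ, ℝ)) (M : ℝ) (hM : 0 ≤ M) (h : ∀ m, |t m| ≤ M) : ‖t‖ ≤ M := by
  rw [← ZeroAtInftyContinuousMap.norm_toBCF_eq_norm]
  exact (BoundedContinuousFunction.norm_le hM).2 (fun m => by simpa using h m)

/-! ### the shift and the map F₀ -/

noncomputable def Sh (t : C₀(ℕ, ℝ)) : C₀(ℕ, ℝ) :=
  mk0 (fun m => if m = 0 then 0 else t (m-1)) (by
    have h1 : Tendsto (fun m : ℕ => t (m-1)) atTop (𝓝 0) :=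
      (c0_tendsto t).comp (tendsto_sub_atTop_nat 1)
    apply h1.congr'
    filter_upwards [eventually_ge_atTop 1] with m hm
    rw [if_neg (by omega)])

end Stmt9
namespace Stmt9

@[simp] lemma Sh_apply (t : C₀(ℕ, ℝ)) (m : ℕ) :
    Sh t m = if m = 0 then 0 else t (m-1) := rfl

lemma Sh_sub (a b : C₀(ℕ, ℝ)) : Sh (a - b) = Sh a - Sh b := by
  ext m
  simp only [Sh_apply, ZeroAtInftyContinuousMap.sub_apply]
  split <;> simp

noncomputable def EE : C₀(ℕ, ℝ) :=
  mk0 (fun m => if m = 0 then 1 else 0) (by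
    apply Tendsto.congr' _ tendsto_const_nhds
    filter_upwards [eventually_ge_atTop 1] with m hm
    rw [if_neg (by omega)])

@[simp] lemma EE_apply (m : ℕ) : EE m = if m = 0 then 1 else 0 := rfl

noncomputable def Amap (t : C₀(ℕ, ℝ)) : C₀(ℕ, ℝ) := (2⁻¹ : ℝ) • (t + Sh t)

noncomputable def F0 (t : C₀(ℕ, ℝ)) : C₀(ℕ, ℝ) := (2⁻¹ : ℝ) • (t + Sh t + EE)

lemma Amap_apply (t : C₀(ℕ, ℝ)) (m : ℕ) :
    Amap t m = 2⁻¹ * (t m + if m = 0 then 0 else t (m-1)) := by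
  simp [Amap]

lemma F0_apply (t : C₀(ℕ, ℝ)) (m : ℕ) :
    F0 t m = 2⁻¹ * (t m + (if m = 0 then 0 else t (m-1)) + (if m = 0 then 1 else 0)) := by
  simp [F0]

lemma F0_sub (a b : C₀(ℕ, ℝ)) : F0 a - F0 b = Amap (a - b) := by
  simp only [F0, Amap, Sh_sub]
  ext m
  simp only [ZeroAtInftyContinuousMap.sub_apply, ZeroAtInftyContinuousMap.smul_apply,
    ZeroAtInftyContinuousMap.add_apply, smul_eq_mul]
  ring

def K0 : Set C₀(ℕ, ℝ) := {t | ∀ n, 0 ≤ t n ∧ t n ≤ 1}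

lemma K0_norm_le {t : C₀(ℕ, ℝ)} (ht : t ∈ K0) : ‖t‖ ≤ 1 :=
  norm_le_of_coords t 1 one_pos.le (fun m => abs_le.2 ⟨by linarith [(ht m).1], (ht m).2⟩)

lemma F0_mapsTo : Set.MapsTo F0 K0 K0 := by
  intro t ht m
  rw [F0_apply]
  rcases Nat.eq_zero_or_pos m with rfl | hm
  · norm_num
    constructor <;> [linarith [(ht 0).1]; linarith [(ht 0).2]]
  · rw [if_neg (by omega), if_neg (by omega)]
    constructor <;> [linarith [(ht m).1, (ht (m-1)).1]; linarith [(ht m).2, (ht (m-1)).2]]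

lemma F0_iter_mem {t : C₀(ℕ, ℝ)} (ht : t ∈ K0) (n : ℕ) : F0^[n] t ∈ K0 := by
  induction n with
  | zero => simpa using ht
  | succ n ih => rw [Function.iterate_succ_apply']; exact F0_mapsTo ih

lemma F0_iter_sub (a b : C₀(ℕ, ℝ)) (n : ℕ) : F0^[n] a - F0^[n] b = Amap^[n] (a - b) := by
  induction n with
  | zero => simp
  | succ n ih =>
    rw [Function.iterate_succ_apply', Function.iterate_succ_apply', F0_sub, ih,
      Function.iterate_succ_apply']

lemma F0_iter_diff (t : C₀(ℕ, ℝ)) (n : ℕ) :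
    F0^[n+1] t - F0^[n] t = Amap^[n] (F0 t - t) := by
  have := F0_iter_sub (F0 t) t n
  rwa [← Function.iterate_succ_apply] at this

lemma Amap_norm_le (v : C₀(ℕ, ℝ)) : ‖Amap v‖ ≤ ‖v‖ := by
  apply norm_le_of_coords _ _ (norm_nonneg v)
  intro m
  rw [Amap_apply]
  rcases Nat.eq_zero_or_pos m with rfl | hm
  · norm_num
    calc 1/2 * |v 0| = 2⁻¹ * |v 0| := by norm_num
      _ ≤ ‖v‖ := by linarith [coord_le_norm v 0, abs_nonneg (v 0), norm_nonneg v]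
  · rw [if_neg (by omega)]
    calc |2⁻¹ * (v m + v (m-1))| ≤ 2⁻¹ * (|v m| + |v (m-1)|) := by
          rw [abs_mul, abs_of_nonneg (by norm_num : (0:ℝ) ≤ 2⁻¹)]
          gcongr
          exact abs_add_le _ _
      _ ≤ ‖v‖ := by linarith [coord_le_norm v m, coord_le_norm v (m-1)]

lemma Amap_iter_norm_le (v : C₀(ℕ, ℝ)) (n : ℕ) : ‖Amap^[n] v‖ ≤ ‖v‖ := by
  induction n with
  | zero => simp
  | succ n ih =>
    rw [Function.iterate_succ_apply']
    exact (Amap_norm_le _).trans ih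

/-! ### coordinate formula for iterates of `Amap` -/

noncomputable def ev (v : C₀(ℕ, ℝ)) (m k : ℕ) : ℝ := if k ≤ m then v (m - k) else 0

lemma ev_succ (v : C₀(ℕ, ℝ)) (m k : ℕ) :
    ev v m (k+1) = if m = 0 then 0 else ev v (m-1) k := by
  rcases Nat.eq_zero_or_pos m with rfl | hm
  · simp [ev]
  · rw [if_neg (by omega)]
    unfold ev
    rcases le_or_gt (k+1) m with h | h
    · rw [if_pos h, if_pos (by omega)]
      congr 1
      omega
    · rw [if_neg (by omega), if_neg (by omega)]

lemma ev_abs_le_one {t : C₀(ℕ, ℝ)} (ht : t ∈ K0) (m k : ℕ) : |ev t m k| ≤ 1 := by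
  unfold ev
  split
  · exact abs_le.2 ⟨by linarith [(ht (m-k)).1], (ht (m-k)).2⟩
  · simp

lemma Amap_iter_apply (v : C₀(ℕ, ℝ)) (n m : ℕ) :
    Amap^[n] v m = ∑ k ∈ range (n+1), ((n.choose k : ℝ) / 2^n) * ev v m k := by
  induction n generalizing m with
  | zero => simp [ev]
  | succ n ih =>
    rw [Function.iterate_succ_apply', Amap_apply]
    have hshift : (if m = 0 then (0:ℝ) else Amap^[n] v (m-1))
        = ∑ k ∈ range (n+1), ((n.choose k : ℝ) / 2^n) * ev v m (k+1) := by
      rcases Nat.eq_zero_or_pos m with rfl | hm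
      · rw [if_pos rfl]
        symm
        apply Finset.sum_eq_zero
        intro k _
        rw [ev_succ, if_pos rfl, mul_zero]
      · rw [if_neg (by omega), ih]
        apply Finset.sum_congr rfl
        intro k _
        rw [ev_succ, if_neg (by omega)]
    rw [hshift, ih]
    rw [Finset.sum_range_succ' (fun k => (((n+1).choose k : ℝ) / 2^(n+1)) * ev v m k) (n+1)]
    have hpascal : ∀ k ∈ range (n+1),
        ((((n+1).choose (k+1) : ℝ)) / 2^(n+1)) * ev v m (k+1)
        = 2⁻¹ * (((n.choose (k+1) : ℝ) / 2^n) * ev v m (k+1))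
          + 2⁻¹ * (((n.choose k : ℝ) / 2^n) * ev v m (k+1)) := by
      intro k _
      rw [Nat.choose_succ_succ]
      push_cast
      field_simp
      ring
    rw [Finset.sum_congr rfl hpascal, Finset.sum_add_distrib]
    have e1 : ∑ k ∈ range (n+1), 2⁻¹ * (((n.choose (k+1) : ℝ) / 2^n) * ev v m (k+1))
        + (((n+1).choose 0 : ℝ) / 2^(n+1)) * ev v m 0
        = 2⁻¹ * ∑ k ∈ range (n+1), ((n.choose k : ℝ) / 2^n) * ev v m k := by
      rw [Finset.mul_sum]
      rw [Finset.sum_range_succ' (fun k => 2⁻¹ * (((n.choose k : ℝ) / 2^n) * ev v m k)) n]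
      have : ∑ k ∈ range n, 2⁻¹ * (((n.choose (k+1) : ℝ) / 2^n) * ev v m (k+1))
          = ∑ k ∈ range (n+1), 2⁻¹ * (((n.choose (k+1) : ℝ) / 2^n) * ev v m (k+1)) := by
        rw [Finset.sum_range_succ]
        rw [Nat.choose_succ_self]
        push_cast
        ring
      rw [← this]
      simp only [Nat.choose_zero_right]
      push_cast
      rw [pow_succ]
      field_simp
    have e2 : ∑ k ∈ range (n+1), 2⁻¹ * (((n.choose k : ℝ) / 2^n) * ev v m (k+1))
        = 2⁻¹ * ∑ k ∈ range (n+1), ((n.choose k : ℝ) / 2^n) * ev v m (k+1) := by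
      rw [Finset.mul_sum]
    rw [e2]
    have : ev v m 0 = v m := by simp [ev]
    rw [this] at e1 ⊢
    linarith [e1]

end Stmt9
namespace Stmt9

lemma ev_w {t : C₀(ℕ, ℝ)} (m k : ℕ) :
    ev (F0 t - t) m k
      = 2⁻¹ * ((if k = m then (1:ℝ) else 0) + ev t m (k+1) - ev t m k) := by
  unfold ev
  rcases le_or_gt k m with hkm | hkm
  · rw [if_pos hkm]
    simp only [ZeroAtInftyContinuousMap.sub_apply, F0_apply]
    rcases eq_or_lt_of_le hkm with rfl | hlt
    · rw [if_pos rfl, if_pos (Nat.sub_self k), if_pos (Nat.sub_self k),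
        if_neg (by omega : ¬ k+1 ≤ k), if_pos (le_refl k), Nat.sub_self]
      ring
    · rw [if_neg (by omega : ¬ k = m), if_neg (by omega : ¬ m - k = 0),
        if_neg (by omega : ¬ m - k = 0), if_pos (by omega : k+1 ≤ m), if_pos hkm]
      have : m - k - 1 = m - (k+1) := by omega
      rw [this]
      ring
  · rw [if_neg (by omega), if_neg (by omega : ¬ k = m), if_neg (by omega : ¬ k+1 ≤ m),
      if_neg (by omega : ¬ k ≤ m)]
    ring

lemma key_estimate {t : C₀(ℕ, ℝ)} (ht : t ∈ K0) (n : ℕ) :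
    ‖F0^[n+1] t - F0^[n] t‖ ≤ (3/2) * ((n.choose (n/2) : ℝ) / 2^n) := by
  have hq0 : (0:ℝ) ≤ (n.choose (n/2) : ℝ) / 2^n := by positivity
  rw [F0_iter_diff]
  apply norm_le_of_coords _ _ (by linarith)
  intro m
  rw [Amap_iter_apply]
  set c : ℕ → ℝ := fun j => (n.choose j : ℝ) / 2^n with hc
  have hform : ∑ k ∈ range (n+1), c k * ev (F0 t - t) m k
      = 2⁻¹ * ((∑ k ∈ range (n+1), c k * (if k = m then (1:ℝ) else 0))
        + (∑ k ∈ range (n+1), c k * ev t m (k+1))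
        - (∑ k ∈ range (n+1), c k * ev t m k)) := by
    conv_rhs => rw [← Finset.sum_add_distrib, ← Finset.sum_sub_distrib, Finset.mul_sum]
    apply Finset.sum_congr rfl
    intro k _
    rw [ev_w]
    ring
  rw [hform]
  set q : ℝ := (n.choose (n/2) : ℝ) / 2^n with hqdef
  have hT1 : |∑ k ∈ range (n+1), c k * (if k = m then (1:ℝ) else 0)| ≤ q := by
    have : ∑ k ∈ range (n+1), c k * (if k = m then (1:ℝ) else 0)
        = if m ∈ range (n+1) then c m else 0 := by
      rw [← Finset.sum_ite_eq' (range (n+1)) m c]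
      apply Finset.sum_congr rfl
      intro k _
      split <;> simp_all
    rw [this]
    split
    · rw [abs_of_nonneg (by positivity)]
      simp only [hc, hqdef]
      gcongr
      exact_mod_cast Nat.choose_le_middle m n
    · simpa using hq0
  have hT23 : |(∑ k ∈ range (n+1), c k * ev t m (k+1)) - ∑ k ∈ range (n+1), c k * ev t m k|
      ≤ 2 * q := by
    have hre : ∑ k ∈ range (n+1), c k * ev t m (k+1)
        = ∑ j ∈ range (n+2), (if j = 0 then (0:ℝ) else c (j-1)) * ev t m j := by
      rw [Finset.sum_range_succ' (fun j => (if j = 0 then (0:ℝ) else c (j-1)) * ev t m j) (n+1)]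
      simp
    have hre2 : ∑ k ∈ range (n+1), c k * ev t m k
        = ∑ j ∈ range (n+2), c j * ev t m j := by
      have hcz : c (n+1) = 0 := by simp [hc, Nat.choose_succ_self]
      conv_rhs => rw [show n+2 = (n+1)+1 by omega, Finset.sum_range_succ]
      rw [hcz]
      ring
    rw [hre, hre2, ← Finset.sum_sub_distrib]
    calc |∑ j ∈ range (n+2), ((if j = 0 then (0:ℝ) else c (j-1)) * ev t m j - c j * ev t m j)|
        ≤ ∑ j ∈ range (n+2), |((if j = 0 then (0:ℝ) else c (j-1)) - c j)| * |ev t m j| := by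
          refine (Finset.abs_sum_le_sum_abs _ _).trans ?_
          apply Finset.sum_le_sum
          intro j _
          rw [← sub_mul, abs_mul]
      _ ≤ ∑ j ∈ range (n+2), |((if j = 0 then (0:ℝ) else c (j-1)) - c j)| := by
          apply Finset.sum_le_sum
          intro j _
          have := ev_abs_le_one ht m j
          nlinarith [abs_nonneg ((if j = 0 then (0:ℝ) else c (j-1)) - c j), abs_nonneg (ev t m j)]
      _ = (1/2^n) * ∑ j ∈ range (n+2),
            |(if j = 0 then (0:ℝ) else (n.choose (j-1) : ℝ)) - (n.choose j : ℝ)| := by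
          rw [Finset.mul_sum]
          apply Finset.sum_congr rfl
          intro j _
          rw [← abs_of_nonneg (by positivity : (0:ℝ) ≤ 1/2^n), ← abs_mul]
          congr 1
          simp only [hc]
          split <;> field_simp <;> ring
      _ ≤ (1/2^n) * (2 * (n.choose (n/2) : ℝ)) := by
          gcongr
          exact delta_sum_le n
      _ = 2 * q := by rw [hqdef]; ring
  calc |2⁻¹ * ((∑ k ∈ range (n+1), c k * (if k = m then (1:ℝ) else 0))
        + (∑ k ∈ range (n+1), c k * ev t m (k+1))
        - (∑ k ∈ range (n+1), c k * ev t m k))|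
      ≤ 2⁻¹ * (|∑ k ∈ range (n+1), c k * (if k = m then (1:ℝ) else 0)|
        + |(∑ k ∈ range (n+1), c k * ev t m (k+1)) - ∑ k ∈ range (n+1), c k * ev t m k|) := by
        rw [abs_mul, abs_of_nonneg (by norm_num : (0:ℝ) ≤ 2⁻¹)]
        gcongr
        rw [add_sub_assoc]
        exact abs_add_le _ _
    _ ≤ 2⁻¹ * (q + 2*q) := by gcongr
    _ = (3/2) * q := by ring

end Stmt9
namespace Stmt9

noncomputable def eB (k : ℕ) : C₀(ℕ, ℝ) :=
  mk0 (fun m => if m = k then 1 else 0) (by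
    apply Tendsto.congr' _ tendsto_const_nhds
    filter_upwards [eventually_ge_atTop (k+1)] with m hm
    rw [if_neg (by omega)])

@[simp] lemma eB_apply (k m : ℕ) : eB k m = if m = k then 1 else 0 := rfl

lemma eB_norm (k : ℕ) : ‖eB k‖ = 1 := by
  apply le_antisymm
  · apply norm_le_of_coords _ _ one_pos.le
    intro m
    simp only [eB_apply]
    split <;> norm_num
  · have := coord_le_norm (eB k) k
    simpa using this

lemma exists_norm_coord (t : C₀(ℕ, ℝ)) (ht : t ≠ 0) : ∃ m, |t m| = ‖t‖ := by
  have hN : 0 < ‖t‖ := norm_pos_iff.2 ht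
  have hev : ∀ᶠ m in atTop, |t m| < ‖t‖/2 := by
    have := (c0_tendsto t).abs
    simp only [abs_zero] at this
    exact this.eventually_lt_const (by linarith)
  obtain ⟨M, hM⟩ := eventually_atTop.1 hev
  have hAne : ∃ m, ‖t‖/2 ≤ |t m| := by
    by_contra hco
    push_neg at hco
    have := norm_le_of_coords t (‖t‖/2) (by linarith) (fun m => (hco m).le)
    linarith
  obtain ⟨m₁, hm₁⟩ := hAne
  obtain ⟨m₀, _, hmax⟩ := (Finset.range (M+1)).exists_max_image (fun m => |t m|)
    ⟨m₁, by
      simp only [Finset.mem_range]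
      by_contra hcon
      exact absurd (hM m₁ (by omega)) (by linarith)⟩
  have hall : ∀ m, |t m| ≤ |t m₀| := by
    intro m
    by_cases hm : m ∈ Finset.range (M+1)
    · exact hmax m hm
    · simp only [Finset.mem_range] at hm
      have h1 : |t m| < ‖t‖/2 := hM m (by omega)
      have h2 : ‖t‖/2 ≤ |t m₀| := by
        calc ‖t‖/2 ≤ |t m₁| := hm₁
          _ ≤ |t m₀| := hmax m₁ (by
            simp only [Finset.mem_range]
            by_contra hcon
            exact absurd (hM m₁ (by omega)) (by linarith))
      linarith
  exact ⟨m₀, le_antisymm (coord_le_norm t m₀) (norm_le_of_coords t _ (abs_nonneg _) hall)⟩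

noncomputable def trunc (M : ℕ) (u : C₀(ℕ, ℝ)) : C₀(ℕ, ℝ) :=
  mk0 (fun i => if i < M then u i else 0) (by
    apply Tendsto.congr' _ tendsto_const_nhds
    filter_upwards [eventually_ge_atTop M] with m hm
    rw [if_neg (by omega)])

lemma james {X : Type*} [NormedAddCommGroup X] [NormedSpace ℝ X]
    (f : C₀(ℕ, ℝ) →L[ℝ] X) (c : ℝ) (hc : 0 < c) (hfc : ∀ u : C₀(ℕ, ℝ), c * ‖u‖ ≤ ‖f u‖)
    (δ : ℝ) (hδ : 0 < δ) (hδ1 : δ < 1/3) :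
    ∃ (g : C₀(ℕ, ℝ) →L[ℝ] X) (σ : ℝ), 0 < σ ∧ (∀ t, ‖g t‖ ≤ σ * (1+δ) * ‖t‖) ∧
      (∀ t, σ * (1-3*δ) * ‖t‖ ≤ ‖g t‖) := by
  classical
  set V : ℕ → Set C₀(ℕ, ℝ) := fun n => {u | ‖u‖ ≤ 1 ∧ ∀ i, i < n → u i = 0} with hV
  set s : ℕ → ℝ := fun n => sSup ((fun u => ‖f u‖) '' V n) with hs
  have hVne : ∀ n, ((fun u => ‖f u‖) '' V n).Nonempty := by
    intro n
    exact ⟨‖f 0‖, ⟨0, ⟨by simp, by simp⟩, rfl⟩⟩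
  have hVbdd : ∀ n, BddAbove ((fun u => ‖f u‖) '' V n) := by
    intro n
    refine ⟨‖f‖, ?_⟩
    rintro r ⟨u, hu, rfl⟩
    calc ‖f u‖ ≤ ‖f‖ * ‖u‖ := f.le_opNorm u
      _ ≤ ‖f‖ * 1 := mul_le_mul_of_nonneg_left hu.1 (norm_nonneg f)
      _ = ‖f‖ := mul_one _
  have hcs : ∀ n, c ≤ s n := by
    intro n
    have hmem : eB n ∈ V n := ⟨(eB_norm n).le, fun i hi => by simp [Nat.ne_of_lt hi]⟩
    have h1 : c ≤ ‖f (eB n)‖ := by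
      have := hfc (eB n)
      rwa [eB_norm, mul_one] at this
    exact h1.trans (le_csSup (hVbdd n) ⟨eB n, hmem, rfl⟩)
  have hupp : ∀ (n : ℕ) (u : C₀(ℕ, ℝ)), (∀ i, i < n → u i = 0) → ‖f u‖ ≤ s n * ‖u‖ := by
    intro n u hu
    rcases eq_or_ne u 0 with rfl | hu0
    · simp
    · have hun : 0 < ‖u‖ := norm_pos_iff.2 hu0
      set v : C₀(ℕ, ℝ) := ‖u‖⁻¹ • u with hv
      have hvmem : v ∈ V n := by
        constructor
        · apply norm_le_of_coords _ _ one_pos.le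
          intro i
          have : v i = ‖u‖⁻¹ * u i := by
            rw [hv]; simp
          rw [this, abs_mul, abs_of_nonneg (inv_nonneg.2 (norm_nonneg u))]
          calc ‖u‖⁻¹ * |u i| ≤ ‖u‖⁻¹ * ‖u‖ :=
                mul_le_mul_of_nonneg_left (coord_le_norm u i) (inv_nonneg.2 (norm_nonneg u))
            _ = 1 := inv_mul_cancel₀ hun.ne'
        · intro i hi
          have : v i = ‖u‖⁻¹ * u i := by rw [hv]; simp
          rw [this, hu i hi, mul_zero]
      have h1 : ‖f v‖ ≤ s n := le_csSup (hVbdd n) ⟨v, hvmem, rfl⟩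
      have h2 : ‖f v‖ = ‖u‖⁻¹ * ‖f u‖ := by
        rw [hv, map_smul, norm_smul, norm_inv, norm_norm]
      rw [h2] at h1
      have h3 : ‖u‖⁻¹ * ‖f u‖ * ‖u‖ ≤ s n * ‖u‖ :=
        mul_le_mul_of_nonneg_right h1 (norm_nonneg u)
      calc ‖f u‖ = ‖u‖⁻¹ * ‖f u‖ * ‖u‖ := by field_simp
        _ ≤ s n * ‖u‖ := h3
  set σ : ℝ := ⨅ n, s n with hσdef
  have hbdd : BddBelow (Set.range s) := ⟨c, by rintro r ⟨n, rfl⟩; exact hcs n⟩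
  have hσle : ∀ n, σ ≤ s n := fun n => ciInf_le hbdd n
  have hcσ : c ≤ σ := le_ciInf hcs
  have hσpos : 0 < σ := lt_of_lt_of_le hc hcσ
  have hn₀ : ∃ n₀, s n₀ < σ * (1+δ) := by
    by_contra hcon
    push_neg at hcon
    have : σ * (1+δ) ≤ σ := le_ciInf hcon
    nlinarith
  obtain ⟨n₀, hn₀⟩ := hn₀
  -- blocks
  have next : ∀ m : ℕ, ∃ p : C₀(ℕ, ℝ) × ℕ, m < p.2 ∧ (∀ i, i < m → p.1 i = 0) ∧
      (∀ i, p.2 ≤ i → p.1 i = 0) ∧ ‖p.1‖ ≤ 1 ∧ σ * (1-δ) < ‖f p.1‖ := by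
    intro m
    have hlt : σ * (1-δ) < s m := by nlinarith [hσle m]
    obtain ⟨r, ⟨u, hu, rfl⟩, hr⟩ := exists_lt_of_lt_csSup (hVne m) hlt
    set γ : ℝ := ‖f u‖ - σ * (1-δ) with hγ
    have hγpos : 0 < γ := by rw [hγ]; linarith
    set η : ℝ := γ / (2 * (‖f‖ + 1)) with hη
    have hηpos : 0 < η := by
      apply div_pos hγpos
      positivity
    have hev : ∀ᶠ i in atTop, |u i| < η := by
      have := (c0_tendsto u).abs
      simp only [abs_zero] at this
      exact this.eventually_lt_const hηpos
    obtain ⟨M, hM⟩ := eventually_atTop.1 hev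
    set w : C₀(ℕ, ℝ) := trunc M u with hw
    have hwcoord : ∀ i, w i = if i < M then u i else 0 := fun i => rfl
    have hdiff : ‖u - w‖ ≤ η := by
      apply norm_le_of_coords _ _ hηpos.le
      intro i
      rw [ZeroAtInftyContinuousMap.sub_apply, hwcoord]
      split
      · simpa using hηpos.le
      · simp only [sub_zero]
        exact (hM i (by omega)).le
    have hfd : ‖f u - f w‖ < γ := by
      rw [← map_sub]
      calc ‖f (u - w)‖ ≤ ‖f‖ * ‖u - w‖ := f.le_opNorm _
        _ ≤ ‖f‖ * η := by gcongr
        _ < γ := by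
            have hq : 2 * (‖f‖ + 1) * η = γ := by
              rw [hη]; field_simp
            nlinarith [norm_nonneg f, hηpos]
    refine ⟨(w, max M (m+1)), by omega, ?_, ?_, ?_, ?_⟩
    · intro i hi
      rw [hwcoord]
      split
      · exact hu.2 i hi
      · rfl
    · intro i hi
      rw [hwcoord, if_neg (by omega)]
    · apply norm_le_of_coords _ _ one_pos.le
      intro i
      rw [hwcoord]
      split
      · exact (coord_le_norm u i).trans hu.1
      · simp
    · have h5 : ‖f u‖ - ‖f u - f w‖ ≤ ‖f w‖ := by
        linarith [norm_sub_norm_le (f u) (f w)]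
      simp only
      linarith
  choose nextp hlt hsupp1 hsupp2 hnrm hflb using next
  set chain : ℕ → ℕ := fun k => Nat.rec n₀ (fun _ ih => (nextp ih).2) k with hchain
  have hchain0 : chain 0 = n₀ := rfl
  have hchainS : ∀ k, chain (k+1) = (nextp (chain k)).2 := fun k => rfl
  set blocks : ℕ → C₀(ℕ, ℝ) := fun k => (nextp (chain k)).1 with hblocks
  have hchainlt : ∀ k, chain k < chain (k+1) := fun k => hlt (chain k)
  have hchainmono : Monotone chain := monotone_nat_of_le_succ (fun k => (hchainlt k).le)
  have hchainge : ∀ k, n₀ + k ≤ chain k := by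
    intro k
    induction k with
    | zero => omega
    | succ k ih => have := hchainlt k; omega
  set κ : ℕ → ℕ := fun i => Nat.findGreatest (fun k => chain k ≤ i) i with hκ
  have hκ1 : ∀ i, n₀ ≤ i → chain (κ i) ≤ i := by
    intro i hi
    exact Nat.findGreatest_spec (P := fun k => chain k ≤ i) (m := 0) (Nat.zero_le i)
      (by simpa [hchain0] using hi)
  have hκ3 : ∀ k i, chain k ≤ i → k ≤ κ i := by
    intro k i hk
    exact Nat.le_findGreatest (P := fun k => chain k ≤ i) (le_trans (by have := hchainge k; omega) hk) hk
  have hκ2 : ∀ i, n₀ ≤ i → i < chain (κ i + 1) := by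
    intro i hi
    rcases le_or_gt (κ i + 1) i with hle | hgt
    · by_contra hcon
      push_neg at hcon
      have h4 : κ i + 1 ≤ κ i :=
        Nat.le_findGreatest (P := fun k => chain k ≤ i) hle hcon
      omega
    · have := hchainge (κ i + 1); omega
  -- the map φ
  have hblocks_le : ∀ k i, |blocks k i| ≤ 1 := fun k i => (coord_le_norm _ i).trans (hnrm _)
  have hκtend : Tendsto κ atTop atTop := by
    apply Filter.tendsto_atTop.2
    intro b
    filter_upwards [eventually_ge_atTop (chain b)] with i hi
    exact hκ3 b i hi
  have hφtend : ∀ t : C₀(ℕ, ℝ), Tendsto (fun i => if n₀ ≤ i then t (κ i) * blocks (κ i) i else 0)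
      atTop (𝓝 0) := by
    intro t
    refine squeeze_zero_norm (a := fun i => |t (κ i)|) ?_ ?_
    · intro i
      simp only [Real.norm_eq_abs]
      split
      · rw [abs_mul]
        calc |t (κ i)| * |blocks (κ i) i| ≤ |t (κ i)| * 1 :=
              mul_le_mul_of_nonneg_left (hblocks_le _ _) (abs_nonneg _)
          _ = |t (κ i)| := mul_one _
      · simpa using abs_nonneg (t (κ i))
    · have := ((c0_tendsto t).comp hκtend).abs
      simpa using this
  set φ : C₀(ℕ, ℝ) → C₀(ℕ, ℝ) := fun t => mk0 _ (hφtend t) with hφ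
  have hφcoord : ∀ t i, φ t i = if n₀ ≤ i then t (κ i) * blocks (κ i) i else 0 := fun t i => rfl
  have hφnorm : ∀ t, ‖φ t‖ ≤ ‖t‖ := by
    intro t
    apply norm_le_of_coords _ _ (norm_nonneg t)
    intro i
    rw [hφcoord]
    split
    · rw [abs_mul]
      calc |t (κ i)| * |blocks (κ i) i| ≤ ‖t‖ * 1 :=
          mul_le_mul (coord_le_norm t _) (hblocks_le _ _) (abs_nonneg _) (norm_nonneg t)
        _ = ‖t‖ := mul_one _
    · simpa using norm_nonneg t
  have hφadd : ∀ a b, φ (a + b) = φ a + φ b := by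
    intro a b
    ext i
    simp only [hφcoord, ZeroAtInftyContinuousMap.add_apply]
    split <;> ring
  have hφsmul : ∀ (r : ℝ) a, φ (r • a) = r • φ a := by
    intro r a
    ext i
    simp only [hφcoord, ZeroAtInftyContinuousMap.smul_apply, smul_eq_mul]
    split <;> ring
  set Φ : C₀(ℕ, ℝ) →L[ℝ] C₀(ℕ, ℝ) :=
    LinearMap.mkContinuous ⟨⟨φ, fun a b => hφadd a b⟩, fun r a => hφsmul r a⟩ 1 (fun t => by
      rw [one_mul]; exact hφnorm t) with hΦ
  have hΦapp : ∀ t, Φ t = φ t := fun t => rfl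
  have hφeB : ∀ k, φ (eB k) = blocks k := by
    intro k
    ext i
    rw [hφcoord]
    by_cases hi : n₀ ≤ i
    · rw [if_pos hi]
      rcases eq_or_ne (κ i) k with heq | hne
      · rw [heq]
        simp
      · rw [eB_apply, if_neg hne, zero_mul]
        rcases lt_or_gt_of_ne hne with hlt2 | hgt2
        · -- κ i < k : i < chain k so blocks k i = 0
          symm
          apply hsupp1
          by_contra hcon
          push_neg at hcon
          exact absurd (hκ3 k i hcon) (by omega)
        · -- k < κ i : chain (k+1) ≤ i
          symm
          rw [hblocks]
          apply hsupp2
          rw [← hchainS]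
          calc chain (k+1) ≤ chain (κ i) := hchainmono hgt2
            _ ≤ i := hκ1 i hi
    · rw [if_neg hi]
      symm
      apply hsupp1
      have := hchainge k
      omega
  set g : C₀(ℕ, ℝ) →L[ℝ] X := f.comp Φ with hg
  have hgapp : ∀ t, g t = f (φ t) := fun t => rfl
  have hsn₀0 : 0 ≤ s n₀ := hc.le.trans (hcs n₀)
  have hgup : ∀ t, ‖g t‖ ≤ s n₀ * ‖t‖ := by
    intro t
    rw [hgapp]
    calc ‖f (φ t)‖ ≤ s n₀ * ‖φ t‖ := hupp n₀ (φ t) (fun i hi => by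
        rw [hφcoord, if_neg (by omega)])
      _ ≤ s n₀ * ‖t‖ := mul_le_mul_of_nonneg_left (hφnorm t) hsn₀0
  refine ⟨g, σ, hσpos, ?_, ?_⟩
  · intro t
    calc ‖g t‖ ≤ s n₀ * ‖t‖ := hgup t
      _ ≤ σ * (1+δ) * ‖t‖ := mul_le_mul_of_nonneg_right hn₀.le (norm_nonneg t)
  · intro t
    rcases eq_or_ne t 0 with rfl | ht0
    · simp
    · obtain ⟨k, hk⟩ := exists_norm_coord t ht0
      set t' : C₀(ℕ, ℝ) := (2 * t k) • eB k - t with ht'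
      have ht'norm : ‖t'‖ ≤ ‖t‖ := by
        apply norm_le_of_coords _ _ (norm_nonneg t)
        intro i
        have hco : t' i = 2 * t k * (if i = k then 1 else 0) - t i := by
          rw [ht']
          simp
        rw [hco]
        rcases eq_or_ne i k with rfl | hne
        · rw [if_pos rfl]
          calc |2 * t i * 1 - t i| = |t i| := by rw [show 2*t i*1 - t i = t i by ring]
            _ ≤ ‖t‖ := coord_le_norm t i
        · rw [if_neg hne]
          calc |2 * t k * 0 - t i| = |t i| := by rw [show 2*t k*0 - t i = -t i by ring, abs_neg]
            _ ≤ ‖t‖ := coord_le_norm t i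
      have hsum : φ t + φ t' = (2 * t k) • blocks k := by
        have h1 : t + t' = (2 * t k) • eB k := by
          rw [ht']
          abel
        calc φ t + φ t' = φ (t + t') := (hφadd t t').symm
          _ = φ ((2 * t k) • eB k) := by rw [h1]
          _ = (2 * t k) • φ (eB k) := hφsmul _ _
          _ = (2 * t k) • blocks k := by rw [hφeB]
      have h2 : f (φ t) + f (φ t') = (2 * t k) • f (blocks k) := by
        rw [← map_add, hsum, map_smul]
      have h3 : ‖f (φ t) + f (φ t')‖ = 2 * ‖t‖ * ‖f (blocks k)‖ := by
        rw [h2, norm_smul, Real.norm_eq_abs, abs_mul, abs_two, hk]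
      have h4 : 2 * ‖t‖ * (σ * (1-δ)) ≤ 2 * ‖t‖ * ‖f (blocks k)‖ := by
        apply mul_le_mul_of_nonneg_left (hflb (chain k)).le
        positivity
      have h5 : ‖f (φ t) + f (φ t')‖ ≤ ‖g t‖ + σ * (1+δ) * ‖t‖ := by
        calc ‖f (φ t) + f (φ t')‖ ≤ ‖f (φ t)‖ + ‖f (φ t')‖ := norm_add_le _ _
          _ = ‖g t‖ + ‖g t'‖ := by rw [hgapp, hgapp]
          _ ≤ ‖g t‖ + s n₀ * ‖t'‖ := by linarith [hgup t']
          _ ≤ ‖g t‖ + σ * (1+δ) * ‖t‖ := by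
              have h6 : s n₀ * ‖t'‖ ≤ σ * (1+δ) * ‖t‖ := by
                calc s n₀ * ‖t'‖ ≤ s n₀ * ‖t‖ := mul_le_mul_of_nonneg_left ht'norm hsn₀0
                  _ ≤ σ * (1+δ) * ‖t‖ := mul_le_mul_of_nonneg_right hn₀.le (norm_nonneg t)
              linarith
      have h7 : 2 * ‖t‖ * (σ * (1-δ)) ≤ ‖g t‖ + σ * (1+δ) * ‖t‖ := by
        rw [h3] at h5
        linarith
      have h8 : σ * (1-3*δ) * ‖t‖ = 2 * ‖t‖ * (σ * (1-δ)) - (σ * (1+δ) * ‖t‖) := by ring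
      linarith

end Stmt9
namespace Stmt9

lemma q_tendsto : Tendsto (fun n : ℕ => (n.choose (n/2) : ℝ) / 2^n) atTop (𝓝 0) := by
  have hbound : ∀ᶠ n : ℕ in atTop, (n.choose (n/2) : ℝ) / 2^n ≤ Real.sqrt (1/n) := by
    filter_upwards [eventually_ge_atTop 1] with n hn
    have hq0 : (0:ℝ) ≤ (n.choose (n/2) : ℝ) / 2^n := by positivity
    have hn0 : (0:ℝ) < n := by exact_mod_cast hn
    have h1 : ((n.choose (n/2) : ℝ) / 2^n)^2 ≤ 1/n := by
      rw [le_div_iff₀ hn0]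
      exact middle_sq_bound n
    calc (n.choose (n/2) : ℝ) / 2^n
        = Real.sqrt (((n.choose (n/2) : ℝ) / 2^n)^2) := (Real.sqrt_sq hq0).symm
      _ ≤ Real.sqrt (1/n) := Real.sqrt_le_sqrt h1
  have hg : Tendsto (fun n : ℕ => Real.sqrt (1/n)) atTop (𝓝 0) := by
    have := (Real.continuous_sqrt.tendsto' 0 0 (by simp)).comp
      tendsto_one_div_atTop_nhds_zero_nat
    exact this
  apply squeeze_zero' (Eventually.of_forall (fun n => by positivity)) hbound hg

lemma eval_continuous (n : ℕ) : Continuous (fun t : C₀(ℕ, ℝ) => t n) := by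
  apply LipschitzWith.continuous (K := 1)
  apply LipschitzWith.of_dist_le_mul
  intro a b
  have h := coord_le_norm (a - b) n
  have h2 : a n - b n = (a - b) n := by simp
  rw [Real.dist_eq, dist_eq_norm, h2]
  simpa using h

lemma K0_closed : IsClosed K0 := by
  have : K0 = ⋂ n, (fun t : C₀(ℕ, ℝ) => t n) ⁻¹' (Icc (0:ℝ) 1) := by
    ext t
    simp only [K0, Set.mem_setOf_eq, Set.mem_iInter, Set.mem_preimage, Set.mem_Icc]
  rw [this]
  exact isClosed_iInter (fun n => IsClosed.preimage (eval_continuous n) isClosed_Icc)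

lemma K0_convex : Convex ℝ K0 := by
  intro x hx y hy a b ha hb hab
  intro n
  have hco : (a • x + b • y) n = a * x n + b * y n := by simp
  rw [hco]
  constructor
  · have := (hx n).1; have := (hy n).1
    positivity
  · nlinarith [(hx n).2, (hy n).2]

lemma zero_mem_K0 : (0 : C₀(ℕ, ℝ)) ∈ K0 := by
  intro n
  simp

lemma F0_fixed_free {t : C₀(ℕ, ℝ)} (ht : t ∈ K0) : F0 t ≠ t := by
  intro heq
  have hcoord : ∀ n, t n = 1 := by
    intro n
    induction n with
    | zero =>
      have h0 : F0 t 0 = t 0 := by rw [heq]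
      rw [F0_apply] at h0
      simp at h0
      linarith
    | succ n ih =>
      have h0 : F0 t (n+1) = t (n+1) := by rw [heq]
      rw [F0_apply, if_neg (by omega), if_neg (by omega)] at h0
      simp at h0
      linarith
  have h1 := c0_tendsto t
  rw [funext hcoord] at h1
  have h2 : (0:ℝ) = 1 := tendsto_nhds_unique h1 tendsto_const_nhds
  norm_num at h2

end Stmt9

end Stmt9Aux

/-- Let `X` be a real Banach space containing an isomorphic copy of `c₀`.
Then for every `ε ∈ (0,1)` there exist a nonempty bounded closed convex set `K ⊆ X` and a
fixed-point-free map `F : K → K` that is uniformly asymptotically regular and uniformly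
`(1+ε)`-Lipschitz. -/
theorem statement9 {X : Type*} [NormedAddCommGroup X] [NormedSpace ℝ X] [CompleteSpace X]
    (hc0 : ∃ (f : C₀(ℕ, ℝ) →L[ℝ] X) (c : ℝ), 0 < c ∧ ∀ u : C₀(ℕ, ℝ), c * ‖u‖ ≤ ‖f u‖)
    (ε : ℝ) (hε : ε ∈ Set.Ioo (0 : ℝ) 1) :
    ∃ (K : Set X) (F : X → X),
      K.Nonempty ∧ Bornology.IsBounded K ∧ IsClosed K ∧ Convex ℝ K ∧
      Set.MapsTo F K K ∧
      (∀ y ∈ K, F y ≠ y) ∧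
      (∀ δ : ℝ, 0 < δ → ∃ N : ℕ, ∀ n : ℕ, N ≤ n → ∀ y ∈ K,
        ‖F^[n + 1] y - F^[n] y‖ < δ) ∧
      (∀ n : ℕ, ∀ y ∈ K, ∀ z ∈ K, ‖F^[n] y - F^[n] z‖ ≤ (1 + ε) * ‖y - z‖) := by
  classical
  obtain ⟨f, c, hc, hfc⟩ := hc0
  obtain ⟨hε0, hε1⟩ := hε
  set δ : ℝ := ε / 7 with hδdef
  have hδ0 : 0 < δ := by positivity
  have hδ13 : δ < 1/3 := by rw [hδdef]; linarith
  obtain ⟨g, σ, hσ, hgup, hglow⟩ := Stmt9.james f c hc hfc δ hδ0 hδ13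
  set C₁ : ℝ := σ * (1 - 3*δ) with hC₁
  set C₂ : ℝ := σ * (1 + δ) with hC₂
  have hC₁pos : 0 < C₁ := by
    rw [hC₁]; apply mul_pos hσ; rw [hδdef]; linarith
  have hC₂pos : 0 < C₂ := by
    rw [hC₂]; apply mul_pos hσ; linarith
  have hC2C1 : C₂ ≤ (1 + ε) * C₁ := by
    rw [hC₁, hC₂, hδdef]
    nlinarith [mul_nonneg hσ.le (mul_nonneg hε0.le (sub_nonneg.2 hε1.le))]
  have hginj : ∀ a b : C₀(ℕ, ℝ), g a = g b → a = b := by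
    intro a b hab
    by_contra hne
    have hpos : 0 < ‖a - b‖ := by
      rw [norm_pos_iff, sub_ne_zero]; exact hne
    have h1 : ‖g (a - b)‖ = 0 := by rw [map_sub, hab, sub_self, norm_zero]
    have h2 : C₁ * ‖a - b‖ ≤ 0 := h1 ▸ hglow (a - b)
    nlinarith
  -- the set and the map
  set K : Set X := g '' Stmt9.K0 with hK
  set F : X → X := fun y =>
    if hy : ∃ t ∈ Stmt9.K0, g t = y then g (Stmt9.F0 hy.choose) else y with hF
  have hkey : ∀ t ∈ Stmt9.K0, F (g t) = g (Stmt9.F0 t) := by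
    intro t ht
    have hy : ∃ u ∈ Stmt9.K0, g u = g t := ⟨t, ht, rfl⟩
    have h1 : F (g t) = g (Stmt9.F0 hy.choose) := dif_pos hy
    have h2 : hy.choose = t := hginj _ _ hy.choose_spec.2
    rw [h1, h2]
  have hiter : ∀ n : ℕ, ∀ t ∈ Stmt9.K0, F^[n] (g t) = g (Stmt9.F0^[n] t) := by
    intro n
    induction n with
    | zero => intro t _; simp
    | succ n ih =>
      intro t ht
      rw [Function.iterate_succ_apply, hkey t ht, ih _ (Stmt9.F0_mapsTo ht),
        ← Function.iterate_succ_apply]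
  refine ⟨K, F, ?_, ?_, ?_, ?_, ?_, ?_, ?_, ?_⟩
  · exact ⟨g 0, ⟨0, Stmt9.zero_mem_K0, rfl⟩⟩
  · rw [isBounded_iff_forall_norm_le]
    refine ⟨C₂, ?_⟩
    rintro x ⟨t, ht, rfl⟩
    calc ‖g t‖ ≤ C₂ * ‖t‖ := hgup t
      _ ≤ C₂ * 1 := mul_le_mul_of_nonneg_left (Stmt9.K0_norm_le ht) hC₂pos.le
      _ = C₂ := mul_one _
  · -- closed
    apply IsSeqClosed.isClosed
    intro u y hu hlim
    have hu' : ∀ n, ∃ t ∈ Stmt9.K0, g t = u n := fun n => hu n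
    choose t ht hgt using hu'
    have hcauchy : CauchySeq u := hlim.cauchySeq
    have hct : CauchySeq t := by
      rw [Metric.cauchySeq_iff] at hcauchy ⊢
      intro η hη
      obtain ⟨N, hN⟩ := hcauchy (C₁ * η) (by positivity)
      refine ⟨N, fun m hm n hn => ?_⟩
      have h1 : dist (u m) (u n) < C₁ * η := hN m hm n hn
      have h2 : C₁ * dist (t m) (t n) ≤ dist (u m) (u n) := by
        rw [dist_eq_norm, dist_eq_norm, ← hgt m, ← hgt n, ← map_sub]
        exact hglow _
      have h3 : C₁ * dist (t m) (t n) < C₁ * η := lt_of_le_of_lt h2 h1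
      exact lt_of_mul_lt_mul_left h3 hC₁pos.le
    obtain ⟨tl, htl⟩ := cauchySeq_tendsto_of_complete hct
    have htlK : tl ∈ Stmt9.K0 := Stmt9.K0_closed.mem_of_tendsto htl
      (Eventually.of_forall ht)
    have hglim : Tendsto (fun n => g (t n)) atTop (𝓝 (g tl)) :=
      (g.continuous.tendsto tl).comp htl
    have : Tendsto u atTop (𝓝 (g tl)) := by
      apply hglim.congr
      intro n; exact hgt n
    have hyeq : y = g tl := tendsto_nhds_unique hlim this
    exact ⟨tl, htlK, hyeq.symm⟩
  · -- convex
    exact Stmt9.K0_convex.linear_image (g : C₀(ℕ, ℝ) →ₗ[ℝ] X)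
  · -- maps to
    rintro y ⟨t, ht, rfl⟩
    rw [hkey t ht]
    exact ⟨Stmt9.F0 t, Stmt9.F0_mapsTo ht, rfl⟩
  · -- fixed point free
    rintro y ⟨t, ht, rfl⟩ heq
    rw [hkey t ht] at heq
    exact Stmt9.F0_fixed_free ht (hginj _ _ heq)
  · -- uniform asymptotic regularity
    intro η hη
    have htend : Tendsto (fun n : ℕ => C₂ * ((3:ℝ)/2 * ((n.choose (n/2) : ℝ) / 2^n)))
        atTop (𝓝 0) := by
      have h1 := (Stmt9.q_tendsto.const_mul ((3:ℝ)/2)).const_mul C₂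
      simpa using h1
    have hev : ∀ᶠ n : ℕ in atTop,
        C₂ * ((3:ℝ)/2 * ((n.choose (n/2) : ℝ) / 2^n)) < η := htend.eventually_lt_const hη
    obtain ⟨N, hN⟩ := eventually_atTop.1 hev
    refine ⟨N, fun n hn y hy => ?_⟩
    obtain ⟨t, ht, rfl⟩ := hy
    rw [hiter _ t ht, hiter _ t ht, ← map_sub]
    calc ‖g (Stmt9.F0^[n+1] t - Stmt9.F0^[n] t)‖
        ≤ C₂ * ‖Stmt9.F0^[n+1] t - Stmt9.F0^[n] t‖ := hgup _
      _ ≤ C₂ * ((3:ℝ)/2 * ((n.choose (n/2) : ℝ) / 2^n)) :=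
          mul_le_mul_of_nonneg_left (Stmt9.key_estimate ht n) hC₂pos.le
      _ < η := hN n hn
  · -- uniform Lipschitz
    intro n y hy z hz
    obtain ⟨t, ht, rfl⟩ := hy
    obtain ⟨u, hu, rfl⟩ := hz
    rw [hiter _ t ht, hiter _ u hu, ← map_sub, Stmt9.F0_iter_sub, ← map_sub]
    calc ‖g (Stmt9.Amap^[n] (t - u))‖
        ≤ C₂ * ‖Stmt9.Amap^[n] (t - u)‖ := hgup _
      _ ≤ C₂ * ‖t - u‖ := mul_le_mul_of_nonneg_left (Stmt9.Amap_iter_norm_le _ n) hC₂pos.le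
      _ ≤ (1 + ε) * C₁ * ‖t - u‖ := mul_le_mul_of_nonneg_right hC2C1 (norm_nonneg _)
      _ = (1 + ε) * (C₁ * ‖t - u‖) := by ring
      _ ≤ (1 + ε) * ‖g (t - u)‖ := by
          apply mul_le_mul_of_nonneg_left (hglow _) (by linarith)
end
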